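/- arXiv:2405.13531 — 5 statements merged into one kernel-verified Lean document; each statement's English description precedes it below -/
import Mathlib

section
/- For integer q ≥ 2 and a ∈ [−1, 1], the expectation under uniformity of ψ(θ₁₂; a) = cot(θ₁₂/2) + a·tan(θ₁₂/2), where cos θ₁₂ = X₁'X₂ for X₁, X₂ independent uniform on S^q, equals (1+a)(q−1)Γ((q−1)/2)²/(2Γ(q/2)²). -/
open intervalIntegral
open MeasureTheory Real

/-- Surface area of the unit sphere `S^q`: `ω_q = 2π^((q+1)/2)/Γ((q+1)/2)`. -/
noncomputable def sphereArea (q : ℝ) : ℝ :=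
  2 * Real.pi ^ ((q + 1) / 2) / Real.Gamma ((q + 1) / 2)

lemma aux_meas (c : ℝ) : Measurable (fun x : ℝ => (1 - x^2) ^ c) := by
  fun_prop

lemma aux_int {c : ℝ} (hc : c = -(1/2) ∨ 0 ≤ c) :
    IntervalIntegrable (fun x : ℝ => (1 - x^2) ^ c) volume (-1) 1 := by
  rcases hc with rfl | hc
  · -- c = -1/2
    have h1 : IntervalIntegrable (fun x : ℝ => (1 - x) ^ (-(1/2) : ℝ)) volume 0 1 := by
      have := (intervalIntegrable_rpow' (a := 1) (b := 0)
        (by norm_num : (-1:ℝ) < -(1/2))).comp_sub_left 1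
      simpa using this
    have h2 : IntervalIntegrable (fun x : ℝ => (1 - x^2) ^ (-(1/2) : ℝ)) volume 0 1 := by
      refine h1.mono_fun ((aux_meas _).aestronglyMeasurable) ?_
      filter_upwards [ae_restrict_mem measurableSet_uIoc] with x hx
      rw [Set.uIoc_of_le (by norm_num : (0:ℝ) ≤ 1)] at hx
      have hx0 : 0 < x := hx.1
      have hx1 : x ≤ 1 := hx.2
      rw [Real.norm_eq_abs, Real.norm_eq_abs, abs_of_nonneg (rpow_nonneg (by nlinarith) _),
        abs_of_nonneg (rpow_nonneg (by linarith) _)]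
      rcases eq_or_lt_of_le hx1 with rfl | hx1'
      · simp
      · exact rpow_le_rpow_of_nonpos (by linarith) (by nlinarith) (by norm_num)
    have h3 : IntervalIntegrable (fun x : ℝ => (1 - x^2) ^ (-(1/2) : ℝ)) volume (-1) 0 := by
      have := ((IntervalIntegrable.iff_comp_neg (by simp)).mp h2)
      simp only [neg_zero, neg_neg] at this
      have h4 : (fun x : ℝ => (1 - (-x)^2) ^ (-(1/2) : ℝ)) = fun x : ℝ => (1 - x^2) ^ (-(1/2) : ℝ) := by
        funext x; rw [neg_pow]; norm_num
      rw [h4] at this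
      exact this.symm
    exact h3.trans h2
  · rcases eq_or_lt_of_le hc with rfl | hc'
    · simp only [rpow_zero]
      exact intervalIntegrable_const
    · apply Continuous.intervalIntegrable
      rw [continuous_iff_continuousAt]
      intro x
      exact (Real.continuousAt_rpow_const _ _ (Or.inr hc)).comp
        (by continuity : Continuous fun x : ℝ => 1 - x^2).continuousAt

lemma K0 : ∫ x in (-1:ℝ)..1, (1 - x^2) ^ (-(1/2) : ℝ) = π := by
  have hcong : ∀ x ∈ Set.uIcc (-1:ℝ) 1, (1 - x^2) ^ (-(1/2) : ℝ) = 1 / √(1 - x^2) := by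
    intro x hx
    rw [Set.uIcc_of_le (by norm_num : (-1:ℝ) ≤ 1)] at hx
    have h0 : (0:ℝ) ≤ 1 - x^2 := by nlinarith [hx.1, hx.2]
    rw [Real.rpow_neg h0, Real.sqrt_eq_rpow]; norm_num
  rw [integral_congr hcong]
  have hint : IntervalIntegrable (fun x : ℝ => 1 / √(1 - x^2)) volume (-1) 1 := by
    refine (aux_int (Or.inl rfl)).congr ?_
    intro x hx
    rw [Set.uIoc_of_le (by norm_num : (-1:ℝ) ≤ 1)] at hx
    have h0 : (0:ℝ) ≤ 1 - x^2 := by nlinarith [hx.1.le, hx.2]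
    show (1 - x^2) ^ (-(1/2) : ℝ) = 1 / √(1 - x^2)
    rw [Real.rpow_neg h0, Real.sqrt_eq_rpow]; norm_num
  have := integral_eq_sub_of_hasDeriv_right_of_le (f := Real.arcsin)
    (f' := fun x : ℝ => 1 / √(1 - x^2)) (by norm_num : (-1:ℝ) ≤ 1)
    (Real.continuous_arcsin.continuousOn) ?_ hint
  · rw [this, Real.arcsin_one, Real.arcsin_neg_one]; ring
  · intro x hx
    exact (Real.hasDerivAt_arcsin (ne_of_gt hx.1) (ne_of_lt hx.2)).hasDerivWithinAt

lemma Krec (m : ℕ) (hm : (((m:ℝ)-1)/2 = -(1/2) ∨ 0 ≤ ((m:ℝ)-1)/2)) :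
    ((m:ℝ)+2) * ∫ x in (-1:ℝ)..1, (1 - x^2) ^ (((m:ℝ)+1)/2) =
    ((m:ℝ)+1) * ∫ x in (-1:ℝ)..1, (1 - x^2) ^ (((m:ℝ)-1)/2) := by
  set s : ℝ := ((m:ℝ)+1)/2 with hs
  have hs0 : 0 < s := by positivity
  have hint1 : IntervalIntegrable (fun x : ℝ => (1 - x^2) ^ s) volume (-1) 1 :=
    aux_int (Or.inr hs0.le)
  have hint2 : IntervalIntegrable (fun x : ℝ => (1 - x^2) ^ (((m:ℝ)-1)/2)) volume (-1) 1 :=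
    aux_int hm
  -- FTC on G x = x * (1 - x^2)^s
  have hftc := integral_eq_sub_of_hasDeriv_right_of_le
    (f := fun x : ℝ => x * (1 - x^2) ^ s)
    (f' := fun x : ℝ => ((m:ℝ)+2) * (1 - x^2) ^ s - ((m:ℝ)+1) * (1 - x^2) ^ (((m:ℝ)-1)/2))
    (by norm_num : (-1:ℝ) ≤ 1) ?_ ?_ ?_
  · have hend : ((1:ℝ) * (1 - 1^2) ^ s - (-1) * (1 - (-1)^2) ^ s) = 0 := by
      rw [show (1:ℝ) - 1^2 = 0 by norm_num, show (1:ℝ) - (-1)^2 = 0 by norm_num]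
      rw [Real.zero_rpow (ne_of_gt hs0)]; ring
    rw [hend] at hftc
    have hsplit : ∫ x in (-1:ℝ)..1,
        (((m:ℝ)+2) * (1 - x^2) ^ s - ((m:ℝ)+1) * (1 - x^2) ^ (((m:ℝ)-1)/2)) =
        ((m:ℝ)+2) * (∫ x in (-1:ℝ)..1, (1 - x^2) ^ s)
        - ((m:ℝ)+1) * ∫ x in (-1:ℝ)..1, (1 - x^2) ^ (((m:ℝ)-1)/2) := by
      rw [integral_sub (hint1.const_mul _) (hint2.const_mul _),
        intervalIntegral.integral_const_mul, intervalIntegral.integral_const_mul]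
    rw [hsplit] at hftc
    linarith [hftc]
  · -- continuity
    apply Continuous.continuousOn
    exact continuous_id.mul ((continuous_iff_continuousAt.mpr fun x =>
      (Real.continuousAt_rpow_const _ _ (Or.inr hs0.le)).comp
        ((by continuity : Continuous fun x : ℝ => 1 - x^2).continuousAt)))
  · -- derivative
    intro x hx
    have h0 : (0:ℝ) < 1 - x^2 := by nlinarith [hx.1, hx.2]
    have hinner : HasDerivAt (fun x : ℝ => 1 - x^2) (-(2*x)) x := by
      simpa using ((hasDerivAt_pow 2 x).const_sub 1)
    have houter : HasDerivAt (fun y : ℝ => y ^ s) (s * (1 - x^2) ^ (s - 1)) (1 - x^2) :=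
      Real.hasDerivAt_rpow_const (Or.inl (ne_of_gt h0))
    have hcomp : HasDerivAt (fun x : ℝ => (1 - x^2) ^ s)
        (s * (1 - x^2) ^ (s - 1) * (-(2*x))) x := houter.comp x hinner (h₂ := fun y : ℝ => y ^ s)
    have hmul : HasDerivAt (fun x : ℝ => x * (1 - x^2) ^ s)
        (1 * (1 - x^2) ^ s + x * (s * (1 - x^2) ^ (s - 1) * (-(2*x)))) x :=
      (hasDerivAt_id x).mul hcomp
    convert hmul.hasDerivWithinAt using 1
    have e1 : s - 1 = ((m:ℝ)-1)/2 := by rw [hs]; ring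
    have e2 : (1 - x^2) ^ (((m:ℝ)+1)/2) = (1 - x^2) ^ (((m:ℝ)-1)/2) * (1 - x^2) := by
      rw [show ((m:ℝ)+1)/2 = ((m:ℝ)-1)/2 + 1 by ring, Real.rpow_add_one (ne_of_gt h0)]
    rw [e1, hs]
    linear_combination ((m:ℝ)+1) * e2
  · exact (hint1.const_mul _).sub (hint2.const_mul _)

lemma Kval (n : ℕ) : ∫ x in (-1:ℝ)..1, (1 - x^2) ^ (((n:ℝ)-1)/2) =
    √π * Real.Gamma (((n:ℝ)+1)/2) / Real.Gamma ((n:ℝ)/2 + 1) := by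
  induction n using Nat.twoStepInduction with
  | zero =>
    rw [show (((0:ℕ):ℝ)-1)/2 = -(1/2) by norm_num, K0]
    rw [show (((0:ℕ):ℝ)+1)/2 = 1/2 by norm_num, show ((0:ℕ):ℝ)/2 + 1 = 1 by norm_num,
      Real.Gamma_one, Real.Gamma_one_half_eq, div_one, Real.mul_self_sqrt Real.pi_pos.le]
  | one =>
    rw [show (((1:ℕ):ℝ)-1)/2 = 0 by norm_num]
    simp only [Real.rpow_zero]
    rw [intervalIntegral.integral_const, smul_eq_mul]
    rw [show (((1:ℕ):ℝ)+1)/2 = 1 by norm_num, Real.Gamma_one,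
      show ((1:ℕ):ℝ)/2 + 1 = 1/2 + 1 by norm_num,
      Real.Gamma_add_one (by norm_num : (1/2:ℝ) ≠ 0), Real.Gamma_one_half_eq]
    have : √π ≠ 0 := ne_of_gt (Real.sqrt_pos.mpr Real.pi_pos)
    field_simp
    ring
  | more n ih _ =>
    have hm : (((n:ℝ)-1)/2 = -(1/2) ∨ 0 ≤ ((n:ℝ)-1)/2) := by
      rcases Nat.eq_zero_or_pos n with rfl | hn
      · left; norm_num
      · right
        have : (1:ℝ) ≤ (n:ℝ) := by exact_mod_cast hn
        linarith
    have hrec := Krec n hm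
    have hcast : (((n+2:ℕ):ℝ)-1)/2 = ((n:ℝ)+1)/2 := by push_cast; ring
    rw [hcast]
    have hpos2 : (0:ℝ) < (n:ℝ)+2 := by positivity
    have hval : ∫ x in (-1:ℝ)..1, (1 - x^2) ^ (((n:ℝ)+1)/2) =
        ((n:ℝ)+1)/((n:ℝ)+2) * (√π * Real.Gamma (((n:ℝ)+1)/2) / Real.Gamma ((n:ℝ)/2 + 1)) := by
      rw [← ih]
      field_simp at hrec ⊢
      linarith [hrec]
    rw [hval]
    have e1 : (((n+2:ℕ):ℝ)+1)/2 = ((n:ℝ)+1)/2 + 1 := by push_cast; ring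
    have e2 : ((n+2:ℕ):ℝ)/2 + 1 = ((n:ℝ)/2 + 1) + 1 := by push_cast; ring
    rw [e1, e2, Real.Gamma_add_one (by positivity : (0:ℝ) < ((n:ℝ)+1)/2).ne',
      Real.Gamma_add_one (by positivity : (0:ℝ) < (n:ℝ)/2 + 1).ne']
    have hG2 : Real.Gamma ((n:ℝ)/2 + 1) ≠ 0 := ne_of_gt (Real.Gamma_pos_of_pos (by positivity))
    have hn2 : ((n:ℝ)+2) ≠ 0 := by positivity
    have hhalf : ((n:ℝ)/2 + 1) ≠ 0 := by positivity
    field_simp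


/-- Expectation under uniformity of `ψ(θ₁₂;a) = cot(θ₁₂/2) + a tan(θ₁₂/2)`, written
via rotational symmetry as a one-dimensional integral, equals
`(1+a)(q−1)Γ((q−1)/2)²/(2Γ(q/2)²)` for integer `q ≥ 2` and `a ∈ [−1,1]`. -/
theorem expectation_psi_uniform (q : ℕ) (hq : 2 ≤ q) (a : ℝ) (ha : a ∈ Set.Icc (-1 : ℝ) 1) :
    sphereArea ((q : ℝ) - 1) / sphereArea (q : ℝ) *
      ∫ x in (-1 : ℝ)..1,
        (Real.cot (Real.arccos x / 2) + a * Real.tan (Real.arccos x / 2)) *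
          (1 - x ^ 2) ^ ((q : ℝ) / 2 - 1) =
    (1 + a) * ((q : ℝ) - 1) * Real.Gamma (((q : ℝ) - 1) / 2) ^ 2 /
      (2 * Real.Gamma ((q : ℝ) / 2) ^ 2) := by
  have hq2 : (2:ℝ) ≤ (q:ℝ) := by exact_mod_cast hq
  set c : ℝ := ((q:ℝ) - 3)/2 with hcdef
  have hc : c = -(1/2) ∨ 0 ≤ c := by
    rcases Nat.lt_or_ge q 3 with h | h
    · left
      have : q = 2 := by omega
      rw [hcdef, this]; norm_num
    · right
      have : (3:ℝ) ≤ (q:ℝ) := by exact_mod_cast h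
      rw [hcdef]; linarith
  have hg : IntervalIntegrable (fun x : ℝ => (1 - x^2) ^ c) volume (-1) 1 := aux_int hc
  have hxg : IntervalIntegrable (fun x : ℝ => x * (1 - x^2) ^ c) volume (-1) 1 := by
    refine hg.mono_fun ((measurable_id.mul (aux_meas c)).aestronglyMeasurable) ?_
    filter_upwards [ae_restrict_mem measurableSet_uIoc] with x hx
    rw [Set.uIoc_of_le (by norm_num : (-1:ℝ) ≤ 1)] at hx
    rw [Real.norm_eq_abs, Real.norm_eq_abs, abs_mul]
    have : |x| ≤ 1 := abs_le.mpr ⟨hx.1.le, hx.2⟩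
    nlinarith [abs_nonneg ((1 - x^2) ^ c)]
  -- odd part vanishes
  have hodd : ∫ x in (-1:ℝ)..1, x * (1 - x^2) ^ c = 0 := by
    have hsub1 : IntervalIntegrable (fun x : ℝ => x * (1 - x^2) ^ c) volume (-1) 0 :=
      hxg.mono_set (Set.uIcc_subset_uIcc (by norm_num [Set.mem_uIcc]) (by norm_num [Set.mem_uIcc]))
    have hsub2 : IntervalIntegrable (fun x : ℝ => x * (1 - x^2) ^ c) volume 0 1 :=
      hxg.mono_set (Set.uIcc_subset_uIcc (by norm_num [Set.mem_uIcc]) (by norm_num [Set.mem_uIcc]))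
    have hneg := integral_comp_neg (a := 0) (b := 1) (fun y : ℝ => y * (1 - y^2) ^ c)
    simp only [neg_zero, neg_neg] at hneg
    have heq : (fun x : ℝ => (-x) * (1 - (-x)^2) ^ c) = fun x : ℝ => -(x * (1 - x^2) ^ c) := by
      funext x; rw [neg_pow]; ring_nf
    rw [heq] at hneg
    rw [intervalIntegral.integral_neg] at hneg
    rw [← integral_add_adjacent_intervals hsub1 hsub2, ← hneg]
    ring
  -- pointwise identity
  have key : ∀ x ∈ Set.Ioo (-1:ℝ) 1,
      (Real.cot (Real.arccos x / 2) + a * Real.tan (Real.arccos x / 2)) *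
        (1 - x ^ 2) ^ ((q:ℝ)/2 - 1)
      = (1+a) * (1 - x^2) ^ c + (1-a) * (x * (1 - x^2) ^ c) := by
    intro x hx
    obtain ⟨hx1, hx2⟩ := hx
    have hθpos : 0 < Real.arccos x := Real.arccos_pos.mpr hx2
    have hθpi : Real.arccos x < π :=
      lt_of_le_of_ne (Real.arccos_le_pi x) (fun h => by
        have := Real.arccos_eq_pi.mp h; linarith)
    set θ := Real.arccos x with hθ
    have hπ : (0:ℝ) < π := Real.pi_pos
    have hsinh : 0 < Real.sin (θ/2) :=
      Real.sin_pos_of_pos_of_lt_pi (by linarith) (by linarith)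
    have hcosh : 0 < Real.cos (θ/2) :=
      Real.cos_pos_of_mem_Ioo ⟨by linarith, by linarith⟩
    have h1x : (0:ℝ) < 1 - x^2 := by nlinarith
    have hS : (0:ℝ) < √(1 - x^2) := Real.sqrt_pos.mpr h1x
    have hcosθ : Real.cos θ = x := Real.cos_arccos hx1.le hx2.le
    have hsinθ : Real.sin θ = √(1 - x^2) := Real.sin_arccos x
    have h2 := Real.sin_two_mul (θ/2)
    rw [show 2*(θ/2) = θ by ring] at h2
    have hc2 := Real.cos_two_mul (θ/2)
    rw [show 2*(θ/2) = θ by ring] at hc2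
    have hpy := Real.sin_sq_add_cos_sq (θ/2)
    have hsqrt : √(1 - x^2) = 2 * Real.sin (θ/2) * Real.cos (θ/2) := by
      rw [← hsinθ, h2]
    have hx1p : 1 + x = 2 * Real.cos (θ/2)^2 := by
      rw [← hcosθ, hc2]; ring
    have hx1m : 1 - x = 2 * Real.sin (θ/2)^2 := by
      rw [← hcosθ, hc2]; nlinarith [hpy]
    have hcot : Real.cot (θ/2) = (1+x)/√(1 - x^2) := by
      rw [Real.cot_eq_cos_div_sin, hsqrt, hx1p]
      field_simp
    have htan : Real.tan (θ/2) = (1-x)/√(1 - x^2) := by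
      rw [Real.tan_eq_sin_div_cos, hsqrt, hx1m]
      field_simp
    have hexp : (q:ℝ)/2 - 1 = c + 1/2 := by rw [hcdef]; ring
    have hrw : (1 - x^2) ^ ((q:ℝ)/2 - 1) = (1 - x^2) ^ c * √(1 - x^2) := by
      rw [hexp, Real.rpow_add h1x, Real.sqrt_eq_rpow]
    rw [hcot, htan, hrw]
    field_simp
    ring
  -- apply congruence
  have h1ae : ∀ᵐ x : ℝ ∂volume, x ≠ 1 := by
    rw [ae_iff]; simp
  have hcong : ∫ x in (-1 : ℝ)..1,
      (Real.cot (Real.arccos x / 2) + a * Real.tan (Real.arccos x / 2)) *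
        (1 - x ^ 2) ^ ((q:ℝ)/2 - 1)
      = ∫ x in (-1:ℝ)..1, ((1+a) * (1 - x^2) ^ c + (1-a) * (x * (1 - x^2) ^ c)) := by
    apply intervalIntegral.integral_congr_ae
    filter_upwards [h1ae] with x hx1 hxI
    rw [Set.uIoc_of_le (by norm_num : (-1:ℝ) ≤ 1)] at hxI
    exact key x ⟨hxI.1, lt_of_le_of_ne hxI.2 hx1⟩
  rw [hcong, integral_add (hg.const_mul _) (hxg.const_mul _), intervalIntegral.integral_const_mul,
    intervalIntegral.integral_const_mul, hodd, mul_zero, add_zero]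
  -- value of the beta integral
  have hKcast : ((q - 2 : ℕ) : ℝ) = (q:ℝ) - 2 := by
    have := Nat.cast_sub hq (R := ℝ); simpa using this
  have hK := Kval (q - 2)
  rw [hKcast] at hK
  rw [show ((q:ℝ) - 2 - 1)/2 = c by rw [hcdef]; ring,
    show ((q:ℝ) - 2 + 1)/2 = ((q:ℝ) - 1)/2 by ring,
    show ((q:ℝ) - 2)/2 + 1 = (q:ℝ)/2 by ring] at hK
  rw [hK]
  -- sphere area ratio and Gamma algebra
  have hGq : 0 < Real.Gamma ((q:ℝ)/2) := Real.Gamma_pos_of_pos (by positivity)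
  have hGq1 : 0 < Real.Gamma (((q:ℝ) - 1)/2) := Real.Gamma_pos_of_pos (by linarith)
  have hπ : (0:ℝ) < π := Real.pi_pos
  have hsπ : (0:ℝ) < √π := Real.sqrt_pos.mpr hπ
  have hpq : (0:ℝ) < Real.pi ^ ((q:ℝ)/2) := Real.rpow_pos_of_pos hπ _
  have hratio : sphereArea ((q:ℝ) - 1) / sphereArea (q:ℝ) =
      Real.Gamma (((q:ℝ)+1)/2) / (Real.Gamma ((q:ℝ)/2) * √π) := by
    unfold sphereArea
    rw [show ((q:ℝ) - 1 + 1)/2 = (q:ℝ)/2 by ring]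
    have hp1 : Real.pi ^ (((q:ℝ)+1)/2) = Real.pi ^ ((q:ℝ)/2) * √π := by
      rw [show ((q:ℝ)+1)/2 = (q:ℝ)/2 + 1/2 by ring, Real.rpow_add hπ, Real.sqrt_eq_rpow]
    rw [hp1]
    have hGq3 : 0 < Real.Gamma (((q:ℝ)+1)/2) := Real.Gamma_pos_of_pos (by linarith)
    field_simp
  rw [hratio, show ((q:ℝ)+1)/2 = ((q:ℝ) - 1)/2 + 1 by ring,
    Real.Gamma_add_one (by linarith : ((q:ℝ) - 1)/2 ≠ 0)]
  field_simp
end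

section
/- Watson-type hypergeometric identity (odd case, c = (q−1)/2): for nonnegative integer k and real q > 1, ₃F₂(−2k−1, 2k+q, (q−1)/2; q/2, q; 1) = [(2k+1)/(2k+q)] · Γ(k+1/2)² Γ(q/2)² / (π Γ(k+q/2)²). -/
open Finset

/-- Pochhammer symbol `(x)_m = x(x+1)⋯(x+m−1)`. -/
noncomputable def poch (x : ℝ) (m : ℕ) : ℝ := ∏ i ∈ Finset.range m, (x + i)

/-- Terminating generalized hypergeometric sum `₃F₂(a,b,c;d,e;1)` truncated at `N`. -/
noncomputable def F32 (a b c d e : ℝ) (N : ℕ) : ℝ :=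
  ∑ m ∈ Finset.range (N + 1),
    poch a m * poch b m * poch c m / (poch d m * poch e m * (Nat.factorial m))



lemma poch_zero (x : ℝ) : poch x 0 = 1 := Finset.prod_range_zero _

lemma poch_one (x : ℝ) : poch x 1 = x := by simp [poch]

lemma poch_succ (x : ℝ) (m : ℕ) : poch x (m+1) = poch x m * (x + m) :=
  Finset.prod_range_succ _ m

lemma poch_succ' (x : ℝ) (m : ℕ) : poch x (m+1) = x * poch (x+1) m := by
  rw [poch, Finset.prod_range_succ' (fun i => x + (i:ℕ)) m]
  simp only [Nat.cast_zero, add_zero, Nat.cast_add, Nat.cast_one]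
  rw [mul_comm, poch]
  congr 1
  apply Finset.prod_congr rfl
  intro i _
  ring

lemma poch_add (x : ℝ) (j l : ℕ) : poch x (j+l) = poch x j * poch (x+j) l := by
  rw [poch, Finset.prod_range_add]
  congr 1
  apply Finset.prod_congr rfl
  intro i _
  push_cast
  ring

lemma poch_pos {x : ℝ} (hx : 0 < x) (m : ℕ) : 0 < poch x m := by
  apply Finset.prod_pos
  intro i _
  positivity

lemma poch_ne_zero {x : ℝ} (hx : 0 < x) (m : ℕ) : poch x m ≠ 0 :=
  ne_of_gt (poch_pos hx m)

lemma poch_neg_nat_zero {n j : ℕ} (h : n < j) : poch (-(n:ℝ)) j = 0 := by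
  apply Finset.prod_eq_zero (Finset.mem_range.mpr h)
  simp

lemma poch_reflect (y : ℝ) (N : ℕ) : poch y N = (-1)^N * poch (1 - y - N) N := by
  rw [poch, poch, ← Finset.prod_range_reflect (fun i => y + (i:ℕ)) N]
  have step : ∀ i ∈ Finset.range N, (y + ((N - 1 - i : ℕ):ℝ)) = (-1) * (1 - y - N + i) := by
    intro i hi
    rw [Finset.mem_range] at hi
    have h1 : i ≤ N - 1 := Nat.le_sub_one_of_lt hi
    have h2 : (1:ℕ) ≤ N := Nat.one_le_iff_ne_zero.mpr (by omega)
    have : ((N - 1 - i : ℕ) : ℝ) = (N:ℝ) - 1 - i := by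
      push_cast [Nat.cast_sub h1, Nat.cast_sub h2]
      ring
    rw [this]; ring
  rw [Finset.prod_congr rfl step, Finset.prod_mul_distrib, Finset.prod_const, Finset.card_range]

lemma poch_neg_fac (m j : ℕ) (h : j ≤ m) :
    poch (-(m:ℝ)) j * ((m-j).factorial : ℝ) = (-1)^j * (m.factorial : ℝ) := by
  induction j with
  | zero => simp [poch_zero]
  | succ j ih =>
      have hj : j ≤ m := by omega
      have hsub : m - j = (m - (j+1)) + 1 := by omega
      have hfac : ((m-j).factorial : ℝ) = ((m:ℝ) - j) * ((m-(j+1)).factorial : ℝ) := by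
        rw [hsub, Nat.factorial_succ]
        push_cast [Nat.cast_sub h]
        ring
      have ih' : poch (-(m:ℝ)) j * (((m:ℝ) - j) * ((m-(j+1)).factorial : ℝ))
          = (-1)^j * (m.factorial : ℝ) := by rw [← hfac]; exact ih hj
      rw [poch_succ]
      calc poch (-(m:ℝ)) j * (-(m:ℝ) + j) * ((m-(j+1)).factorial : ℝ)
          = -(poch (-(m:ℝ)) j * (((m:ℝ) - j) * ((m-(j+1)).factorial : ℝ))) := by ring
        _ = -((-1)^j * (m.factorial : ℝ)) := by rw [ih']
        _ = (-1)^(j+1) * (m.factorial : ℝ) := by ring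

/-- Chu–Vandermonde: terminating ₂F₁ at 1. -/
lemma chu_vandermonde : ∀ (m : ℕ) (a c : ℝ), 0 < c →
    ∑ j ∈ Finset.range (m+1),
      poch (-(m:ℝ)) j * poch a j / (poch c j * (j.factorial : ℝ))
    = poch (c - a) m / poch c m := by
  intro m
  induction m with
  | zero => intro a c hc; simp [poch_zero]
  | succ m ih =>
      intro a c hc
      have hcm : poch c m ≠ 0 := poch_ne_zero hc m
      have hc1 : (0:ℝ) < c + 1 := by linarith
      have hc0 : c ≠ 0 := ne_of_gt hc
      have hcmpos : (0:ℝ) < c + m := by positivity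
      have hcast : (-((m+1:ℕ)):ℝ) = -((m:ℝ)+1) := by push_cast; ring
      set g : ℕ → ℝ := fun j => poch (-(m:ℝ)) j * poch a j / (poch c j * (j.factorial : ℝ)) with hg
      have decomp : ∀ i : ℕ, poch (-((m:ℝ)+1)) (i+1)
          = poch (-(m:ℝ)) (i+1) - ((i:ℝ)+1) * poch (-(m:ℝ)) i := by
        intro i
        have h1 : poch (-((m:ℝ)+1)) (i+1) = (-((m:ℝ)+1)) * poch (-(m:ℝ)) i := by
          rw [poch_succ']; congr 2; ring
        have h2 : poch (-(m:ℝ)) (i+1) = poch (-(m:ℝ)) i * (-(m:ℝ) + i) := poch_succ _ _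
        rw [h1, h2]; ring
      have hgsum : ∑ j ∈ Finset.range (m+1+1), g j = poch (c - a) m / poch c m := by
        rw [Finset.sum_range_succ]
        have : poch (-(m:ℝ)) (m+1) = 0 := poch_neg_nat_zero (Nat.lt_succ_self m)
        rw [hg]
        simp only [this, zero_mul, zero_div, add_zero]
        exact ih a c hc
      have hS1 : ∑ i ∈ Finset.range (m+1), g (i+1) = poch (c - a) m / poch c m - 1 := by
        have := Finset.sum_range_succ' g (m+1)
        rw [hgsum] at this
        have hg0 : g 0 = 1 := by simp [hg, poch_zero]
        rw [hg0] at this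
        linarith
      have hS2 : ∑ i ∈ Finset.range (m+1),
          ((i:ℝ)+1) * poch (-(m:ℝ)) i * poch a (i+1) / (poch c (i+1) * ((i+1).factorial : ℝ))
          = (a/c) * (poch (c - a) m / poch (c+1) m) := by
        have inner : ∑ i ∈ Finset.range (m+1),
            ((i:ℝ)+1) * poch (-(m:ℝ)) i * poch a (i+1) / (poch c (i+1) * ((i+1).factorial : ℝ))
            = (a/c) * ∑ i ∈ Finset.range (m+1),
              poch (-(m:ℝ)) i * poch (a+1) i / (poch (c+1) i * (i.factorial : ℝ)) := by
          rw [Finset.mul_sum]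
          apply Finset.sum_congr rfl
          intro i _
          have e1 : poch a (i+1) = a * poch (a+1) i := poch_succ' _ _
          have e2 : poch c (i+1) = c * poch (c+1) i := poch_succ' _ _
          have e3 : (((i+1).factorial : ℕ) : ℝ) = ((i:ℝ)+1) * (i.factorial : ℝ) := by
            rw [Nat.factorial_succ]; push_cast; ring
          rw [e1, e2, e3]
          have h4 : poch (c+1) i ≠ 0 := poch_ne_zero hc1 i
          have h5 : (i.factorial : ℝ) ≠ 0 := by exact_mod_cast (Nat.factorial_ne_zero i)
          have h6 : ((i:ℝ)+1) ≠ 0 := by positivity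
          field_simp
        rw [inner, ih (a+1) (c+1) hc1]
        congr 2
        ring
      have key := Finset.sum_range_succ'
        (fun j => poch (-((m:ℝ)+1)) j * poch a j / (poch c j * (j.factorial : ℝ))) (m+1)
      have hcast2 : ∀ j, poch (-((m+1:ℕ)):ℝ) j = poch (-((m:ℝ)+1)) j := by
        intro j; rw [hcast]
      calc ∑ j ∈ Finset.range (m+1+1), poch (-((m+1:ℕ)):ℝ) j * poch a j / (poch c j * (j.factorial : ℝ))
          = ∑ j ∈ Finset.range (m+1+1), poch (-((m:ℝ)+1)) j * poch a j / (poch c j * (j.factorial : ℝ)) := by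
            apply Finset.sum_congr rfl; intro j _; rw [hcast2]
        _ = (∑ i ∈ Finset.range (m+1), poch (-((m:ℝ)+1)) (i+1) * poch a (i+1) / (poch c (i+1) * (((i+1).factorial : ℕ) : ℝ)))
            + poch (-((m:ℝ)+1)) 0 * poch a 0 / (poch c 0 * ((Nat.factorial 0 : ℕ) : ℝ)) := key
        _ = (∑ i ∈ Finset.range (m+1),
              (poch (-(m:ℝ)) (i+1) * poch a (i+1) / (poch c (i+1) * (((i+1).factorial : ℕ) : ℝ))
               - ((i:ℝ)+1) * poch (-(m:ℝ)) i * poch a (i+1) / (poch c (i+1) * (((i+1).factorial : ℕ) : ℝ)))) + 1 := by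
            congr 1
            · apply Finset.sum_congr rfl
              intro i _
              rw [decomp i]
              ring
            · simp [poch_zero]
        _ = ((poch (c - a) m / poch c m - 1) - (a/c) * (poch (c - a) m / poch (c+1) m)) + 1 := by
            rw [Finset.sum_sub_distrib, hS2, hS1]
        _ = poch (c - a) (m+1) / poch c (m+1) := by
            have e1 : poch (c+1) m = poch c m * (c + m) / c := by
              have h := poch_succ c m
              rw [poch_succ'] at h
              field_simp at h ⊢
              linarith [h]
            have e2 : poch (c-a) (m+1) = poch (c-a) m * (c - a + m) := poch_succ _ _
            have e3 : poch c (m+1) = poch c m * (c + m) := poch_succ _ _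
            rw [e1, e2, e3]
            have h7 : c + (m:ℝ) ≠ 0 := ne_of_gt hcmpos
            field_simp
            ring

/-- Triangle sum swap. -/
lemma tri_swap (f : ℕ → ℕ → ℝ) : ∀ (n : ℕ),
    ∑ m ∈ Finset.range (n+1), ∑ j ∈ Finset.range (m+1), f m j
    = ∑ j ∈ Finset.range (n+1), ∑ l ∈ Finset.range (n+1-j), f (j+l) j := by
  intro n
  induction n with
  | zero => simp
  | succ n ih =>
      rw [Finset.sum_range_succ, ih]
      rw [Finset.sum_range_succ (fun j => ∑ l ∈ Finset.range (n+1+1-j), f (j+l) j) (n+1)]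
      have last : ∑ l ∈ Finset.range (n+1+1-(n+1)), f ((n+1)+l) (n+1) = f (n+1) (n+1) := by
        have : n+1+1-(n+1) = 1 := by omega
        rw [this, Finset.sum_range_one]
      rw [last]
      have main : ∑ j ∈ Finset.range (n+1), ∑ l ∈ Finset.range (n+1+1-j), f (j+l) j
          = (∑ j ∈ Finset.range (n+1), ∑ l ∈ Finset.range (n+1-j), f (j+l) j)
            + ∑ j ∈ Finset.range (n+1), f (n+1) j := by
        rw [← Finset.sum_add_distrib]
        apply Finset.sum_congr rfl
        intro j hj
        rw [Finset.mem_range] at hj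
        have h1 : n+1+1-j = (n+1-j)+1 := by omega
        rw [h1, Finset.sum_range_succ]
        congr 2
        omega
      rw [main]
      rw [Finset.sum_range_succ (fun j => f (n+1) j) (n+1)]
      ring

/-- Master reflection identity: the `c ↦ q - c` symmetry of the ₃F₂-type sum. -/
lemma master_reflect (n : ℕ) (q c : ℝ) (hq : 1 < q) :
    ∑ m ∈ Finset.range (n+1), poch (-(n:ℝ)) m * poch ((n:ℝ)+q-1) m * poch c m /
      (poch (q/2) m * poch q m * (m.factorial : ℝ))
    = (-1)^n * ∑ m ∈ Finset.range (n+1), poch (-(n:ℝ)) m * poch ((n:ℝ)+q-1) m * poch (q-c) m /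
      (poch (q/2) m * poch q m * (m.factorial : ℝ)) := by
  have hq0 : (0:ℝ) < q := by linarith
  have hq2 : (0:ℝ) < q/2 := by linarith
  -- Step 1: expand poch c m / poch q m by Chu–Vandermonde
  have step1 : ∀ m : ℕ,
      poch (-(n:ℝ)) m * poch ((n:ℝ)+q-1) m * poch c m /
        (poch (q/2) m * poch q m * (m.factorial : ℝ))
      = ∑ j ∈ Finset.range (m+1),
          poch (-(n:ℝ)) m * poch ((n:ℝ)+q-1) m * poch (-(m:ℝ)) j * poch (q-c) j /
            (poch (q/2) m * (m.factorial : ℝ) * poch q j * (j.factorial : ℝ)) := by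
    intro m
    have hcv := chu_vandermonde m (q-c) q hq0
    have harg : q - (q - c) = c := by ring
    rw [harg] at hcv
    have : poch (-(n:ℝ)) m * poch ((n:ℝ)+q-1) m * poch c m /
        (poch (q/2) m * poch q m * (m.factorial : ℝ))
        = (poch (-(n:ℝ)) m * poch ((n:ℝ)+q-1) m / (poch (q/2) m * (m.factorial : ℝ)))
          * (poch c m / poch q m) := by ring
    rw [this, ← hcv, Finset.mul_sum]
    apply Finset.sum_congr rfl
    intro j _
    ring
  rw [Finset.sum_congr rfl (fun m _ => step1 m)]
  rw [tri_swap]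
  -- Step 3/4: evaluate inner sums
  have inner : ∀ j ∈ Finset.range (n+1),
      ∑ l ∈ Finset.range (n+1-j),
        poch (-(n:ℝ)) (j+l) * poch ((n:ℝ)+q-1) (j+l) * poch (-((j+l : ℕ):ℝ)) j * poch (q-c) j /
          (poch (q/2) (j+l) * (((j+l).factorial : ℕ) : ℝ) * poch q j * (j.factorial : ℝ))
      = (-1)^n * (poch (-(n:ℝ)) j * poch ((n:ℝ)+q-1) j * poch (q-c) j /
          (poch (q/2) j * poch q j * (j.factorial : ℝ))) := by
    intro j hj
    rw [Finset.mem_range] at hj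
    have hjn : j ≤ n := by omega
    have hqj : (0:ℝ) < q/2 + j := by positivity
    -- rewrite each term as G j * H j l
    have term : ∀ l ∈ Finset.range (n+1-j),
        poch (-(n:ℝ)) (j+l) * poch ((n:ℝ)+q-1) (j+l) * poch (-((j+l : ℕ):ℝ)) j * poch (q-c) j /
          (poch (q/2) (j+l) * (((j+l).factorial : ℕ) : ℝ) * poch q j * (j.factorial : ℝ))
        = ((-1)^j * poch (-(n:ℝ)) j * poch ((n:ℝ)+q-1) j * poch (q-c) j /
            (poch (q/2) j * poch q j * (j.factorial : ℝ)))
          * (poch (-((n-j : ℕ):ℝ)) l * poch ((n:ℝ)+q-1+j) l /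
              (poch (q/2+j) l * (l.factorial : ℝ))) := by
      intro l hl
      have e1 : poch (-(n:ℝ)) (j+l) = poch (-(n:ℝ)) j * poch (-((n-j : ℕ):ℝ)) l := by
        rw [poch_add]
        congr 2
        push_cast [Nat.cast_sub hjn]
        ring
      have e2 : poch ((n:ℝ)+q-1) (j+l) = poch ((n:ℝ)+q-1) j * poch ((n:ℝ)+q-1+j) l :=
        poch_add _ _ _
      have e3 : poch (q/2) (j+l) = poch (q/2) j * poch (q/2+j) l := poch_add _ _ _
      have e4 : poch (-((j+l : ℕ):ℝ)) j * ((l.factorial : ℕ) : ℝ) = (-1)^j * (((j+l).factorial : ℕ) : ℝ) := by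
        have := poch_neg_fac (j+l) j (by omega)
        have hsub : j + l - j = l := by omega
        rw [hsub] at this
        exact this
      have h5 : poch (q/2) j ≠ 0 := poch_ne_zero hq2 j
      have h6 : poch (q/2+j) l ≠ 0 := poch_ne_zero hqj l
      have h7 : poch q j ≠ 0 := poch_ne_zero hq0 j
      have h8 : ((j.factorial : ℕ) : ℝ) ≠ 0 := by exact_mod_cast (Nat.factorial_ne_zero j)
      have h9 : ((l.factorial : ℕ) : ℝ) ≠ 0 := by exact_mod_cast (Nat.factorial_ne_zero l)
      have h10 : (((j+l).factorial : ℕ) : ℝ) ≠ 0 := by exact_mod_cast (Nat.factorial_ne_zero (j+l))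
      have hB : poch (q/2) j * poch (q/2+(j:ℝ)) l * (((j+l).factorial : ℕ) : ℝ) * poch q j * ((j.factorial : ℕ) : ℝ) ≠ 0 := by
        simp only [mul_ne_zero_iff]
        exact ⟨⟨⟨⟨h5, h6⟩, h10⟩, h7⟩, h8⟩
      have hDF : poch (q/2) j * poch q j * ((j.factorial : ℕ) : ℝ) * (poch (q/2+(j:ℝ)) l * ((l.factorial : ℕ) : ℝ)) ≠ 0 := by
        simp only [mul_ne_zero_iff]
        exact ⟨⟨⟨h5, h7⟩, h8⟩, h6, h9⟩
      rw [e1, e2, e3, div_mul_div_comm, div_eq_div_iff hB hDF]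
      linear_combination (poch (-(n:ℝ)) j * poch (-((n-j : ℕ):ℝ)) l * poch ((n:ℝ)+q-1) j *
        poch ((n:ℝ)+q-1+(j:ℝ)) l * poch (q-c) j * poch (q/2) j * poch q j *
        ((j.factorial : ℕ) : ℝ) * poch (q/2+(j:ℝ)) l) * e4
    rw [Finset.sum_congr rfl term, ← Finset.mul_sum]
    -- inner CV
    have hcv2 := chu_vandermonde (n-j) ((n:ℝ)+q-1+j) (q/2+j) hqj
    have hcast3 : (-((n-j : ℕ):ℝ)) = -(((n-j : ℕ):ℕ):ℝ) := rfl
    have hrange : n+1-j = (n-j)+1 := by omega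
    rw [hrange]
    rw [hcv2]
    have harg2 : q/2 + (j:ℝ) - ((n:ℝ)+q-1+j) = 1 - (n:ℝ) - q/2 := by ring
    rw [harg2]
    have hrefl : poch (1 - (n:ℝ) - q/2) (n-j) = (-1)^(n-j) * poch (q/2 + j) (n-j) := by
      rw [poch_reflect (1 - (n:ℝ) - q/2) (n-j)]
      congr 2
      push_cast [Nat.cast_sub hjn]
      ring
    rw [hrefl]
    have h11 : poch (q/2+(j:ℝ)) (n-j) ≠ 0 := poch_ne_zero hqj (n-j)
    have e5 : (-1:ℝ)^(n-j) * poch (q/2+(j:ℝ)) (n-j) / poch (q/2+(j:ℝ)) (n-j) = (-1:ℝ)^(n-j) := by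
      rw [mul_div_assoc, div_self h11, mul_one]
    rw [e5]
    have e6 : (-1:ℝ)^j * (-1:ℝ)^(n-j) = (-1:ℝ)^n := by
      rw [← pow_add]
      congr 1
      omega
    calc ((-1:ℝ)^j * poch (-(n:ℝ)) j * poch ((n:ℝ)+q-1) j * poch (q-c) j /
            (poch (q/2) j * poch q j * (j.factorial : ℝ))) * (-1:ℝ)^(n-j)
        = ((-1:ℝ)^j * (-1:ℝ)^(n-j)) * (poch (-(n:ℝ)) j * poch ((n:ℝ)+q-1) j * poch (q-c) j /
            (poch (q/2) j * poch q j * (j.factorial : ℝ))) := by ring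
      _ = (-1)^n * (poch (-(n:ℝ)) j * poch ((n:ℝ)+q-1) j * poch (q-c) j /
            (poch (q/2) j * poch q j * (j.factorial : ℝ))) := by rw [e6]
  rw [Finset.sum_congr rfl inner, ← Finset.mul_sum]

noncomputable def Tt (q : ℝ) (n m : ℕ) : ℝ :=
  poch (-(n:ℝ)) m * poch ((n:ℝ)+q-1) m * poch ((q-1)/2) m /
    (poch (q/2) m * poch q m * (m.factorial : ℝ))

noncomputable def Phi (q : ℝ) (n : ℕ) : ℝ := ∑ m ∈ Finset.range (n+1), Tt q n m

noncomputable def Mom (q : ℝ) (n : ℕ) : ℝ := ∑ m ∈ Finset.range (n+1), (m:ℝ) * Tt q n m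

noncomputable def Psi (q : ℝ) (n : ℕ) : ℝ :=
  ∑ m ∈ Finset.range (n+1), poch (-(n:ℝ)) m * poch ((n:ℝ)+q) m * poch ((q-1)/2) m /
    (poch (q/2) m * poch q m * (m.factorial : ℝ))

lemma moment_eq (n : ℕ) (q : ℝ) (hq : 1 < q) :
    Mom q n = (q-1)/2 * ((-1:ℝ)^n - 1) * Phi q n := by
  have hq1 : q - 1 ≠ 0 := by linarith
  have h := master_reflect n q ((q+1)/2) hq
  have harg : q - (q+1)/2 = (q-1)/2 := by ring
  rw [harg] at h
  have expand : ∀ m ∈ Finset.range (n+1),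
      poch (-(n:ℝ)) m * poch ((n:ℝ)+q-1) m * poch ((q+1)/2) m /
        (poch (q/2) m * poch q m * (m.factorial : ℝ))
      = Tt q n m + (2/(q-1)) * ((m:ℝ) * Tt q n m) := by
    intro m _
    have h1 : poch ((q-1)/2) (m+1) = poch ((q-1)/2) m * ((q-1)/2 + m) := poch_succ _ _
    have h2 : poch ((q-1)/2) (m+1) = ((q-1)/2) * poch ((q-1)/2+1) m := poch_succ' _ _
    have h3 : (q-1)/2 + 1 = (q+1)/2 := by ring
    rw [h3] at h2
    have heq2 : poch ((q+1)/2) m = poch ((q-1)/2) m * (1 + 2*(m:ℝ)/(q-1)) := by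
      field_simp
      linear_combination 2 * h1 - 2 * h2
    rw [heq2, Tt]
    ring
  rw [Finset.sum_congr rfl expand, Finset.sum_add_distrib, ← Finset.mul_sum] at h
  have hPhi : (∑ m ∈ Finset.range (n+1), Tt q n m) = Phi q n := rfl
  have hM : (∑ m ∈ Finset.range (n+1), (m:ℝ) * Tt q n m) = Mom q n := rfl
  have hPhi2 : (∑ m ∈ Finset.range (n+1),
      poch (-(n:ℝ)) m * poch ((n:ℝ)+q-1) m * poch ((q-1)/2) m /
        (poch (q/2) m * poch q m * (m.factorial : ℝ))) = Phi q n := rfl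
  rw [hPhi, hM, hPhi2] at h
  field_simp at h
  linear_combination h/2

lemma psi_eq (n : ℕ) (q : ℝ) (hq : 1 < q) :
    ((n:ℝ)+q-1) * Psi q n = ((n:ℝ)+q-1) * Phi q n + Mom q n := by
  rw [Psi, Phi, Mom, Finset.mul_sum, Finset.mul_sum, ← Finset.sum_add_distrib]
  apply Finset.sum_congr rfl
  intro m _
  have h1 : poch ((n:ℝ)+q-1) (m+1) = poch ((n:ℝ)+q-1) m * ((n:ℝ)+q-1 + m) := poch_succ _ _
  have h2 : poch ((n:ℝ)+q-1) (m+1) = ((n:ℝ)+q-1) * poch (((n:ℝ)+q-1)+1) m := poch_succ' _ _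
  have h3 : (n:ℝ)+q-1 + 1 = (n:ℝ)+q := by ring
  rw [h3] at h2
  have key : ((n:ℝ)+q-1) * poch ((n:ℝ)+q) m
      = poch ((n:ℝ)+q-1) m * (((n:ℝ)+q-1) + m) := by
    linear_combination h1 - h2
  rw [Tt]
  linear_combination (poch (-(n:ℝ)) m * poch ((q-1)/2) m /
    (poch (q/2) m * poch q m * (m.factorial : ℝ))) * key

lemma phi_succ (n : ℕ) (q : ℝ) (hq : 1 < q) :
    ((n:ℝ)+1) * Psi q n = ((n:ℝ)+1) * Phi q (n+1) - Mom q (n+1) := by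
  have key : ∀ m ∈ Finset.range (n+2),
      ((n:ℝ)+1) * (poch (-(n:ℝ)) m * poch ((n:ℝ)+q) m * poch ((q-1)/2) m /
        (poch (q/2) m * poch q m * (m.factorial : ℝ)))
      = ((n:ℝ)+1) * Tt q (n+1) m - (m:ℝ) * Tt q (n+1) m := by
    intro m _
    have h1 : poch (-((n:ℝ)+1)) (m+1) = poch (-((n:ℝ)+1)) m * (-((n:ℝ)+1) + m) := poch_succ _ _
    have h2 : poch (-((n:ℝ)+1)) (m+1) = (-((n:ℝ)+1)) * poch (-((n:ℝ)+1)+1) m := poch_succ' _ _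
    have h3 : -((n:ℝ)+1) + 1 = -(n:ℝ) := by ring
    rw [h3] at h2
    have e1 : poch (-((n:ℝ)+1)) m * (((n:ℝ)+1) - m) = ((n:ℝ)+1) * poch (-(n:ℝ)) m := by
      linear_combination h1 - h2
    have e2 : poch (-(((n+1):ℕ)):ℝ) m = poch (-((n:ℝ)+1)) m := by
      congr 1
      push_cast
      ring
    have e3 : (((n+1):ℕ):ℝ)+q-1 = (n:ℝ)+q := by push_cast; ring
    rw [Tt, e2, e3]
    linear_combination (-(poch ((n:ℝ)+q) m * poch ((q-1)/2) m /
      (poch (q/2) m * poch q m * (m.factorial : ℝ)))) * e1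
  have hsum : ∑ m ∈ Finset.range (n+2),
      ((n:ℝ)+1) * (poch (-(n:ℝ)) m * poch ((n:ℝ)+q) m * poch ((q-1)/2) m /
        (poch (q/2) m * poch q m * (m.factorial : ℝ)))
      = ((n:ℝ)+1) * Phi q (n+1) - Mom q (n+1) := by
    rw [Finset.sum_congr rfl key, Finset.sum_sub_distrib, Phi, Mom, Finset.mul_sum]
  rw [← hsum, Finset.sum_range_succ]
  have hz : poch (-(n:ℝ)) (n+1) = 0 := poch_neg_nat_zero (Nat.lt_succ_self n)
  rw [hz]
  simp [Psi, Finset.mul_sum]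

lemma neg_one_pow_odd (k : ℕ) : (-1:ℝ)^(2*k+1) = -1 := by
  rw [pow_succ, pow_mul]
  simp

lemma neg_one_pow_even (k : ℕ) : (-1:ℝ)^(2*k+2) = 1 := by
  rw [pow_succ, pow_succ, pow_mul]
  simp

lemma step_odd (k : ℕ) (q : ℝ) (hq : 1 < q) :
    Phi q (2*k+2) = (2*(k:ℝ)+1)/(2*(k:ℝ)+q) * Phi q (2*k+1) := by
  have hkq : (0:ℝ) < 2*(k:ℝ)+q := by positivity
  have hC := psi_eq (2*k+1) q hq
  have hD := phi_succ (2*k+1) q hq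
  have hB1 := moment_eq (2*k+1) q hq
  have hB2 := moment_eq (2*k+2) q hq
  rw [neg_one_pow_odd] at hB1
  rw [neg_one_pow_even] at hB2
  have hcast : ((2*k+1 : ℕ) : ℝ) = 2*(k:ℝ)+1 := by push_cast; ring
  rw [hcast] at hC hD
  rw [hB1] at hC
  rw [show (2*k+1)+1 = 2*k+2 from rfl, hB2] at hD
  -- hC : (2k+1+q-1) Psi = (2k+1+q-1) Phi(2k+1) + (q-1)/2 * (-1-1) * Phi(2k+1)
  -- hD : (2k+1+1) Psi = (2k+1+1) Phi(2k+2) - (q-1)/2*(1-1)*Phi(2k+2)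
  have hPsi : Psi q (2*k+1) = (2*(k:ℝ)+1)/(2*(k:ℝ)+q) * Phi q (2*k+1) := by
    have h0 : 2*(k:ℝ)+1+q-1 = 2*(k:ℝ)+q := by ring
    rw [h0] at hC
    field_simp
    linear_combination hC
  rw [hPsi] at hD
  field_simp at hD
  have h2 : (2*(k:ℝ)+1+1) ≠ 0 := by positivity
  have hD' : (2*(k:ℝ)+1) * Phi q (2*k+1) = Phi q (2*k+2) * (2*(k:ℝ)+q) := by
    apply mul_left_cancel₀ h2
    linear_combination hD / 2
  rw [div_mul_eq_mul_div, eq_div_iff (ne_of_gt hkq)]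
  linear_combination (-1 : ℝ) * hD'

lemma step_even (k : ℕ) (q : ℝ) (hq : 1 < q) :
    Phi q (2*k+3) = (2*(k:ℝ)+3)/(2*(k:ℝ)+2+q) * Phi q (2*k+2) := by
  have hkq : (0:ℝ) < 2*(k:ℝ)+2+q := by positivity
  have hC := psi_eq (2*k+2) q hq
  have hD := phi_succ (2*k+2) q hq
  have hB2 := moment_eq (2*k+2) q hq
  have hB3 := moment_eq (2*k+3) q hq
  rw [neg_one_pow_even] at hB2
  have hodd3 : (-1:ℝ)^(2*k+3) = -1 := by
    have := neg_one_pow_odd (k+1)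
    rw [show 2*(k+1)+1 = 2*k+3 from by omega] at this
    exact this
  rw [hodd3] at hB3
  have hcast : ((2*k+2 : ℕ) : ℝ) = 2*(k:ℝ)+2 := by push_cast; ring
  rw [hcast] at hC hD
  rw [hB2] at hC
  rw [show (2*k+2)+1 = 2*k+3 from rfl, hB3] at hD
  have hq1 : (0:ℝ) < 2*(k:ℝ)+1+q := by positivity
  have hPsi : Psi q (2*k+2) = Phi q (2*k+2) := by
    have h2 : (2*(k:ℝ)+2+q-1) ≠ 0 := by
      have : (0:ℝ) < 2*(k:ℝ)+2+q-1 := by linarith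
      exact ne_of_gt this
    apply mul_left_cancel₀ h2
    linear_combination hC
  rw [hPsi] at hD
  -- hD : (2k+2+1) Phi(2k+2) = (2k+3) Phi(2k+3) - (q-1)/2*(-1-1)*Phi(2k+3)
  rw [div_mul_eq_mul_div, eq_div_iff (ne_of_gt hkq)]
  linear_combination (-1 : ℝ) * hD

lemma phi_closed (k : ℕ) (q : ℝ) (hq : 1 < q) :
    Phi q (2*k+1) =
      ((2 * (k:ℝ) + 1) / (2 * (k:ℝ) + q)) *
        (Real.Gamma ((k : ℝ) + 1 / 2) ^ 2 * Real.Gamma (q / 2) ^ 2 /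
          (Real.pi * Real.Gamma ((k : ℝ) + q / 2) ^ 2)) := by
  have hq0 : (0:ℝ) < q := by linarith
  have hG2 : Real.Gamma (q/2) ≠ 0 := (Real.Gamma_pos_of_pos (by linarith)).ne'
  induction k with
  | zero =>
      have hPhi1 : Phi q 1 = 1/q := by
        rw [Phi, Finset.sum_range_succ, Finset.sum_range_one, Tt, Tt]
        simp only [poch_zero, poch_one, Nat.factorial, Nat.cast_one]
        push_cast
        field_simp
        ring
      have hq2 : (0:ℝ) < q/2 := by linarith
      simp only [Nat.cast_zero, Nat.mul_zero, mul_zero, zero_add, Nat.zero_add]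
      rw [hPhi1]
      rw [Real.Gamma_one_half_eq]
      rw [show (Real.sqrt Real.pi)^2 = Real.pi from Real.sq_sqrt Real.pi_pos.le]
      have hpi : Real.pi ≠ 0 := Real.pi_ne_zero
      field_simp
  | succ k ih =>
      have h1 : 2*(k+1)+1 = 2*k+3 := by omega
      rw [h1, step_even k q hq, step_odd k q hq, ih]
      have hG1 : Real.Gamma ((k:ℝ)+1/2) ≠ 0 := (Real.Gamma_pos_of_pos (by positivity)).ne'
      have hG3 : Real.Gamma ((k:ℝ)+q/2) ≠ 0 := (Real.Gamma_pos_of_pos (by positivity)).ne'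
      have e1 : Real.Gamma (((k+1:ℕ):ℝ)+1/2) = ((k:ℝ)+1/2) * Real.Gamma ((k:ℝ)+1/2) := by
        have : (((k+1:ℕ):ℝ)+1/2) = ((k:ℝ)+1/2) + 1 := by push_cast; ring
        rw [this, Real.Gamma_add_one (by positivity)]
      have e2 : Real.Gamma (((k+1:ℕ):ℝ)+q/2) = ((k:ℝ)+q/2) * Real.Gamma ((k:ℝ)+q/2) := by
        have : (((k+1:ℕ):ℝ)+q/2) = ((k:ℝ)+q/2) + 1 := by push_cast; ring
        rw [this, Real.Gamma_add_one (by positivity)]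
      rw [e1, e2]
      have hpi : Real.pi ≠ 0 := Real.pi_ne_zero
      have n1 : (2*(k:ℝ)+q) ≠ 0 := by positivity
      have n2 : (2*(k:ℝ)+2+q) ≠ 0 := by positivity
      have n3 : ((k:ℝ)+q/2) ≠ 0 := by positivity
      have n4 : (((k+1:ℕ):ℝ)+q) ≠ 0 := by positivity
      push_cast
      field_simp
      ring

/-- Watson-type summation (odd case, c = (q−1)/2). -/
theorem watson_odd_minus (k : ℕ) (q : ℝ) (hq : 1 < q) :
    F32 (-(2 * k + 1 : ℝ)) (2 * k + q) ((q - 1) / 2) (q / 2) q (2 * k + 1) =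
      ((2 * k + 1) / (2 * k + q)) *
        (Real.Gamma ((k : ℝ) + 1 / 2) ^ 2 * Real.Gamma (q / 2) ^ 2 /
          (Real.pi * Real.Gamma ((k : ℝ) + q / 2) ^ 2)) := by
  have hmain : F32 (-(2 * k + 1 : ℝ)) (2 * k + q) ((q - 1) / 2) (q / 2) q (2 * k + 1)
      = Phi q (2*k+1) := by
    rw [F32, Phi]
    apply Finset.sum_congr rfl
    intro m _
    rw [Tt]
    have a1 : (-(((2*k+1:ℕ)):ℝ)) = -(2 * (k:ℝ) + 1) := by push_cast; ring
    have a2 : ((2*k+1:ℕ):ℝ) + q - 1 = 2 * (k:ℝ) + q := by push_cast; ring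
    rw [a1, a2]
  rw [hmain, phi_closed k q hq]
end

section
/- Gegenbauer coefficients of the stereographic kernel (even order): for integers k ≥ 0 and q ≥ 3, the coefficient b_{2k,q} := c_{2k,q}^{−1} ∫_{−1}^{1} cot(arccos(x)/2) C_{2k}^{(q−1)/2}(x)(1−x²)^{q/2−1} dx equals α_{k,q}(4k+q−1), where α_{k,q} = Γ(k+1/2)² Γ((q−1)/2)² / (2π Γ(k+q/2)²) and c_{k,q} = (ω_q/ω_{q−1})(1+2k/(q−1))^{−1} C_k^{(q−1)/2}(1). -/
/-- Gegenbauer (ultraspherical) polynomials `C_n^{lam}` via the standard recurrence. -/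
noncomputable def gegenbauer (lam : ℝ) : ℕ → ℝ → ℝ
  | 0 => fun _ => 1
  | 1 => fun x => 2 * lam * x
  | (n + 2) => fun x =>
      (2 * ((n : ℝ) + 1 + lam) * x * gegenbauer lam (n + 1) x
        - ((n : ℝ) + 2 * lam) * gegenbauer lam n x) / ((n : ℝ) + 2)

open Polynomial MeasureTheory

/-- `n! • C_n^lam` as a polynomial family (division-free recurrence). -/
noncomputable def gegQ (lam : ℝ) : ℕ → Polynomial ℝ
  | 0 => 1
  | 1 => C (2 * lam) * X
  | (n + 2) => C (2 * ((n : ℝ) + 1 + lam)) * X * gegQ lam (n + 1)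
      - C (((n : ℝ) + 1) * ((n : ℝ) + 2 * lam)) * gegQ lam n

lemma gegenbauer_eval (lam : ℝ) (n : ℕ) (x : ℝ) :
    gegenbauer lam n x = (gegQ lam n).eval x / (n.factorial : ℝ) := by
  induction n using Nat.twoStepInduction with
  | zero => simp [gegenbauer, gegQ]
  | one => simp [gegenbauer, gegQ]
  | more n ih1 ih2 =>
    have h1 : ((n : ℝ) + 1) ≠ 0 := by positivity
    have h2 : ((n : ℝ) + 2) ≠ 0 := by positivity
    have hf : ((n.factorial : ℝ)) ≠ 0 := by exact_mod_cast n.factorial_ne_zero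
    show (2 * ((n : ℝ) + 1 + lam) * x * gegenbauer lam (n + 1) x
        - ((n : ℝ) + 2 * lam) * gegenbauer lam n x) / ((n : ℝ) + 2) = _
    rw [ih1, ih2]
    show _ = (eval x (C (2 * ((n : ℝ) + 1 + lam)) * X * gegQ lam (n + 1)
      - C (((n : ℝ) + 1) * ((n : ℝ) + 2 * lam)) * gegQ lam n)) / ((n+2).factorial : ℝ)
    have hfc : (((n+2).factorial : ℝ)) = ((n:ℝ)+2) * (((n:ℝ)+1) * (n.factorial : ℝ)) := by
      rw [Nat.factorial_succ, Nat.factorial_succ]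
      push_cast; ring
    have hfc1 : (((n+1).factorial : ℝ)) = ((n:ℝ)+1) * (n.factorial : ℝ) := by
      rw [Nat.factorial_succ]; push_cast; ring
    simp only [eval_sub, eval_mul, eval_C, eval_X, hfc, hfc1]
    field_simp

lemma gegQ_deriv (lam : ℝ) (n : ℕ) :
    (1 - X ^ 2) * derivative (gegQ lam (n + 1)) =
      C (((n : ℝ) + 1) * ((n : ℝ) + 2 * lam)) * gegQ lam n
        - C ((n : ℝ) + 1) * X * gegQ lam (n + 1) := by
  induction n using Nat.twoStepInduction with
  | zero =>
    show (1 - X ^ 2) * derivative (C (2 * lam) * X) = _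
    simp only [derivative_mul, derivative_C, derivative_X, zero_mul, mul_one, zero_add,
      show gegQ lam 0 = 1 from rfl, show gegQ lam 1 = C (2*lam) * X from rfl]
    push_cast
    simp only [map_mul, map_add, map_one, map_ofNat, map_zero, Nat.cast_zero]
    ring
  | one =>
    show (1 - X ^ 2) * derivative (gegQ lam 2) = _
    have h2 : gegQ lam 2 = C (2 * (((0:ℕ) : ℝ) + 1 + lam)) * X * (C (2 * lam) * X)
        - C ((((0:ℕ) : ℝ) + 1) * (((0:ℕ) : ℝ) + 2 * lam)) * 1 := rfl
    rw [h2]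
    simp only [derivative_sub, derivative_mul, derivative_C, derivative_X, derivative_one,
      show gegQ lam 1 = C (2*lam) * X from rfl]
    push_cast
    simp only [map_mul, map_add, map_one, map_ofNat, map_zero, Nat.cast_zero, Nat.cast_ofNat]
    ring
  | more n ih1 ih2 =>
    have h3 : gegQ lam (n + 3) = C (2 * (((n+1:ℕ) : ℝ) + 1 + lam)) * X * gegQ lam (n + 2)
        - C ((((n+1:ℕ) : ℝ) + 1) * (((n+1:ℕ) : ℝ) + 2 * lam)) * gegQ lam (n + 1) := rfl
    have hrec : gegQ lam (n + 2) = C (2 * ((n : ℝ) + 1 + lam)) * X * gegQ lam (n + 1)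
        - C (((n : ℝ) + 1) * ((n : ℝ) + 2 * lam)) * gegQ lam n := rfl
    rw [show ((n:ℕ)+2+1) = n+3 from rfl, h3]
    simp only [derivative_sub, derivative_mul, derivative_C, derivative_X]
    push_cast
    simp only [map_mul, map_add, map_one, map_ofNat, map_zero, Nat.cast_zero, Nat.cast_ofNat]
    push_cast at ih1 ih2 hrec
    simp only [map_mul, map_add, map_one, map_ofNat, map_zero, Nat.cast_zero, Nat.cast_ofNat]
      at ih1 ih2 hrec
    linear_combination
      (2*(C ((n:ℝ)) + 2 + C lam)*X) * ih2
      - ((C ((n:ℝ))+2)*(C ((n:ℝ))+1+2*C lam)) * ih1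
      - ((C ((n:ℝ))+2)*(C ((n:ℝ))+2*C lam+1)) * hrec

lemma gegQ_parity (lam : ℝ) (n : ℕ) (x : ℝ) :
    (gegQ lam n).eval (-x) = (-1) ^ n * (gegQ lam n).eval x := by
  induction n using Nat.twoStepInduction generalizing x with
  | zero => simp [gegQ]
  | one => simp [gegQ]; try ring
  | more n ih1 ih2 =>
    have hr : ∀ y : ℝ, (gegQ lam (n+2)).eval y = 2 * ((n : ℝ) + 1 + lam) * y * (gegQ lam (n+1)).eval y
        - ((n : ℝ) + 1) * ((n : ℝ) + 2 * lam) * (gegQ lam n).eval y := by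
      intro y
      rw [show gegQ lam (n+2) = C (2 * ((n : ℝ) + 1 + lam)) * X * gegQ lam (n + 1)
        - C (((n : ℝ) + 1) * ((n : ℝ) + 2 * lam)) * gegQ lam n from rfl]
      simp
    rw [hr, hr, ih1, ih2]
    ring

lemma gegQ_one_succ (lam : ℝ) (n : ℕ) :
    (gegQ lam (n+1)).eval 1 = ((n : ℝ) + 2 * lam) * (gegQ lam n).eval 1 := by
  induction n using Nat.twoStepInduction with
  | zero => simp [gegQ]; try ring
  | one =>
    rw [show gegQ lam 2 = C (2 * (((0:ℕ) : ℝ) + 1 + lam)) * X * gegQ lam 1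
        - C ((((0:ℕ) : ℝ) + 1) * (((0:ℕ) : ℝ) + 2 * lam)) * gegQ lam 0 from rfl]
    simp [gegQ]
    try push_cast
    try ring
  | more n ih1 ih2 =>
    have hr : ∀ m : ℕ, (gegQ lam (m+2)).eval 1 = 2 * ((m : ℝ) + 1 + lam) * (gegQ lam (m+1)).eval 1
        - ((m : ℝ) + 1) * ((m : ℝ) + 2 * lam) * (gegQ lam m).eval 1 := by
      intro m
      rw [show gegQ lam (m+2) = C (2 * ((m : ℝ) + 1 + lam)) * X * gegQ lam (m + 1)
        - C (((m : ℝ) + 1) * ((m : ℝ) + 2 * lam)) * gegQ lam m from rfl]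
      simp
    rw [show n+2+1 = (n+1)+2 from rfl, hr (n+1)]
    push_cast
    push_cast at ih2
    linear_combination ((n:ℝ) + 2) * ih2

lemma gegQ_one_pos (lam : ℝ) (hlam : 0 < lam) (n : ℕ) : 0 < (gegQ lam n).eval 1 := by
  induction n with
  | zero => simp [gegQ]
  | succ m ih =>
    rw [gegQ_one_succ]
    have : (0:ℝ) < (m : ℝ) + 2 * lam := by positivity
    exact mul_pos this ih

lemma odd_integral_zero (lam : ℝ) (k : ℕ) :
    ∫ x in (-1:ℝ)..1, x * (gegQ lam (2*k)).eval x * (1 - x ^ 2) ^ (lam - 1) = 0 := by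
  set f : ℝ → ℝ := fun x => x * (gegQ lam (2*k)).eval x * (1 - x ^ 2) ^ (lam - 1) with hf
  have hneg : ∀ x : ℝ, f (-x) = -f x := by
    intro x
    rw [hf]
    simp only
    rw [gegQ_parity]
    rw [show (-x)^2 = x^2 by ring]
    rw [show ((-1:ℝ))^(2*k) = 1 by rw [pow_mul]; norm_num]
    ring
  have h1 : (∫ x in (-1:ℝ)..1, f (-x)) = ∫ x in (-1:ℝ)..1, f x := by
    rw [intervalIntegral.integral_comp_neg]
    norm_num
  have h2 : (∫ x in (-1:ℝ)..1, f (-x)) = -∫ x in (-1:ℝ)..1, f x := by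
    rw [show (fun x => f (-x)) = fun x => -f x from funext hneg]
    exact intervalIntegral.integral_neg
  linarith [h1, h2]

lemma cot_arccos_half (x : ℝ) (h1 : -1 < x) (h2 : x < 1) :
    Real.cot (Real.arccos x / 2) = Real.sqrt (1+x) / Real.sqrt (1-x) := by
  have hpi := Real.pi_pos
  have ha1 := Real.arccos_nonneg x
  have ha2 := Real.arccos_le_pi x
  rw [Real.cot_eq_cos_div_sin,
    Real.cos_half (by linarith) (by linarith),
    Real.sin_half_eq_sqrt (by linarith) (by linarith),
    Real.cos_arccos (le_of_lt h1) (le_of_lt h2),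
    Real.sqrt_div (by linarith : (0:ℝ) ≤ 1 + x) 2,
    Real.sqrt_div (by linarith : (0:ℝ) ≤ 1 - x) 2]
  have hs2 : Real.sqrt 2 ≠ 0 := by positivity
  have hs1x : Real.sqrt (1 - x) ≠ 0 := by
    have : (0:ℝ) < 1 - x := by linarith
    positivity
  field_simp

lemma beta_real (lam : ℝ) (hlam : 0 < lam) :
    ∫ u in (0:ℝ)..1, u ^ (lam - 1) * (1 - u) ^ (lam - 1) =
      Real.Gamma lam ^ 2 / Real.Gamma (2 * lam) := by
  have hre : 0 < Complex.re (lam : ℂ) := by simpa using hlam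
  have hc := Complex.Gamma_mul_Gamma_eq_betaIntegral hre hre
  have hb : Complex.betaIntegral (lam : ℂ) (lam : ℂ) =
      ((∫ u in (0:ℝ)..1, u ^ (lam - 1) * (1 - u) ^ (lam - 1) : ℝ) : ℂ) := by
    rw [Complex.betaIntegral]
    have hcong : (∫ x in (0:ℝ)..1, (x : ℂ) ^ ((lam:ℂ) - 1) * (1 - (x:ℂ)) ^ ((lam:ℂ) - 1)) =
        ∫ x in (0:ℝ)..1, ((x ^ (lam - 1) * (1 - x) ^ (lam - 1) : ℝ) : ℂ) := by
      apply intervalIntegral.integral_congr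
      intro x hx
      rw [Set.uIcc_of_le (by norm_num : (0:ℝ) ≤ 1)] at hx
      obtain ⟨h0, h1⟩ := hx
      show (x : ℂ) ^ ((lam:ℂ) - 1) * (1 - (x:ℂ)) ^ ((lam:ℂ) - 1)
        = ((x ^ (lam - 1) * (1 - x) ^ (lam - 1) : ℝ) : ℂ)
      have e1 : ((x ^ (lam - 1) : ℝ) : ℂ) = (x : ℂ) ^ ((lam : ℂ) - 1) := by
        rw [Complex.ofReal_cpow h0]; norm_num
      have e2 : (((1 - x) ^ (lam - 1) : ℝ) : ℂ) = (1 - (x : ℂ)) ^ ((lam : ℂ) - 1) := by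
        rw [Complex.ofReal_cpow (by linarith)]; push_cast; norm_num
      rw [Complex.ofReal_mul, e1, e2]
    exact hcong.trans (RCLike.intervalIntegral_ofReal (𝕜 := ℂ))
  rw [hb] at hc
  have hgr : Complex.Gamma ((lam : ℂ) + (lam : ℂ)) = ((Real.Gamma (2 * lam) : ℝ) : ℂ) := by
    rw [show ((lam : ℂ) + (lam : ℂ)) = ((2 * lam : ℝ) : ℂ) by push_cast; ring, Complex.Gamma_ofReal]
  rw [hgr, Complex.Gamma_ofReal, ← Complex.ofReal_mul, ← Complex.ofReal_mul] at hc
  have hreal : Real.Gamma lam * Real.Gamma lam =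
      Real.Gamma (2 * lam) * ∫ u in (0:ℝ)..1, u ^ (lam - 1) * (1 - u) ^ (lam - 1) :=
    Complex.ofReal_inj.mp hc
  have hG : Real.Gamma (2 * lam) ≠ 0 := (Real.Gamma_pos_of_pos (by linarith)).ne'
  rw [eq_div_iff hG]
  linear_combination -hreal

lemma integral_w (lam : ℝ) (hlam : 1 ≤ lam) :
    ∫ x in (-1:ℝ)..1, (1 - x ^ 2) ^ (lam - 1) =
      Real.sqrt Real.pi * Real.Gamma lam / Real.Gamma (lam + 1/2) := by
  have h0 : (0:ℝ) < lam := by linarith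
  have hsub := intervalIntegral.integral_comp_mul_add
    (f := fun x : ℝ => (1 - x ^ 2) ^ (lam - 1)) (a := (0:ℝ)) (b := 1)
    (c := (2:ℝ)) (by norm_num) (-1)
  norm_num at hsub
  have hcong : ∫ u in (0:ℝ)..1, (1 - (2 * u + -1) ^ 2) ^ (lam - 1) =
      ∫ u in (0:ℝ)..1, (4:ℝ) ^ (lam - 1) * (u ^ (lam - 1) * (1 - u) ^ (lam - 1)) := by
    apply intervalIntegral.integral_congr
    intro u hu
    rw [Set.uIcc_of_le (by norm_num : (0:ℝ) ≤ 1)] at hu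
    obtain ⟨hu0, hu1⟩ := hu
    show (1 - (2 * u + -1) ^ 2) ^ (lam - 1) = _
    rw [show (1 - (2 * u + -1) ^ 2) = 4 * (u * (1 - u)) by ring,
      Real.mul_rpow (by norm_num) (mul_nonneg hu0 (by linarith)),
      Real.mul_rpow hu0 (by linarith)]
  rw [hcong, intervalIntegral.integral_const_mul, beta_real lam h0] at hsub
  have hdup := Real.Gamma_mul_Gamma_add_half lam
  set G1 := Real.Gamma lam with hG1def
  set G2 := Real.Gamma (lam + 1/2) with hG2def
  set G3 := Real.Gamma (2 * lam) with hG3def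
  set S := Real.sqrt Real.pi with hSdef
  set P := (2:ℝ) ^ (1 - 2 * lam) with hPdef
  set B4 := (4:ℝ) ^ (lam - 1) with hB4def
  have hG1 : G1 ≠ 0 := (Real.Gamma_pos_of_pos h0).ne'
  have hG2 : G2 ≠ 0 := (Real.Gamma_pos_of_pos (by linarith)).ne'
  have hG3 : G3 ≠ 0 := (Real.Gamma_pos_of_pos (by linarith)).ne'
  have hs : S ≠ 0 := by rw [hSdef]; positivity
  have hp : P ≠ 0 := by rw [hPdef]; positivity
  have hpow : B4 * P = 2⁻¹ := by
    rw [hB4def, hPdef,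
      show (4:ℝ) = (2:ℝ) ^ (2:ℝ) by
        rw [show (2:ℝ) ^ (2:ℝ) = (2:ℝ) ^ ((2:ℕ):ℝ) by norm_num, Real.rpow_natCast]; norm_num,
      ← Real.rpow_mul (by norm_num : (0:ℝ) ≤ 2), ← Real.rpow_add (by norm_num : (0:ℝ) < 2),
      show (2 * (lam - 1) + (1 - 2 * lam)) = (-1 : ℝ) by ring, Real.rpow_neg_one]
  have hA : ∫ x in (-1:ℝ)..1, (1 - x ^ 2) ^ (lam - 1) = 2 * (B4 * (G1 ^ 2 / G3)) := by
    linarith [hsub]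
  have hG3' : G3 = G1 * G2 / (P * S) := by
    rw [eq_div_iff (by exact mul_ne_zero hp hs)]
    linear_combination -hdup
  rw [hA, hG3']
  have hB4 : B4 ≠ 0 := by rw [hB4def]; positivity
  field_simp
  linear_combination 2 * hpow

lemma w_continuous (lam : ℝ) (hlam : 1 ≤ lam) :
    Continuous (fun x : ℝ => (1 - x ^ 2) ^ (lam - 1)) := by
  apply Continuous.rpow_const (by continuity)
  intro x
  right; linarith

lemma poly_w_integrable (lam : ℝ) (hlam : 1 ≤ lam) (p : Polynomial ℝ) :
    IntervalIntegrable (fun x : ℝ => p.eval x * (1 - x ^ 2) ^ (lam - 1)) volume (-1) 1 :=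
  ((p.continuous_aeval.mul (w_continuous lam hlam))).intervalIntegrable _ _

lemma x_poly_w_integrable (lam : ℝ) (hlam : 1 ≤ lam) (p : Polynomial ℝ) :
    IntervalIntegrable (fun x : ℝ => x * p.eval x * (1 - x ^ 2) ^ (lam - 1)) volume (-1) 1 :=
  (((continuous_id.mul p.continuous_aeval).mul (w_continuous lam hlam))).intervalIntegrable _ _

lemma AQ_rec (lam : ℝ) (hlam : 1 ≤ lam) (n : ℕ) :
    ((n:ℝ) + 2 * lam + 1) *
        ∫ x in (-1:ℝ)..1, (gegQ lam (n+2)).eval x * (1 - x ^ 2) ^ (lam - 1) =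
      ((n:ℝ) + 1) ^ 2 * ((n:ℝ) + 2 * lam) *
        ∫ x in (-1:ℝ)..1, (gegQ lam n).eval x * (1 - x ^ 2) ^ (lam - 1) := by
  have hlam0 : lam ≠ 0 := by linarith
  set Q1 := gegQ lam (n+1) with hQ1
  set g : ℝ → ℝ := fun x => (1 - x ^ 2) ^ (lam - 1) *
      ((-(2*lam)*x) * Q1.eval x + (1 - x ^ 2) * (derivative Q1).eval x) with hg
  have hF : ∀ x ∈ Set.uIcc (-1:ℝ) 1, HasDerivAt
      (fun x : ℝ => (1 - x ^ 2) ^ lam * Q1.eval x) (g x) x := by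
    intro x hx
    rw [Set.uIcc_of_le (by norm_num : (-1:ℝ) ≤ 1)] at hx
    have hx2 : 0 ≤ 1 - x ^ 2 := by nlinarith [hx.1, hx.2]
    have h1 : HasDerivAt (fun x : ℝ => 1 - x ^ 2) (-(2*x)) x := by
      simpa using ((hasDerivAt_pow 2 x).const_sub 1)
    have h2 : HasDerivAt (fun x : ℝ => (1 - x ^ 2) ^ lam)
        ((-(2*x)) * lam * (1 - x ^ 2) ^ (lam - 1)) x := h1.rpow_const (Or.inr hlam)
    have h3 := Q1.hasDerivAt x
    have h4 := h2.mul h3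
    refine h4.congr_deriv ?_
    rw [hg]
    have hsplit : (1 - x ^ 2) ^ lam = (1 - x ^ 2) ^ (lam - 1) * (1 - x ^ 2) := by
      rcases eq_or_lt_of_le hx2 with h | h
      · rw [← h, Real.zero_rpow hlam0, mul_zero]
      · have hadd := Real.rpow_add h (lam - 1) 1
        rw [Real.rpow_one] at hadd
        rw [← hadd]
        norm_num
    rw [hsplit]
    ring
  have hgc : Continuous g := by
    apply Continuous.mul (w_continuous lam hlam)
    exact ((continuous_const.mul continuous_id).mul Q1.continuous_aeval).add
      ((continuous_const.sub (continuous_pow 2)).mul (derivative Q1).continuous_aeval)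
  have h0 : ∫ x in (-1:ℝ)..1, g x = 0 := by
    rw [intervalIntegral.integral_eq_sub_of_hasDerivAt hF (hgc.intervalIntegrable _ _)]
    norm_num [Real.zero_rpow hlam0]
  have hgeq : ∀ x : ℝ, 2*((n:ℝ)+1+lam) * g x =
      ((n:ℝ)+1)^2*((n:ℝ)+2*lam) * ((gegQ lam n).eval x * (1 - x ^ 2) ^ (lam - 1))
        - ((n:ℝ)+2*lam+1) * ((gegQ lam (n+2)).eval x * (1 - x ^ 2) ^ (lam - 1)) := by
    intro x
    have hd := congrArg (eval x) (gegQ_deriv lam n)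
    simp only [eval_mul, eval_sub, eval_one, eval_pow, eval_X, eval_C] at hd
    have hr : (gegQ lam (n+2)).eval x = 2 * ((n : ℝ) + 1 + lam) * x * Q1.eval x
        - ((n : ℝ) + 1) * ((n : ℝ) + 2 * lam) * (gegQ lam n).eval x := by
      rw [show gegQ lam (n+2) = C (2 * ((n : ℝ) + 1 + lam)) * X * gegQ lam (n + 1)
        - C (((n : ℝ) + 1) * ((n : ℝ) + 2 * lam)) * gegQ lam n from rfl]
      simp [hQ1]
    rw [hg]
    linear_combination (2*((n:ℝ)+1+lam) * (1 - x ^ 2) ^ (lam - 1)) * hd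
      + ((n:ℝ)+2*lam+1) * ((1 - x ^ 2) ^ (lam - 1)) * hr
  have hint0 := poly_w_integrable lam hlam (gegQ lam n)
  have hint2 := poly_w_integrable lam hlam (gegQ lam (n+2))
  have key : (0:ℝ) = ((n:ℝ)+1)^2*((n:ℝ)+2*lam) *
        (∫ x in (-1:ℝ)..1, (gegQ lam n).eval x * (1 - x ^ 2) ^ (lam - 1))
      - ((n:ℝ)+2*lam+1) *
        (∫ x in (-1:ℝ)..1, (gegQ lam (n+2)).eval x * (1 - x ^ 2) ^ (lam - 1)) := by
    calc (0:ℝ) = 2*((n:ℝ)+1+lam) * ∫ x in (-1:ℝ)..1, g x := by rw [h0]; ring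
      _ = ∫ x in (-1:ℝ)..1, 2*((n:ℝ)+1+lam) * g x := by
          rw [intervalIntegral.integral_const_mul]
      _ = ∫ x in (-1:ℝ)..1, (((n:ℝ)+1)^2*((n:ℝ)+2*lam) * ((gegQ lam n).eval x * (1 - x ^ 2) ^ (lam - 1))
            - ((n:ℝ)+2*lam+1) * ((gegQ lam (n+2)).eval x * (1 - x ^ 2) ^ (lam - 1))) := by
          exact intervalIntegral.integral_congr (fun x _ => hgeq x)
      _ = _ := by
          rw [intervalIntegral.integral_sub ((hint0.const_mul _)) ((hint2.const_mul _)),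
            intervalIntegral.integral_const_mul, intervalIntegral.integral_const_mul]
  linarith [key]

lemma sqrt_weight (lam : ℝ) (x : ℝ) (h1 : -1 < x) (h2 : x < 1) :
    Real.sqrt (1+x) / Real.sqrt (1-x) * (1 - x^2) ^ (lam - 1/2)
      = (1+x) * (1 - x^2) ^ (lam - 1) := by
  have hx1 : (0:ℝ) < 1 + x := by linarith
  have hx2 : (0:ℝ) < 1 - x := by linarith
  have hxx : (0:ℝ) < 1 - x^2 := by nlinarith
  have e1 : (1 - x^2:ℝ) ^ (lam - 1/2) = (1 - x^2)^(lam - 1) * (1 - x^2) ^ ((1:ℝ)/2) := by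
    rw [← Real.rpow_add hxx]
    congr 1
    ring
  have e2 : (1 - x^2:ℝ) ^ ((1:ℝ)/2) = Real.sqrt (1+x) * Real.sqrt (1-x) := by
    rw [show (1 - x^2:ℝ) = (1+x)*(1-x) by ring, ← Real.sqrt_eq_rpow, Real.sqrt_mul hx1.le]
  rw [e1, e2]
  have hs : Real.sqrt (1-x) ≠ 0 := by positivity
  have hmul : Real.sqrt (1+x) * Real.sqrt (1+x) = 1+x := Real.mul_self_sqrt hx1.le
  field_simp
  linear_combination hmul

/-- Even-order Gegenbauer coefficients of the stereographic kernel cot. -/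
theorem gegenbauer_coeff_cot_even (q : ℕ) (hq : 3 ≤ q) (k : ℕ) :
    (sphereArea (q : ℝ) / sphereArea ((q : ℝ) - 1) *
        (1 + 2 * ((2 * k : ℕ) : ℝ) / ((q : ℝ) - 1))⁻¹ *
        gegenbauer (((q : ℝ) - 1) / 2) (2 * k) 1)⁻¹ *
      ∫ x in (-1 : ℝ)..1,
        Real.cot (Real.arccos x / 2) * gegenbauer (((q : ℝ) - 1) / 2) (2 * k) x *
          (1 - x ^ 2) ^ ((q : ℝ) / 2 - 1) =
    Real.Gamma ((k : ℝ) + 1 / 2) ^ 2 * Real.Gamma (((q : ℝ) - 1) / 2) ^ 2 /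
        (2 * Real.pi * Real.Gamma ((k : ℝ) + (q : ℝ) / 2) ^ 2) *
      (4 * (k : ℝ) + (q : ℝ) - 1) := by
  have hq3 : (3:ℝ) ≤ (q:ℝ) := by exact_mod_cast hq
  set lam : ℝ := ((q:ℝ) - 1) / 2 with hlamdef
  have hlam : 1 ≤ lam := by rw [hlamdef]; linarith
  have hlam0 : 0 < lam := by linarith
  have hql : (q:ℝ) = 2 * lam + 1 := by rw [hlamdef]; ring
  set S : ℝ := sphereArea (q : ℝ) / sphereArea ((q : ℝ) - 1) with hSdef
  have hS : S = Real.sqrt Real.pi * Real.Gamma (lam + 1/2) / (lam * Real.Gamma lam) := by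
    rw [hSdef, sphereArea, sphereArea]
    rw [show ((q:ℝ) - 1 + 1) / 2 = lam + 1/2 by rw [hlamdef]; ring]
    rw [show ((q:ℝ) + 1) / 2 = lam + 1 by rw [hlamdef]; ring]
    rw [Real.Gamma_add_one hlam0.ne']
    have hpow : Real.pi ^ (lam + 1) = Real.pi ^ (lam + 1/2) * Real.sqrt Real.pi := by
      rw [Real.sqrt_eq_rpow, ← Real.rpow_add Real.pi_pos]
      congr 1
      ring
    rw [hpow]
    have h1 : Real.Gamma (lam + 1/2) ≠ 0 := (Real.Gamma_pos_of_pos (by linarith)).ne'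
    have h2 : Real.Gamma lam ≠ 0 := (Real.Gamma_pos_of_pos hlam0).ne'
    have h3 : Real.pi ^ (lam + 1/2) ≠ 0 := (Real.rpow_pos_of_pos Real.pi_pos _).ne'
    field_simp
  have hfact : (((2*k).factorial : ℝ)) ≠ 0 := by exact_mod_cast (2*k).factorial_ne_zero
  have hIred : (∫ x in (-1:ℝ)..1, Real.cot (Real.arccos x / 2) * gegenbauer lam (2*k) x *
        (1 - x^2) ^ ((q:ℝ)/2 - 1))
      = (∫ x in (-1:ℝ)..1, (gegQ lam (2*k)).eval x * (1-x^2)^(lam-1)) /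
          ((2*k).factorial : ℝ) := by
    have hae1 : ∀ᵐ (x:ℝ), x ≠ (1:ℝ) := by
      have hset : ({x : ℝ | ¬ x ≠ 1} : Set ℝ) = {1} := by ext y; simp
      rw [MeasureTheory.ae_iff, hset]
      exact measure_singleton 1
    have hcong : (∫ x in (-1:ℝ)..1, Real.cot (Real.arccos x / 2) * gegenbauer lam (2*k) x *
          (1 - x^2) ^ ((q:ℝ)/2 - 1))
        = ∫ x in (-1:ℝ)..1, ((gegQ lam (2*k)).eval x * (1-x^2)^(lam-1)
            + x * (gegQ lam (2*k)).eval x * (1-x^2)^(lam-1)) / ((2*k).factorial : ℝ) := by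
      apply intervalIntegral.integral_congr_ae
      filter_upwards [hae1] with x hx1 hxI
      rw [Set.uIoc_of_le (by norm_num : (-1:ℝ) ≤ 1)] at hxI
      have hxlt : x < 1 := lt_of_le_of_ne hxI.2 hx1
      have hxgt : -1 < x := hxI.1
      rw [gegenbauer_eval, cot_arccos_half x hxgt hxlt,
        show ((q:ℝ)/2 - 1) = lam - 1/2 by rw [hlamdef]; ring]
      have hsw := sqrt_weight lam x hxgt hxlt
      have h' : ∀ a : ℝ, Real.sqrt (1+x) / Real.sqrt (1-x) * a * (1 - x^2) ^ (lam - 1/2)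
          = ((1+x) * (1 - x^2) ^ (lam - 1)) * a := by
        intro a
        rw [mul_right_comm, hsw]
      rw [h']
      ring
    rw [hcong]
    have hint1 := poly_w_integrable lam hlam (gegQ lam (2*k))
    have hint2 := x_poly_w_integrable lam hlam (gegQ lam (2*k))
    rw [intervalIntegral.integral_div, intervalIntegral.integral_add hint1 hint2,
      odd_integral_zero lam k, add_zero]
  have hGl : Real.Gamma lam ≠ 0 := (Real.Gamma_pos_of_pos hlam0).ne'
  have hmain : ∀ m : ℕ, (1 + 2 * ((2 * m : ℕ) : ℝ) / ((q : ℝ) - 1)) *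
        (∫ x in (-1:ℝ)..1, (gegQ lam (2*m)).eval x * (1-x^2)^(lam-1))
      = S * (gegQ lam (2*m)).eval 1 *
        (Real.Gamma ((m:ℝ)+1/2)^2 * Real.Gamma lam ^2 /
          (2*Real.pi*Real.Gamma ((m:ℝ)+(q:ℝ)/2)^2) * (4*(m:ℝ)+(q:ℝ)-1)) := by
    intro m
    induction m with
    | zero =>
      rw [show (2*0 : ℕ) = 0 from rfl]
      rw [show (gegQ lam 0) = 1 from rfl]
      simp only [Polynomial.eval_one, Nat.cast_zero]
      norm_num
      rw [integral_w lam hlam, hS,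
        show (q:ℝ)/2 = lam + 1/2 by rw [hlamdef]; ring,
        Real.Gamma_one_half_eq]
      have h1 : Real.Gamma (lam + 1/2) ≠ 0 := (Real.Gamma_pos_of_pos (by linarith)).ne'
      have hsq : Real.sqrt Real.pi * Real.sqrt Real.pi = Real.pi :=
        Real.mul_self_sqrt Real.pi_pos.le
      rw [hql]
      field_simp
      try ring_nf
      try linear_combination (Real.Gamma lam ^ 2 * Real.Gamma (lam+1/2) * lam * 2) * hsq
      linear_combination (-2*lam) * hsq
    | succ m ih =>
      rw [show 2*(m+1) = 2*m+2 by ring]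
      have h2l : (0:ℝ) < 2*(m:ℝ) + 2*lam + 1 := by positivity
      have hAQrec := AQ_rec lam hlam (2*m)
      push_cast at hAQrec
      have hE2 : (gegQ lam (2*m+2)).eval 1 =
          ((2*(m:ℝ)+1) + 2*lam) * ((2*(m:ℝ)) + 2*lam) * (gegQ lam (2*m)).eval 1 := by
        rw [show 2*m+2 = (2*m+1)+1 by ring, gegQ_one_succ, gegQ_one_succ]
        push_cast
        ring
      have hg1 : Real.Gamma ((m:ℝ)+1+1/2) = ((m:ℝ)+1/2) * Real.Gamma ((m:ℝ)+1/2) := by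
        rw [show (m:ℝ)+1+1/2 = ((m:ℝ)+1/2)+1 by ring,
          Real.Gamma_add_one (by positivity)]
      have hg2 : Real.Gamma ((m:ℝ)+1+(q:ℝ)/2) = ((m:ℝ)+(q:ℝ)/2) * Real.Gamma ((m:ℝ)+(q:ℝ)/2) := by
        have hqpos : (0:ℝ) < (q:ℝ) := by linarith
        rw [show (m:ℝ)+1+(q:ℝ)/2 = ((m:ℝ)+(q:ℝ)/2)+1 by ring,
          Real.Gamma_add_one (by positivity)]
      have hGq : Real.Gamma ((m:ℝ)+(q:ℝ)/2) ≠ 0 := by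
        have hqpos : (0:ℝ) < (q:ℝ) := by linarith
        exact (Real.Gamma_pos_of_pos (by positivity)).ne'
      have hq1 : (0:ℝ) < (q:ℝ) - 1 := by linarith
      have hu : (0:ℝ) < 1 + 2 * (2*(m:ℝ)) / ((q : ℝ) - 1) := by
        have h1 : (0:ℝ) ≤ 2 * (2*(m:ℝ)) / ((q : ℝ) - 1) :=
          div_nonneg (by positivity) (by linarith)
        linarith
      push_cast
      push_cast at ih
      have hA : (∫ x in (-1:ℝ)..1, (gegQ lam (2*m)).eval x * (1-x^2)^(lam-1))
          = S * (gegQ lam (2*m)).eval 1 *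
            (Real.Gamma ((m:ℝ)+1/2)^2 * Real.Gamma lam ^2 /
              (2*Real.pi*Real.Gamma ((m:ℝ)+(q:ℝ)/2)^2) * (4*(m:ℝ)+(q:ℝ)-1)) /
            (1 + 2 * (2*(m:ℝ)) / ((q : ℝ) - 1)) := by
        rw [eq_div_iff hu.ne']
        linear_combination ih
      have hA2 : (∫ x in (-1:ℝ)..1, (gegQ lam (2*m+2)).eval x * (1-x^2)^(lam-1))
          = ((2*(m:ℝ)+1)^2 * (2*(m:ℝ)+2*lam) *
              (∫ x in (-1:ℝ)..1, (gegQ lam (2*m)).eval x * (1-x^2)^(lam-1))) /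
            (2*(m:ℝ) + 2*lam + 1) := by
        rw [eq_div_iff h2l.ne']
        linear_combination hAQrec
      rw [hE2, hg1, hg2, hA2, hA, hql]
      have hGq2 : Real.Gamma ((m:ℝ)+(2*lam+1)/2) ≠ 0 := by
        have := hGq
        rw [hql] at this
        exact this
      have hpi : Real.pi ≠ 0 := Real.pi_ne_zero
      have hl0 : lam ≠ 0 := hlam0.ne'
      have hlm : 2*lam + 2*(2*(m:ℝ)) ≠ 0 := by positivity
      field_simp
      ring_nf
      have hlm' : lam * 2 + (m:ℝ) * 4 ≠ 0 := by positivity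
      field_simp
      ring
  -- Step 3 : conclusion
  have hE1pos : 0 < (gegQ lam (2*k)).eval 1 := gegQ_one_pos lam hlam0 (2*k)
  have hSpos : 0 < S := by
    rw [hS]
    have h1 : 0 < Real.Gamma (lam + 1/2) := Real.Gamma_pos_of_pos (by linarith)
    have h2 : 0 < Real.Gamma lam := Real.Gamma_pos_of_pos hlam0
    have h3 : 0 < Real.sqrt Real.pi := Real.sqrt_pos.mpr Real.pi_pos
    positivity
  have hq1 : (0:ℝ) < (q:ℝ) - 1 := by linarith
  have hu : (0:ℝ) < 1 + 2 * ((2*k:ℕ):ℝ) / ((q : ℝ) - 1) := by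
    have h1 : (0:ℝ) ≤ 2 * ((2*k:ℕ):ℝ) / ((q : ℝ) - 1) :=
      div_nonneg (by positivity) (by linarith)
    linarith
  have hgeg1 : gegenbauer lam (2*k) 1 = (gegQ lam (2*k)).eval 1 / ((2*k).factorial : ℝ) :=
    gegenbauer_eval lam (2*k) 1
  have hpre : S * (1 + 2 * ((2 * k : ℕ) : ℝ) / ((q : ℝ) - 1))⁻¹ * gegenbauer lam (2*k) 1 ≠ 0 := by
    rw [hgeg1]
    have hfp : (0:ℝ) < ((2*k).factorial : ℝ) := by exact_mod_cast (2*k).factorial_pos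
    positivity
  rw [hIred, inv_mul_eq_iff_eq_mul₀ hpre]
  rw [hgeg1]
  have hm := hmain k
  have hA : (∫ x in (-1:ℝ)..1, (gegQ lam (2*k)).eval x * (1-x^2)^(lam-1))
      = S * (gegQ lam (2*k)).eval 1 *
          (Real.Gamma ((k:ℝ)+1/2)^2 * Real.Gamma lam ^2 /
            (2*Real.pi*Real.Gamma ((k:ℝ)+(q:ℝ)/2)^2) * (4*(k:ℝ)+(q:ℝ)-1)) /
        (1 + 2 * ((2*k:ℕ):ℝ) / ((q:ℝ)-1)) := by
    rw [eq_div_iff hu.ne']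
    linear_combination hm
  rw [hA]
  have hGq : Real.Gamma ((k:ℝ)+(q:ℝ)/2) ≠ 0 := by
    have hqpos : (0:ℝ) < (q:ℝ) := by linarith
    exact (Real.Gamma_pos_of_pos (by positivity)).ne'
  have hpi : Real.pi ≠ 0 := Real.pi_ne_zero
  field_simp
end

section
/- Gegenbauer coefficients of the stereographic kernel (odd order): for integers k ≥ 0 and q ≥ 3, the coefficient b_{2k+1,q} := c_{2k+1,q}^{−1} ∫_{−1}^{1} cot(arccos(x)/2) C_{2k+1}^{(q−1)/2}(x)(1−x²)^{q/2−1} dx equals α_{k,q}(2k+1)(4k+q+1)/(2k+q), where α_{k,q} = Γ(k+1/2)² Γ((q−1)/2)²/(2π Γ(k+q/2)²) and c_{k,q} = (ω_q/ω_{q−1})(1+2k/(q−1))^{−1} C_k^{(q−1)/2}(1). -/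
open Real MeasureTheory

/-- Formal derivatives of the Gegenbauer polynomials. -/
noncomputable def gegD (lam : ℝ) : ℕ → ℝ → ℝ
  | 0 => fun _ => 0
  | 1 => fun _ => 2 * lam
  | (n + 2) => fun x =>
      (2 * ((n : ℝ) + 1 + lam) * (gegenbauer lam (n + 1) x + x * gegD lam (n + 1) x)
        - ((n : ℝ) + 2 * lam) * gegD lam n x) / ((n : ℝ) + 2)

lemma geg_rec (lam : ℝ) (n : ℕ) (x : ℝ) :
    ((n : ℝ) + 2) * gegenbauer lam (n + 2) x
      = 2 * ((n : ℝ) + 1 + lam) * x * gegenbauer lam (n + 1) x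
        - ((n : ℝ) + 2 * lam) * gegenbauer lam n x := by
  have h : ((n : ℝ) + 2) ≠ 0 := by positivity
  rw [show gegenbauer lam (n+2) x = (2 * ((n : ℝ) + 1 + lam) * x * gegenbauer lam (n + 1) x
        - ((n : ℝ) + 2 * lam) * gegenbauer lam n x) / ((n : ℝ) + 2) from rfl]
  field_simp

lemma gegD_rec (lam : ℝ) (n : ℕ) (x : ℝ) :
    ((n : ℝ) + 2) * gegD lam (n + 2) x
      = 2 * ((n : ℝ) + 1 + lam) * (gegenbauer lam (n + 1) x + x * gegD lam (n + 1) x)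
        - ((n : ℝ) + 2 * lam) * gegD lam n x := by
  have h : ((n : ℝ) + 2) ≠ 0 := by positivity
  rw [show gegD lam (n+2) x = (2 * ((n : ℝ) + 1 + lam) * (gegenbauer lam (n + 1) x
      + x * gegD lam (n + 1) x) - ((n : ℝ) + 2 * lam) * gegD lam n x) / ((n : ℝ) + 2) from rfl]
  field_simp

lemma geg_cont (lam : ℝ) (n : ℕ) : Continuous (gegenbauer lam n) := by
  induction n using Nat.twoStepInduction with
  | zero => simpa [gegenbauer] using continuous_const
  | one =>
    simp only [gegenbauer]
    fun_prop
  | more n h1 h2 =>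
    simp only [gegenbauer]
    fun_prop

lemma gegD_cont (lam : ℝ) (n : ℕ) : Continuous (gegD lam n) := by
  induction n using Nat.twoStepInduction with
  | zero => simpa [gegD] using continuous_const
  | one => simpa [gegD] using continuous_const
  | more n h1 h2 =>
    have := geg_cont lam (n + 1)
    simp only [gegD]
    fun_prop

lemma geg_hasDerivAt (lam : ℝ) (n : ℕ) (x : ℝ) :
    HasDerivAt (gegenbauer lam n) (gegD lam n x) x := by
  induction n using Nat.twoStepInduction generalizing x with
  | zero =>
    simpa [gegenbauer, gegD] using hasDerivAt_const x (1 : ℝ)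
  | one =>
    simpa [gegenbauer, gegD] using (hasDerivAt_id x).const_mul (2 * lam)
  | more n h1 h2 =>
    have hmul : HasDerivAt (fun y : ℝ => y * gegenbauer lam (n + 1) y)
        (1 * gegenbauer lam (n + 1) x + x * gegD lam (n + 1) x) x :=
      (hasDerivAt_id x).mul (h2 x)
    have H := (((hmul.const_mul (2 * ((n : ℝ) + 1 + lam))).sub
      ((h1 x).const_mul ((n : ℝ) + 2 * lam))).div_const ((n : ℝ) + 2))
    have hfun : gegenbauer lam (n + 2) = fun y =>
        (2 * ((n : ℝ) + 1 + lam) * (y * gegenbauer lam (n + 1) y)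
          - ((n : ℝ) + 2 * lam) * gegenbauer lam n y) / ((n : ℝ) + 2) := by
      funext y
      show (2 * ((n : ℝ) + 1 + lam) * y * gegenbauer lam (n + 1) y
        - ((n : ℝ) + 2 * lam) * gegenbauer lam n y) / ((n : ℝ) + 2) = _
      ring
    rw [hfun]
    refine H.congr_deriv (Eq.symm ?_)
    show (2 * ((n : ℝ) + 1 + lam) * (gegenbauer lam (n + 1) x + x * gegD lam (n + 1) x)
      - ((n : ℝ) + 2 * lam) * gegD lam n x) / ((n : ℝ) + 2) = _
    ring

lemma geg_deriv_id (lam : ℝ) (n : ℕ) (x : ℝ) :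
    (1 - x ^ 2) * gegD lam (n + 1) x
      = -((n : ℝ) + 1) * x * gegenbauer lam (n + 1) x
        + ((n : ℝ) + 2 * lam) * gegenbauer lam n x := by
  induction n using Nat.twoStepInduction generalizing x with
  | zero => simp only [gegenbauer, gegD]; push_cast; ring
  | one =>
    have hC := geg_rec lam 0 x
    have hD := gegD_rec lam 0 x
    simp only [gegenbauer, gegD] at hC hD ⊢
    push_cast at hC hD ⊢
    nlinarith [hC, hD]
  | more n h1 h2 =>
    simp only [show n + 1 + 2 = n + 3 from rfl, show n + 2 + 1 = n + 3 from rfl,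
      show n + 1 + 1 = n + 2 from rfl] at *
    have hD3 := gegD_rec lam (n + 1) x
    have hC3 := geg_rec lam (n + 1) x
    have hC2 := geg_rec lam n x
    have e1 := h1 x
    have e2 := h2 x
    have hne : ((n : ℝ) + 3) ≠ 0 := by positivity
    simp only [show n + 1 + 2 = n + 3 from rfl, show n + 1 + 1 = n + 2 from rfl] at hD3 hC3
    push_cast at hD3 hC3 hC2 e1 e2 ⊢
    have key : ((n : ℝ) + 3) * ((1 - x ^ 2) * gegD lam (n + 3) x)
        = ((n : ℝ) + 3) * (-((n : ℝ) + 2 + 1) * x * gegenbauer lam (n + 3) x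
          + ((n : ℝ) + 2 + 2 * lam) * gegenbauer lam (n + 2) x) := by
      linear_combination (1 - x ^ 2) * hD3 + 2 * ((n : ℝ) + 2 + lam) * x * e2
        - ((n : ℝ) + 1 + 2 * lam) * e1 + ((n : ℝ) + 3) * x * hC3
        - ((n : ℝ) + 1 + 2 * lam) * hC2
    exact mul_left_cancel₀ hne key
lemma geg_one {lam : ℝ} (hlam : 0 < lam) (n : ℕ) :
    gegenbauer lam n 1 * (Real.Gamma ((n : ℝ) + 1) * Real.Gamma (2 * lam))
      = Real.Gamma ((n : ℝ) + 2 * lam) := by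
  induction n using Nat.twoStepInduction with
  | zero => simp [gegenbauer, Real.Gamma_one]
  | one =>
    have h2l : (2 * lam) ≠ 0 := by positivity
    have := Real.Gamma_add_one h2l
    simp only [gegenbauer, Nat.cast_one]
    rw [show (1 : ℝ) + 2 * lam = 2 * lam + 1 by ring, this, show (1:ℝ)+1 = 2 by norm_num,
      Real.Gamma_two]
    ring
  | more n ih1 ih2 =>
    have hC := geg_rec lam n 1
    have hg1 : Real.Gamma ((n : ℝ) + 1 + 1) = ((n : ℝ) + 1) * Real.Gamma ((n : ℝ) + 1) :=
      Real.Gamma_add_one (by positivity)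
    have hg2 : Real.Gamma ((n : ℝ) + 2 + 1) = ((n : ℝ) + 2) * Real.Gamma ((n : ℝ) + 2) :=
      Real.Gamma_add_one (by positivity)
    have hg2' : Real.Gamma ((n : ℝ) + 2) = ((n : ℝ) + 1) * Real.Gamma ((n : ℝ) + 1) := by
      rw [show (n : ℝ) + 2 = ((n : ℝ) + 1) + 1 by ring]
      exact Real.Gamma_add_one (by positivity)
    have hG1 : Real.Gamma ((n : ℝ) + 1 + 2 * lam) = ((n : ℝ) + 2 * lam)
        * Real.Gamma ((n : ℝ) + 2 * lam) := by
      rw [show (n : ℝ) + 1 + 2 * lam = ((n : ℝ) + 2 * lam) + 1 by ring]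
      exact Real.Gamma_add_one (by positivity)
    have hG2 : Real.Gamma ((n : ℝ) + 2 + 2 * lam) = ((n : ℝ) + 1 + 2 * lam)
        * Real.Gamma ((n : ℝ) + 1 + 2 * lam) := by
      rw [show (n : ℝ) + 2 + 2 * lam = ((n : ℝ) + 1 + 2 * lam) + 1 by ring]
      exact Real.Gamma_add_one (by positivity)
    push_cast at ih1 ih2 ⊢
    have hne : ((n : ℝ) + 2) ≠ 0 := by positivity
    rw [hg1, hG1] at ih2
    have key : ((n : ℝ) + 2) * (gegenbauer lam (n + 2) 1
          * (Real.Gamma ((n : ℝ) + 2 + 1) * Real.Gamma (2 * lam)))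
        = ((n : ℝ) + 2) * Real.Gamma ((n : ℝ) + 2 + 2 * lam) := by
      rw [hg2, hG2, hG1, hg2']
      linear_combination (((n:ℝ)+2) * ((n:ℝ)+1) * Real.Gamma ((n:ℝ)+1) * Real.Gamma (2*lam)) * hC
        + 2 * ((n:ℝ)+1+lam) * ((n:ℝ)+2) * ih2 - ((n:ℝ)+2) * ((n:ℝ)+2*lam) * ((n:ℝ)+1) * ih1
    exact mul_left_cancel₀ hne key

lemma cont_rpow_one_add (p : ℝ) (hp : 0 ≤ p) : Continuous fun x : ℝ => (1 + x) ^ p :=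
  (Real.continuous_rpow_const hp).comp (by continuity)

lemma cont_rpow_one_sub (p : ℝ) (hp : 0 ≤ p) : Continuous fun x : ℝ => (1 - x) ^ p :=
  (Real.continuous_rpow_const hp).comp (by continuity)

lemma intcongr {f g : ℝ → ℝ} (h : ∀ x ∈ Set.Ioo (-1:ℝ) 1, f x = g x) :
    ∫ x in (-1:ℝ)..1, f x = ∫ x in (-1:ℝ)..1, g x := by
  apply intervalIntegral.integral_congr_ae
  have h1 : ∀ᵐ x : ℝ, x ≠ 1 := by
    rw [MeasureTheory.ae_iff]
    simpa using Real.volume_singleton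
  filter_upwards [h1] with x hx hmem
  rw [Set.uIoc_of_le (by norm_num : (-1:ℝ) ≤ 1)] at hmem
  exact h x ⟨hmem.1, lt_of_le_of_ne hmem.2 hx⟩

lemma betaReal {a b : ℝ} (ha : 0 < a) (hb : 0 < b) :
    ∫ x in (0:ℝ)..1, x ^ (a-1) * (1-x) ^ (b-1)
      = Real.Gamma a * Real.Gamma b / Real.Gamma (a+b) := by
  have h1 : Complex.betaIntegral a b
      = ((∫ x in (0:ℝ)..1, x ^ (a-1) * (1-x) ^ (b-1) : ℝ) : ℂ) := by
    rw [Complex.betaIntegral, ← intervalIntegral.integral_ofReal]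
    apply intervalIntegral.integral_congr
    intro x hx
    rw [Set.uIcc_of_le (by norm_num : (0:ℝ) ≤ 1)] at hx
    push_cast
    rw [Complex.ofReal_cpow hx.1, Complex.ofReal_cpow (by linarith [hx.2] : (0:ℝ) ≤ 1 - x)]
    push_cast
    ring
  have h2 := Complex.Gamma_mul_Gamma_eq_betaIntegral
    (show 0 < (a:ℂ).re by simpa using ha) (show 0 < (b:ℂ).re by simpa using hb)
  rw [h1, show (a:ℂ) + (b:ℂ) = ((a+b : ℝ) : ℂ) by push_cast; ring] at h2
  rw [Complex.Gamma_ofReal, Complex.Gamma_ofReal, Complex.Gamma_ofReal] at h2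
  have h3 : Real.Gamma a * Real.Gamma b
      = Real.Gamma (a+b) * ∫ x in (0:ℝ)..1, x ^ (a-1) * (1-x) ^ (b-1) := by
    exact_mod_cast h2
  have hG : Real.Gamma (a+b) ≠ 0 := (Real.Gamma_pos_of_pos (by linarith)).ne'
  field_simp [hG] at h3 ⊢
  linarith [h3]

lemma beta2 {a b : ℝ} (ha : 0 < a) (hb : 0 < b) :
    ∫ x in (-1:ℝ)..1, (1+x) ^ (a-1) * (1-x) ^ (b-1)
      = 2 ^ (a+b-1) * Real.Gamma a * Real.Gamma b / Real.Gamma (a+b) := by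
  have hsub := intervalIntegral.integral_comp_mul_add
    (f := fun x : ℝ => (1+x) ^ (a-1) * (1-x) ^ (b-1)) (a := 0) (b := 1)
    (c := 2) (by norm_num) (-1)
  rw [show (2:ℝ)*0 + -1 = -1 by norm_num, show (2:ℝ)*1 + -1 = 1 by norm_num,
    smul_eq_mul] at hsub
  have key : ∫ t in (0:ℝ)..1, (1 + (2*t + -1)) ^ (a-1) * (1 - (2*t + -1)) ^ (b-1)
      = 2 ^ (a-1) * 2 ^ (b-1) * ∫ t in (0:ℝ)..1, t ^ (a-1) * (1-t) ^ (b-1) := by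
    rw [← intervalIntegral.integral_const_mul]
    apply intervalIntegral.integral_congr
    intro t ht
    rw [Set.uIcc_of_le (by norm_num : (0:ℝ) ≤ 1)] at ht
    have h1 : (1 : ℝ) + (2*t + -1) = 2 * t := by ring
    have h2 : (1 : ℝ) - (2*t + -1) = 2 * (1 - t) := by ring
    simp only
    rw [h1, h2, Real.mul_rpow (by norm_num) ht.1,
      Real.mul_rpow (by norm_num) (by linarith [ht.2])]
    ring
  rw [key, betaReal ha hb] at hsub
  have hfin : ∫ x in (-1:ℝ)..1, (1+x) ^ (a-1) * (1-x) ^ (b-1)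
      = 2 * (2 ^ (a-1) * 2 ^ (b-1) * (Real.Gamma a * Real.Gamma b / Real.Gamma (a+b))) := by
    linarith [hsub]
  rw [hfin, show (2:ℝ) ^ (a+b-1) = 2 * (2 ^ (a-1) * 2 ^ (b-1)) by
    rw [show a+b-1 = 1+(a-1)+(b-1) by ring, Real.rpow_add (by norm_num : (0:ℝ)<2),
      Real.rpow_add (by norm_num : (0:ℝ)<2), Real.rpow_one]
    ring]
  ring

noncomputable def gegI (lam : ℝ) (n : ℕ) : ℝ :=
  ∫ x in (-1:ℝ)..1, (1+x) ^ lam * (1-x) ^ (lam-1) * gegenbauer lam n x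

noncomputable def gegJ (lam : ℝ) (n : ℕ) : ℝ :=
  ∫ x in (-1:ℝ)..1, (1+x) ^ lam * (1-x) ^ lam * gegenbauer lam n x

section Integrals

variable {lam : ℝ}

lemma contW1 (hlam : 1 ≤ lam) : Continuous fun x : ℝ => (1+x) ^ lam * (1-x) ^ (lam-1) :=
  (cont_rpow_one_add lam (by linarith)).mul (cont_rpow_one_sub _ (by linarith))

lemma contW2 (hlam : 1 ≤ lam) : Continuous fun x : ℝ => (1+x) ^ lam * (1-x) ^ lam :=
  (cont_rpow_one_add lam (by linarith)).mul (cont_rpow_one_sub _ (by linarith))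

lemma intW1 (hlam : 1 ≤ lam) {g : ℝ → ℝ} (hg : Continuous g) :
    IntervalIntegrable (fun x => (1+x) ^ lam * (1-x) ^ (lam-1) * g x)
      MeasureTheory.volume (-1 : ℝ) 1 :=
  ((contW1 hlam).mul hg).intervalIntegrable _ _

lemma intW2 (hlam : 1 ≤ lam) {g : ℝ → ℝ} (hg : Continuous g) :
    IntervalIntegrable (fun x => (1+x) ^ lam * (1-x) ^ lam * g x)
      MeasureTheory.volume (-1 : ℝ) 1 :=
  ((contW2 hlam).mul hg).intervalIntegrable _ _

/-- `x * W1 = W1 - W2` pointwise on the open interval. -/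
lemma xW1_eq (hlam : 1 ≤ lam) {x : ℝ} (hx : x ∈ Set.Ioo (-1:ℝ) 1) :
    x * ((1+x) ^ lam * (1-x) ^ (lam-1))
      = (1+x) ^ lam * (1-x) ^ (lam-1) - (1+x) ^ lam * (1-x) ^ lam := by
  have hv : (1:ℝ) - x ≠ 0 := by have := hx.2; intro h; nlinarith
  have : (1-x) ^ lam = (1-x) ^ (lam-1) * (1-x) := by
    rw [show lam = (lam - 1) + 1 by ring, Real.rpow_add_one hv]
    ring_nf
  rw [this]; ring

/-- The integral `∫ x*W1*g`. -/
lemma int_xW1 (hlam : 1 ≤ lam) (n : ℕ) :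
    ∫ x in (-1:ℝ)..1, x * ((1+x) ^ lam * (1-x) ^ (lam-1)) * gegenbauer lam n x
      = gegI lam n - gegJ lam n := by
  rw [gegI, gegJ, ← intervalIntegral.integral_sub (intW1 hlam (geg_cont lam n))
    (intW2 hlam (geg_cont lam n))]
  apply intcongr
  intro x hx
  rw [xW1_eq hlam hx]
  ring

lemma gegI_zero (hlam : 1 ≤ lam) :
    gegI lam 0 = Real.sqrt π * Real.Gamma lam / Real.Gamma (lam + 1/2) := by
  have hb := beta2 (a := lam + 1) (b := lam) (by linarith) (by linarith)
  rw [show lam + 1 - 1 = lam by ring, show lam + 1 + lam = 2 * lam + 1 by ring] at hb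
  have h0 : gegI lam 0 = ∫ x in (-1:ℝ)..1, (1+x) ^ lam * (1-x) ^ (lam-1) := by
    rw [gegI]
    apply intcongr
    intro x _
    simp [gegenbauer]
  rw [h0, hb]
  have hG1 : Real.Gamma (lam + 1) = lam * Real.Gamma lam :=
    Real.Gamma_add_one (by positivity)
  have hH1 : Real.Gamma (2 * lam + 1) = 2 * lam * Real.Gamma (2 * lam) :=
    Real.Gamma_add_one (by positivity)
  have hdup := Real.Gamma_mul_Gamma_add_half lam
  have hpow : (2:ℝ) ^ (2 * lam) * (2:ℝ) ^ (1 - 2 * lam) = 2 := by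
    rw [← Real.rpow_add (by norm_num)]; norm_num
  rw [show 2 * lam + 1 - 1 = 2 * lam by ring, hG1, hH1]
  have hne1 : Real.Gamma (2 * lam) ≠ 0 := (Real.Gamma_pos_of_pos (by linarith)).ne'
  have hne2 : Real.Gamma (lam + 1/2) ≠ 0 := (Real.Gamma_pos_of_pos (by linarith)).ne'
  have hlam0 : lam ≠ 0 := by linarith
  set G1 := Real.Gamma lam with hG1d
  set G2 := Real.Gamma (lam + 1/2) with hG2d
  set H := Real.Gamma (2 * lam) with hHd
  set S := Real.sqrt π with hSd
  set P := (2:ℝ) ^ (2 * lam) with hPd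
  set Q := (2:ℝ) ^ (1 - 2 * lam) with hQd
  rw [div_eq_div_iff (by positivity) hne2]
  linear_combination (P * lam * G1) * hdup + (lam * G1 * H * S) * hpow

lemma gegI_one (hlam : 1 ≤ lam) :
    gegI lam 1 = Real.sqrt π * Real.Gamma (lam + 1) / Real.Gamma (lam + 3/2) := by
  have hA := beta2 (a := lam + 1) (b := lam) (by linarith) (by linarith)
  rw [show lam + 1 - 1 = lam by ring, show lam + 1 + lam = 2 * lam + 1 by ring] at hA
  have hB := beta2 (a := lam + 1) (b := lam + 1) (by linarith) (by linarith)
  rw [show lam + 1 - 1 = lam by ring, show lam + 1 + (lam + 1) = 2 * lam + 2 by ring] at hB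
  have h0 : gegI lam 1 = 2 * lam * ((∫ x in (-1:ℝ)..1, (1+x) ^ lam * (1-x) ^ (lam-1))
      - ∫ x in (-1:ℝ)..1, (1+x) ^ lam * (1-x) ^ lam) := by
    rw [gegI, ← intervalIntegral.integral_sub
      (((contW1 hlam).intervalIntegrable _ _)) (((contW2 hlam).intervalIntegrable _ _)),
      ← intervalIntegral.integral_const_mul]
    apply intcongr
    intro x hx
    have h1 : gegenbauer lam 1 x = 2 * lam * x := rfl
    rw [h1]
    have := xW1_eq hlam hx
    nlinarith [this]
  rw [h0, hA, hB]
  have hG1 : Real.Gamma (lam + 1) = lam * Real.Gamma lam :=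
    Real.Gamma_add_one (by positivity)
  have hG32 : Real.Gamma (lam + 3/2) = (lam + 1/2) * Real.Gamma (lam + 1/2) := by
    rw [show lam + 3/2 = (lam + 1/2) + 1 by ring]
    exact Real.Gamma_add_one (by positivity)
  have hH1 : Real.Gamma (2 * lam + 1) = 2 * lam * Real.Gamma (2 * lam) :=
    Real.Gamma_add_one (by positivity)
  have hH2 : Real.Gamma (2 * lam + 2) = (2 * lam + 1) * (2 * lam * Real.Gamma (2 * lam)) := by
    rw [show 2 * lam + 2 = (2 * lam + 1) + 1 by ring, Real.Gamma_add_one (by positivity), hH1]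
  have hdup := Real.Gamma_mul_Gamma_add_half lam
  have hpow : (2:ℝ) ^ (2 * lam) * (2:ℝ) ^ (1 - 2 * lam) = 2 := by
    rw [← Real.rpow_add (by norm_num)]; norm_num
  have hpow2 : (2:ℝ) ^ (2 * lam + 1) = (2:ℝ) ^ (2 * lam) * 2 := by
    rw [Real.rpow_add (by norm_num), Real.rpow_one]
  have hne1 : Real.Gamma (2 * lam) ≠ 0 := (Real.Gamma_pos_of_pos (by linarith)).ne'
  have hne2 : Real.Gamma (lam + 1/2) ≠ 0 := (Real.Gamma_pos_of_pos (by linarith)).ne'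
  have hlam0 : lam ≠ 0 := by linarith
  have h2l1 : (2 * lam + 1) ≠ 0 := by positivity
  rw [show 2 * lam + 1 - 1 = 2 * lam by ring, show 2 * lam + 2 - 1 = 2 * lam + 1 by ring,
    hG1, hG32, hH1, hH2, hpow2]
  have hne1 : Real.Gamma (2 * lam) ≠ 0 := (Real.Gamma_pos_of_pos (by linarith)).ne'
  have hne2 : Real.Gamma (lam + 1/2) ≠ 0 := (Real.Gamma_pos_of_pos (by linarith)).ne'
  have hlam0 : lam ≠ 0 := by linarith
  set G1 := Real.Gamma lam with hG1d
  set G2 := Real.Gamma (lam + 1/2) with hG2d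
  set H := Real.Gamma (2 * lam) with hHd
  set S := Real.sqrt π with hSd
  set P := (2:ℝ) ^ (2 * lam) with hPd
  set Q := (2:ℝ) ^ (1 - 2 * lam) with hQd
  have step1 : 2 * lam * (P * (lam * G1) * G1 / (2 * lam * H)
      - P * 2 * (lam * G1) * (lam * G1) / ((2 * lam + 1) * (2 * lam * H)))
      = P * lam * G1 ^ 2 / ((2 * lam + 1) * H) := by
    field_simp
    ring
  rw [step1, div_eq_div_iff (by positivity) (by positivity)]
  linear_combination (P * lam * (lam + 1/2) * G1) * hdup + (lam * (lam + 1/2) * G1 * H * S) * hpow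

end Integrals

section Rec

variable {lam : ℝ}

lemma contxW1C (hlam : 1 ≤ lam) (n : ℕ) :
    Continuous fun x : ℝ => x * ((1+x) ^ lam * (1-x) ^ (lam-1)) * gegenbauer lam n x :=
  (continuous_id.mul (contW1 hlam)).mul (geg_cont lam n)

lemma gegR1 (hlam : 1 ≤ lam) (n : ℕ) :
    ((n:ℝ) + 2) * gegI lam (n + 2)
      = 2 * ((n:ℝ) + 1 + lam) * (gegI lam (n + 1) - gegJ lam (n + 1))
        - ((n:ℝ) + 2 * lam) * gegI lam n := by
  have key : gegI lam (n + 2)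
      = (2 * ((n:ℝ) + 1 + lam) * (∫ x in (-1:ℝ)..1,
            x * ((1+x) ^ lam * (1-x) ^ (lam-1)) * gegenbauer lam (n+1) x)
          - ((n:ℝ) + 2 * lam) * gegI lam n) / ((n:ℝ) + 2) := by
    rw [gegI, gegI, ← intervalIntegral.integral_const_mul, ← intervalIntegral.integral_const_mul,
      ← intervalIntegral.integral_sub, ← intervalIntegral.integral_div]
    · apply intcongr
      intro x _
      have hrec := geg_rec lam n x
      have hne : ((n:ℝ) + 2) ≠ 0 := by positivity
      field_simp
      linear_combination ((1+x) ^ lam * (1-x) ^ (lam-1)) * hrec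
    · exact ((contxW1C hlam (n+1)).intervalIntegrable _ _).const_mul _
    · exact (intW1 hlam (geg_cont lam n)).const_mul _
  rw [key, int_xW1 hlam]
  field_simp

lemma gegR2 (hlam : 1 ≤ lam) (n : ℕ) :
    ((n:ℝ) + 1 + 2 * lam) * gegI lam (n + 1)
      = ((n:ℝ) + 2 * lam) * gegI lam n + ((n:ℝ) + 2 * lam + 2) * gegJ lam (n + 1) := by
  have c1 := cont_rpow_one_add (lam+1) (by linarith : (0:ℝ) ≤ lam + 1)
  have c2 := cont_rpow_one_sub lam (by linarith : (0:ℝ) ≤ lam)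
  have c3 := cont_rpow_one_add lam (by linarith : (0:ℝ) ≤ lam)
  have c4 := cont_rpow_one_sub (lam-1) (by linarith : (0:ℝ) ≤ lam - 1)
  have cD := gegD_cont lam (n+1)
  have cC := geg_cont lam (n+1)
  have hFderiv : ∀ x ∈ Set.uIcc (-1:ℝ) 1, HasDerivAt
      (fun y => gegenbauer lam (n+1) y * ((1+y) ^ (lam+1) * (1-y) ^ lam))
      (gegD lam (n+1) x * ((1+x) ^ (lam+1) * (1-x) ^ lam)
        + gegenbauer lam (n+1) x * ((lam+1) * (1+x) ^ lam * (1-x) ^ lam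
          - lam * ((1+x) ^ (lam+1) * (1-x) ^ (lam-1)))) x := by
    intro x _
    have h1 : HasDerivAt (fun y : ℝ => (1+y) ^ (lam+1)) ((lam+1) * (1+x) ^ lam) x := by
      have hin : HasDerivAt (fun y : ℝ => 1 + y) 1 x := by
        simpa using (hasDerivAt_id x).const_add 1
      have := (Real.hasDerivAt_rpow_const (x := 1 + x) (p := lam + 1)
        (Or.inr (by linarith))).comp x hin
      simpa [Function.comp_def, show lam + 1 - 1 = lam by ring] using this
    have h2 : HasDerivAt (fun y : ℝ => (1-y) ^ lam) (-(lam * (1-x) ^ (lam-1))) x := by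
      have hin : HasDerivAt (fun y : ℝ => 1 - y) (-1) x := by
        exact (hasDerivAt_id x).const_sub 1
      have := (Real.hasDerivAt_rpow_const (x := 1 - x) (p := lam)
        (Or.inr hlam)).comp x hin
      simpa [Function.comp_def] using this
    have := (geg_hasDerivAt lam (n+1) x).fun_mul (h1.fun_mul h2)
    refine this.congr_deriv ?_
    ring
  have hFint : IntervalIntegrable (fun x => gegD lam (n+1) x * ((1+x) ^ (lam+1) * (1-x) ^ lam)
        + gegenbauer lam (n+1) x * ((lam+1) * (1+x) ^ lam * (1-x) ^ lam
          - lam * ((1+x) ^ (lam+1) * (1-x) ^ (lam-1)))) MeasureTheory.volume (-1:ℝ) 1 :=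
    (((cD.mul (c1.mul c2)).add (cC.mul (((continuous_const.mul c3).mul c2).sub
      (continuous_const.mul (c1.mul c4))))).intervalIntegrable _ _)
  have hparts := intervalIntegral.integral_eq_sub_of_hasDerivAt hFderiv hFint
  have hbound : gegenbauer lam (n+1) 1 * ((1+(1:ℝ)) ^ (lam+1) * (1-(1:ℝ)) ^ lam)
      - gegenbauer lam (n+1) (-1) * ((1+(-1:ℝ)) ^ (lam+1) * (1-(-1:ℝ)) ^ lam) = 0 := by
    rw [show (1:ℝ) - 1 = 0 by ring, show (1:ℝ) + -1 = 0 by ring,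
      Real.zero_rpow (by linarith : lam ≠ 0), Real.zero_rpow (by linarith : lam + 1 ≠ 0)]
    ring
  rw [hbound] at hparts
  -- split the integral
  have hsplit : (∫ x in (-1:ℝ)..1, (gegD lam (n+1) x * ((1+x) ^ (lam+1) * (1-x) ^ lam)
        + gegenbauer lam (n+1) x * ((lam+1) * (1+x) ^ lam * (1-x) ^ lam
          - lam * ((1+x) ^ (lam+1) * (1-x) ^ (lam-1)))))
      = (∫ x in (-1:ℝ)..1, gegD lam (n+1) x * ((1+x) ^ (lam+1) * (1-x) ^ lam))
        + ((lam+1) * gegJ lam (n+1)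
          - lam * ∫ x in (-1:ℝ)..1,
              gegenbauer lam (n+1) x * ((1+x) ^ (lam+1) * (1-x) ^ (lam-1))) := by
    rw [intervalIntegral.integral_add (f := fun x => gegD lam (n+1) x * ((1+x) ^ (lam+1) * (1-x) ^ lam))
      (g := fun x => gegenbauer lam (n+1) x * ((lam+1) * (1+x) ^ lam * (1-x) ^ lam
        - lam * ((1+x) ^ (lam+1) * (1-x) ^ (lam-1)))) ((cD.mul (c1.mul c2)).intervalIntegrable _ _)
      ((cC.mul (((continuous_const.mul c3).mul c2).sub
        (continuous_const.mul (c1.mul c4)))).intervalIntegrable _ _)]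
    congr 1
    have e2 : (∫ x in (-1:ℝ)..1, gegenbauer lam (n+1) x * ((lam+1) * (1+x) ^ lam * (1-x) ^ lam
          - lam * ((1+x) ^ (lam+1) * (1-x) ^ (lam-1))))
        = ∫ x in (-1:ℝ)..1, ((lam+1) * ((1+x) ^ lam * (1-x) ^ lam * gegenbauer lam (n+1) x)
          - lam * (gegenbauer lam (n+1) x * ((1+x) ^ (lam+1) * (1-x) ^ (lam-1)))) := by
      apply intcongr
      intro x _
      ring
    rw [e2, intervalIntegral.integral_sub
      (f := fun x => (lam+1) * ((1+x) ^ lam * (1-x) ^ lam * gegenbauer lam (n+1) x))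
      (g := fun x => lam * (gegenbauer lam (n+1) x * ((1+x) ^ (lam+1) * (1-x) ^ (lam-1))))
      ((continuous_const.mul ((c3.mul c2).mul cC)).intervalIntegrable _ _)
      ((continuous_const.mul (cC.mul (c1.mul c4))).intervalIntegrable _ _),
      intervalIntegral.integral_const_mul, intervalIntegral.integral_const_mul, gegJ]
  -- evaluate T1
  have hT1 : (∫ x in (-1:ℝ)..1, gegD lam (n+1) x * ((1+x) ^ (lam+1) * (1-x) ^ lam))
      = -((n:ℝ)+1) * (gegI lam (n+1) - gegJ lam (n+1)) + ((n:ℝ) + 2*lam) * gegI lam n := by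
    have e1 : (∫ x in (-1:ℝ)..1, gegD lam (n+1) x * ((1+x) ^ (lam+1) * (1-x) ^ lam))
        = ∫ x in (-1:ℝ)..1, (-((n:ℝ)+1) * (x * ((1+x) ^ lam * (1-x) ^ (lam-1))
            * gegenbauer lam (n+1) x)
          + ((n:ℝ) + 2*lam) * ((1+x) ^ lam * (1-x) ^ (lam-1) * gegenbauer lam n x)) := by
      apply intcongr
      intro x hx
      have hu : (1:ℝ) + x ≠ 0 := by have := hx.1; intro h; nlinarith
      have hv : (1:ℝ) - x ≠ 0 := by have := hx.2; intro h; nlinarith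
      have hid := geg_deriv_id lam n x
      have hu1 : (1+x) ^ (lam+1) = (1+x) ^ lam * (1+x) := Real.rpow_add_one hu lam
      have hv1 : (1-x) ^ lam = (1-x) ^ (lam-1) * (1-x) := by
        rw [show lam = (lam - 1) + 1 by ring, Real.rpow_add_one hv]
        ring_nf
      rw [hu1, hv1]
      linear_combination ((1+x) ^ lam * (1-x) ^ (lam-1)) * hid
    rw [e1, intervalIntegral.integral_add (((contxW1C hlam (n+1)).intervalIntegrable _ _).const_mul _)
      ((intW1 hlam (geg_cont lam n)).const_mul _), intervalIntegral.integral_const_mul,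
      intervalIntegral.integral_const_mul, int_xW1 hlam]
    rfl
  -- evaluate T3
  have hT3 : (∫ x in (-1:ℝ)..1, gegenbauer lam (n+1) x * ((1+x) ^ (lam+1) * (1-x) ^ (lam-1)))
      = gegI lam (n+1) + (gegI lam (n+1) - gegJ lam (n+1)) := by
    have e1 : (∫ x in (-1:ℝ)..1, gegenbauer lam (n+1) x * ((1+x) ^ (lam+1) * (1-x) ^ (lam-1)))
        = ∫ x in (-1:ℝ)..1, ((1+x) ^ lam * (1-x) ^ (lam-1) * gegenbauer lam (n+1) x
          + x * ((1+x) ^ lam * (1-x) ^ (lam-1)) * gegenbauer lam (n+1) x) := by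
      apply intcongr
      intro x hx
      have hu : (1:ℝ) + x ≠ 0 := by have := hx.1; intro h; nlinarith
      have hu1 : (1+x) ^ (lam+1) = (1+x) ^ lam * (1+x) := Real.rpow_add_one hu lam
      rw [hu1]
      ring
    rw [e1, intervalIntegral.integral_add (intW1 hlam (geg_cont lam (n+1)))
      ((contxW1C hlam (n+1)).intervalIntegrable _ _), int_xW1 hlam]
    rfl
  rw [hsplit, hT1, hT3] at hparts
  linarith [hparts]

lemma gegR3 (hlam : 1 ≤ lam) (n : ℕ) :
    ((n:ℝ) + 2) * (((n:ℝ) + 2 * lam + 2) * gegI lam (n + 2))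
      = 2 * ((n:ℝ) + 1 + lam) * gegI lam (n + 1) + (n:ℝ) * ((n:ℝ) + 2 * lam) * gegI lam n := by
  have h1 := gegR1 hlam n
  have h2 := gegR2 hlam n
  linear_combination ((n:ℝ) + 2 * lam + 2) * h1 + 2 * ((n:ℝ) + 1 + lam) * h2

end Rec

lemma gegI_closed {lam : ℝ} (hlam : 1 ≤ lam) (m : ℕ) :
    gegI lam (2*m) = Real.Gamma ((m:ℝ)+1/2) * Real.Gamma ((m:ℝ)+lam)
        / (Real.Gamma ((m:ℝ)+1) * Real.Gamma ((m:ℝ)+lam+1/2))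
    ∧ gegI lam (2*m+1) = Real.Gamma ((m:ℝ)+1/2) * Real.Gamma ((m:ℝ)+lam+1)
        / (Real.Gamma ((m:ℝ)+1) * Real.Gamma ((m:ℝ)+lam+3/2)) := by
  induction m with
  | zero =>
    constructor
    · rw [show 2*0 = 0 from rfl, gegI_zero hlam]
      norm_num [Real.Gamma_one_half_eq, Real.Gamma_one]
    · rw [show 2*0+1 = 1 from rfl, gegI_one hlam]
      norm_num [Real.Gamma_one_half_eq, Real.Gamma_one]
  | succ m ih =>
    obtain ⟨hE, hO⟩ := ih
    have hm : (0:ℝ) ≤ (m:ℝ) := Nat.cast_nonneg m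
    have gA : Real.Gamma ((m:ℝ)+1+1/2) = ((m:ℝ)+1/2) * Real.Gamma ((m:ℝ)+1/2) := by
      rw [show (m:ℝ)+1+1/2 = ((m:ℝ)+1/2)+1 by ring]; exact Real.Gamma_add_one (by positivity)
    have gB : Real.Gamma ((m:ℝ)+1+1) = ((m:ℝ)+1) * Real.Gamma ((m:ℝ)+1) :=
      Real.Gamma_add_one (by positivity)
    have gC : Real.Gamma ((m:ℝ)+1+lam) = ((m:ℝ)+lam) * Real.Gamma ((m:ℝ)+lam) := by
      rw [show (m:ℝ)+1+lam = ((m:ℝ)+lam)+1 by ring]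
      exact Real.Gamma_add_one (by positivity)
    have gD : Real.Gamma ((m:ℝ)+1+lam+1/2) = ((m:ℝ)+lam+1/2) * Real.Gamma ((m:ℝ)+lam+1/2) := by
      rw [show (m:ℝ)+1+lam+1/2 = ((m:ℝ)+lam+1/2)+1 by ring]
      exact Real.Gamma_add_one (by positivity)
    have gE : Real.Gamma ((m:ℝ)+lam+1) = ((m:ℝ)+lam) * Real.Gamma ((m:ℝ)+lam) :=
      Real.Gamma_add_one (by positivity)
    have gF : Real.Gamma ((m:ℝ)+lam+3/2) = ((m:ℝ)+lam+1/2) * Real.Gamma ((m:ℝ)+lam+1/2) := by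
      rw [show (m:ℝ)+lam+3/2 = ((m:ℝ)+lam+1/2)+1 by ring]
      exact Real.Gamma_add_one (by positivity)
    have gG : Real.Gamma ((m:ℝ)+1+lam+1) = ((m:ℝ)+1+lam) * (((m:ℝ)+lam)
        * Real.Gamma ((m:ℝ)+lam)) := by
      rw [Real.Gamma_add_one (by positivity), gC]
    have gH : Real.Gamma ((m:ℝ)+1+lam+3/2) = ((m:ℝ)+1+lam+1/2) * (((m:ℝ)+lam+1/2)
        * Real.Gamma ((m:ℝ)+lam+1/2)) := by
      rw [show (m:ℝ)+1+lam+3/2 = ((m:ℝ)+1+lam+1/2)+1 by ring,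
        Real.Gamma_add_one (by positivity), gD]
    have nA : Real.Gamma ((m:ℝ)+1/2) ≠ 0 := (Real.Gamma_pos_of_pos (by positivity)).ne'
    have nB : Real.Gamma ((m:ℝ)+1) ≠ 0 := (Real.Gamma_pos_of_pos (by positivity)).ne'
    have nC : Real.Gamma ((m:ℝ)+lam) ≠ 0 := (Real.Gamma_pos_of_pos (by positivity)).ne'
    have nD : Real.Gamma ((m:ℝ)+lam+1/2) ≠ 0 := (Real.Gamma_pos_of_pos (by positivity)).ne'
    have h3e := gegR3 hlam (2*m)
    rw [show 2*m+2 = 2*(m+1) by ring] at h3e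
    have h3o := gegR3 hlam (2*m+1)
    rw [show 2*m+1+2 = 2*(m+1)+1 by ring, show 2*m+1+1 = 2*(m+1) by ring] at h3o
    rw [hE, hO] at h3e
    push_cast at h3e h3o ⊢
    have hIe : gegI lam (2*(m+1)) = Real.Gamma ((m:ℝ)+1+1/2) * Real.Gamma ((m:ℝ)+1+lam)
        / (Real.Gamma ((m:ℝ)+1+1) * Real.Gamma ((m:ℝ)+1+lam+1/2)) := by
      have hne : (2*(m:ℝ)+2) * (2*(m:ℝ)+2*lam+2) ≠ 0 := by positivity
      have key : (2*(m:ℝ)+2) * ((2*(m:ℝ)+2*lam+2) * (Real.Gamma ((m:ℝ)+1+1/2)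
            * Real.Gamma ((m:ℝ)+1+lam)
            / (Real.Gamma ((m:ℝ)+1+1) * Real.Gamma ((m:ℝ)+1+lam+1/2))))
          = 2*(2*(m:ℝ)+1+lam) * (Real.Gamma ((m:ℝ)+1/2) * Real.Gamma ((m:ℝ)+lam+1)
            / (Real.Gamma ((m:ℝ)+1) * Real.Gamma ((m:ℝ)+lam+3/2)))
            + 2*(m:ℝ)*(2*(m:ℝ)+2*lam) * (Real.Gamma ((m:ℝ)+1/2) * Real.Gamma ((m:ℝ)+lam)
            / (Real.Gamma ((m:ℝ)+1) * Real.Gamma ((m:ℝ)+lam+1/2))) := by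
        rw [gA, gB, gC, gD, gE, gF]
        field_simp
        ring
      have hmul : ((2*(m:ℝ)+2) * (2*(m:ℝ)+2*lam+2)) * gegI lam (2*(m+1))
          = ((2*(m:ℝ)+2) * (2*(m:ℝ)+2*lam+2)) * (Real.Gamma ((m:ℝ)+1+1/2)
            * Real.Gamma ((m:ℝ)+1+lam)
            / (Real.Gamma ((m:ℝ)+1+1) * Real.Gamma ((m:ℝ)+1+lam+1/2))) := by
        linear_combination h3e - key
      exact mul_left_cancel₀ hne hmul
    refine ⟨hIe, ?_⟩
    rw [hIe, hO] at h3o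
    have hne : (2*(m:ℝ)+1+2) * (2*(m:ℝ)+1+2*lam+2) ≠ 0 := by positivity
    have key : (2*(m:ℝ)+1+2) * ((2*(m:ℝ)+1+2*lam+2) * (Real.Gamma ((m:ℝ)+1+1/2)
          * Real.Gamma ((m:ℝ)+1+lam+1)
          / (Real.Gamma ((m:ℝ)+1+1) * Real.Gamma ((m:ℝ)+1+lam+3/2))))
        = 2*(2*(m:ℝ)+1+1+lam) * (Real.Gamma ((m:ℝ)+1+1/2) * Real.Gamma ((m:ℝ)+1+lam)
          / (Real.Gamma ((m:ℝ)+1+1) * Real.Gamma ((m:ℝ)+1+lam+1/2)))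
          + (2*(m:ℝ)+1)*(2*(m:ℝ)+1+2*lam) * (Real.Gamma ((m:ℝ)+1/2)
          * Real.Gamma ((m:ℝ)+lam+1)
          / (Real.Gamma ((m:ℝ)+1) * Real.Gamma ((m:ℝ)+lam+3/2))) := by
      rw [gA, gB, gC, gD, gE, gF, gG, gH]
      field_simp
      ring
    have hmul : ((2*(m:ℝ)+1+2) * (2*(m:ℝ)+1+2*lam+2)) * gegI lam (2*(m+1)+1)
        = ((2*(m:ℝ)+1+2) * (2*(m:ℝ)+1+2*lam+2)) * (Real.Gamma ((m:ℝ)+1+1/2)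
          * Real.Gamma ((m:ℝ)+1+lam+1)
          / (Real.Gamma ((m:ℝ)+1+1) * Real.Gamma ((m:ℝ)+1+lam+3/2))) := by
      linear_combination h3o - key
    exact mul_left_cancel₀ hne hmul

set_option maxHeartbeats 2000000 in
/-- Odd-order Gegenbauer coefficients of the stereographic kernel cot. -/
theorem gegenbauer_coeff_cot_odd (q : ℕ) (hq : 3 ≤ q) (k : ℕ) :
    (sphereArea (q : ℝ) / sphereArea ((q : ℝ) - 1) *
        (1 + 2 * ((2 * k + 1 : ℕ) : ℝ) / ((q : ℝ) - 1))⁻¹ *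
        gegenbauer (((q : ℝ) - 1) / 2) (2 * k + 1) 1)⁻¹ *
      ∫ x in (-1 : ℝ)..1,
        Real.cot (Real.arccos x / 2) * gegenbauer (((q : ℝ) - 1) / 2) (2 * k + 1) x *
          (1 - x ^ 2) ^ ((q : ℝ) / 2 - 1) =
    Real.Gamma ((k : ℝ) + 1 / 2) ^ 2 * Real.Gamma (((q : ℝ) - 1) / 2) ^ 2 /
        (2 * Real.pi * Real.Gamma ((k : ℝ) + (q : ℝ) / 2) ^ 2) *
      ((2 * (k : ℝ) + 1) * (4 * (k : ℝ) + (q : ℝ) + 1) / (2 * (k : ℝ) + (q : ℝ))) := by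
  have hq3 : (3:ℝ) ≤ (q:ℝ) := by exact_mod_cast hq
  set lam : ℝ := ((q:ℝ)-1)/2 with hlamdef
  have hlam : 1 ≤ lam := by rw [hlamdef]; linarith
  -- Step 1 : the integral equals `gegI lam (2k+1)`
  have hint : (∫ x in (-1:ℝ)..1, Real.cot (Real.arccos x / 2) * gegenbauer lam (2*k+1) x
      * (1-x^2) ^ ((q:ℝ)/2-1)) = gegI lam (2*k+1) := by
    rw [gegI]
    apply intcongr
    intro x hx
    obtain ⟨hx1, hx2⟩ := hx
    have hu : (0:ℝ) < 1 + x := by linarith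
    have hv : (0:ℝ) < 1 - x := by linarith
    have ha1 : 0 ≤ Real.arccos x := Real.arccos_nonneg x
    have ha2 : Real.arccos x ≤ π := Real.arccos_le_pi x
    have hcosarc : Real.cos (Real.arccos x) = x :=
      Real.cos_arccos (by linarith) (by linarith)
    have hcos : Real.cos (Real.arccos x / 2) = Real.sqrt ((1 + x)/2) := by
      rw [Real.cos_half (by linarith) ha2, hcosarc]
    have hsin : Real.sin (Real.arccos x / 2) = Real.sqrt ((1 - x)/2) := by
      rw [Real.sin_half_eq_sqrt ha1 (by linarith [Real.pi_pos]), hcosarc]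
    have hcot : Real.cot (Real.arccos x / 2) = (1+x) ^ ((1:ℝ)/2) / (1-x) ^ ((1:ℝ)/2) := by
      rw [Real.cot_eq_cos_div_sin, hcos, hsin, Real.sqrt_div hu.le, Real.sqrt_div hv.le,
        div_div_div_cancel_right₀ (show Real.sqrt 2 ≠ 0 by positivity),
        Real.sqrt_eq_rpow, Real.sqrt_eq_rpow]
    rw [hcot, show (1:ℝ) - x^2 = (1+x)*(1-x) by ring, Real.mul_rpow hu.le hv.le]
    have e1 : (1+x) ^ lam = (1+x) ^ ((1:ℝ)/2) * (1+x) ^ ((q:ℝ)/2-1) := by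
      rw [← Real.rpow_add hu]
      congr 1
      rw [hlamdef]
      ring
    have e2 : (1-x) ^ ((q:ℝ)/2-1) = (1-x) ^ (lam-1) * (1-x) ^ ((1:ℝ)/2) := by
      rw [← Real.rpow_add hv]
      congr 1
      rw [hlamdef]
      ring
    have hvne : (1-x) ^ ((1:ℝ)/2) ≠ 0 := (Real.rpow_pos_of_pos hv _).ne'
    rw [e1, e2]
    field_simp
  obtain ⟨-, hOv⟩ := gegI_closed hlam k
  have hk0 : (0:ℝ) ≤ (k:ℝ) := Nat.cast_nonneg k
  have hππ : Real.sqrt π * Real.sqrt π = π := Real.mul_self_sqrt Real.pi_pos.le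
  have hsπ : Real.sqrt π ≠ 0 := by positivity
  have h2lam : 2 * lam = (q:ℝ) - 1 := by rw [hlamdef]; ring
  -- canonical forms inside hOv
  have r1 : Real.Gamma ((k:ℝ)+lam+1) = Real.Gamma ((k:ℝ)+(q:ℝ)/2+1/2) := by
    rw [show (k:ℝ)+lam+1 = (k:ℝ)+(q:ℝ)/2+1/2 by rw [hlamdef]; ring]
  have r2 : Real.Gamma ((k:ℝ)+lam+3/2) = ((k:ℝ)+(q:ℝ)/2) * Real.Gamma ((k:ℝ)+(q:ℝ)/2) := by
    rw [show (k:ℝ)+lam+3/2 = ((k:ℝ)+(q:ℝ)/2)+1 by rw [hlamdef]; ring]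
    exact Real.Gamma_add_one (by positivity)
  rw [r1, r2] at hOv
  -- the Gegenbauer value at 1
  have hgone := geg_one (show 0 < lam by linarith) (2*k+1)
  push_cast at hgone
  rw [h2lam, show 2*(k:ℝ)+1+1 = 2*(k:ℝ)+2 by ring,
    show 2*(k:ℝ)+1+((q:ℝ)-1) = 2*(k:ℝ)+(q:ℝ) by ring] at hgone
  have nG2k2 : Real.Gamma (2*(k:ℝ)+2) ≠ 0 := (Real.Gamma_pos_of_pos (by positivity)).ne'
  have nGq1 : Real.Gamma ((q:ℝ)-1) ≠ 0 := (Real.Gamma_pos_of_pos (by linarith)).ne'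
  have hC1 : gegenbauer lam (2*k+1) 1
      = Real.Gamma (2*(k:ℝ)+(q:ℝ)) / (Real.Gamma (2*(k:ℝ)+2) * Real.Gamma ((q:ℝ)-1)) :=
    (eq_div_iff (mul_ne_zero nG2k2 nGq1)).mpr hgone
  -- area ratio
  have hS : sphereArea (q:ℝ) / sphereArea ((q:ℝ)-1)
      = Real.sqrt π * Real.Gamma ((q:ℝ)/2) / Real.Gamma ((q:ℝ)/2+1/2) := by
    rw [sphereArea, sphereArea, show ((q:ℝ)-1+1)/2 = (q:ℝ)/2 by ring,
      show ((q:ℝ)+1)/2 = (q:ℝ)/2+1/2 by ring, Real.rpow_add Real.pi_pos,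
      ← Real.sqrt_eq_rpow]
    have nπ : Real.pi ^ ((q:ℝ)/2) ≠ 0 := (Real.rpow_pos_of_pos Real.pi_pos _).ne'
    have nGa : Real.Gamma ((q:ℝ)/2+1/2) ≠ 0 := (Real.Gamma_pos_of_pos (by positivity)).ne'
    have nGb : Real.Gamma ((q:ℝ)/2) ≠ 0 := (Real.Gamma_pos_of_pos (by positivity)).ne'
    field_simp
  -- the normalisation factor
  have hq1 : (q:ℝ) - 1 ≠ 0 := by linarith
  have h4k : 4*(k:ℝ)+(q:ℝ)+1 ≠ 0 := by positivity
  have hT : (1 + 2 * ((2 * k + 1 : ℕ) : ℝ) / ((q:ℝ)-1))⁻¹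
      = ((q:ℝ)-1) / (4*(k:ℝ)+(q:ℝ)+1) := by
    push_cast
    rw [show 1 + 2*(2*(k:ℝ)+1)/((q:ℝ)-1) = (4*(k:ℝ)+(q:ℝ)+1)/((q:ℝ)-1) by
      field_simp; ring, inv_div]
  -- duplication formulas, solved forms
  have two_pos' : (0:ℝ) < 2 := by norm_num
  have hH : Real.Gamma ((q:ℝ)-1)
      = Real.Gamma lam * Real.Gamma ((q:ℝ)/2) * (2:ℝ)^((q:ℝ)-2) / Real.sqrt π := by
    have dup1 := Real.Gamma_mul_Gamma_add_half lam
    rw [h2lam, show lam + 1/2 = (q:ℝ)/2 by rw [hlamdef]; ring] at dup1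
    have einv : (2:ℝ)^(1-((q:ℝ)-1)) * (2:ℝ)^((q:ℝ)-2) = 1 := by
      rw [← Real.rpow_add two_pos', show (1-((q:ℝ)-1))+((q:ℝ)-2) = 0 by ring, Real.rpow_zero]
    rw [eq_div_iff hsπ]
    linear_combination (-((2:ℝ)^((q:ℝ)-2)))*dup1 - (Real.Gamma ((q:ℝ)-1) * Real.sqrt π)*einv
  have hG2k2 : Real.Gamma (2*(k:ℝ)+2)
      = Real.Gamma ((k:ℝ)+1) * (((k:ℝ)+1/2) * Real.Gamma ((k:ℝ)+1/2))
        * (2:ℝ)^(2*(k:ℝ)+1) / Real.sqrt π := by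
    have dup2 := Real.Gamma_mul_Gamma_add_half ((k:ℝ)+1)
    have gks : Real.Gamma (((k:ℝ)+1/2)+1) = ((k:ℝ)+1/2) * Real.Gamma ((k:ℝ)+1/2) :=
      Real.Gamma_add_one (by positivity)
    rw [show (k:ℝ)+1+1/2 = ((k:ℝ)+1/2)+1 by ring, gks,
      show 2*((k:ℝ)+1) = 2*(k:ℝ)+2 by ring] at dup2
    have einv : (2:ℝ)^(1-(2*(k:ℝ)+2)) * (2:ℝ)^(2*(k:ℝ)+1) = 1 := by
      rw [← Real.rpow_add two_pos', show (1-(2*(k:ℝ)+2))+(2*(k:ℝ)+1) = 0 by ring,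
        Real.rpow_zero]
    rw [eq_div_iff hsπ]
    linear_combination (-((2:ℝ)^(2*(k:ℝ)+1)))*dup2
      - (Real.Gamma (2*(k:ℝ)+2) * Real.sqrt π)*einv
  have hG2kq : Real.Gamma (2*(k:ℝ)+(q:ℝ))
      = Real.Gamma ((k:ℝ)+(q:ℝ)/2) * Real.Gamma ((k:ℝ)+(q:ℝ)/2+1/2)
        * ((2:ℝ)^((q:ℝ)-2) * (2:ℝ)^(2*(k:ℝ)+1)) / Real.sqrt π := by
    have dup3 := Real.Gamma_mul_Gamma_add_half ((k:ℝ)+(q:ℝ)/2)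
    rw [show 2*((k:ℝ)+(q:ℝ)/2) = 2*(k:ℝ)+(q:ℝ) by ring] at dup3
    have einv : (2:ℝ)^(1-(2*(k:ℝ)+(q:ℝ))) * ((2:ℝ)^((q:ℝ)-2) * (2:ℝ)^(2*(k:ℝ)+1)) = 1 := by
      rw [← Real.rpow_add two_pos', ← Real.rpow_add two_pos',
        show (1-(2*(k:ℝ)+(q:ℝ)))+(((q:ℝ)-2)+(2*(k:ℝ)+1)) = 0 by ring, Real.rpow_zero]
    rw [eq_div_iff hsπ]
    linear_combination (-((2:ℝ)^((q:ℝ)-2) * (2:ℝ)^(2*(k:ℝ)+1)))*dup3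
      - (Real.Gamma (2*(k:ℝ)+(q:ℝ)) * Real.sqrt π)*einv
  rw [hint, hOv, hS, hT, hC1, hH, hG2k2, hG2kq]
  set s := Real.sqrt π with hsdef
  rw [← hππ]
  have nGk12 : Real.Gamma ((k:ℝ)+1/2) ≠ 0 := (Real.Gamma_pos_of_pos (by positivity)).ne'
  have nGk1 : Real.Gamma ((k:ℝ)+1) ≠ 0 := (Real.Gamma_pos_of_pos (by positivity)).ne'
  have nGkq : Real.Gamma ((k:ℝ)+(q:ℝ)/2) ≠ 0 := (Real.Gamma_pos_of_pos (by positivity)).ne'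
  have nGkq2 : Real.Gamma ((k:ℝ)+(q:ℝ)/2+1/2) ≠ 0 :=
    (Real.Gamma_pos_of_pos (by positivity)).ne'
  have nGlam : Real.Gamma lam ≠ 0 := (Real.Gamma_pos_of_pos (by linarith)).ne'
  have nGq2 : Real.Gamma ((q:ℝ)/2) ≠ 0 := (Real.Gamma_pos_of_pos (by positivity)).ne'
  have nGq12 : Real.Gamma ((q:ℝ)/2+1/2) ≠ 0 := (Real.Gamma_pos_of_pos (by positivity)).ne'
  have hpA : (2:ℝ)^((q:ℝ)-2) ≠ 0 := (Real.rpow_pos_of_pos two_pos' _).ne'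
  have hpB : (2:ℝ)^(2*(k:ℝ)+1) ≠ 0 := (Real.rpow_pos_of_pos two_pos' _).ne'
  have hkq : (k:ℝ)+(q:ℝ)/2 ≠ 0 := by positivity
  have h2kq : 2*(k:ℝ)+(q:ℝ) ≠ 0 := by positivity
  have hk12 : (k:ℝ)+1/2 ≠ 0 := by positivity
  have hGq12lam : Real.Gamma ((q:ℝ)/2+1/2) = lam * Real.Gamma lam := by
    rw [show (q:ℝ)/2+1/2 = lam+1 by rw [hlamdef]; ring]
    exact Real.Gamma_add_one (by linarith)
  rw [hGq12lam]
  have hlamne : lam ≠ 0 := by linarith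
  field_simp
  ring
end

section
/- Gegenbauer coefficients of tan(θ/2): for integers k ≥ 0 and q ≥ 2, b_{2k,q}(ψ_tan) = α_{k,q}(4k+q−1) and b_{2k+1,q}(ψ_tan) = −α_{k,q}(2k+1)(4k+q+1)/(2k+q), where b_{k,q}(ψ_tan) := c_{k,q}^{−1} ∫_{−1}^{1} tan(arccos(x)/2) C_k^{(q−1)/2}(x)(1−x²)^{q/2−1}dx, α_{k,q} = Γ(k+1/2)²Γ((q−1)/2)²/(2πΓ(k+q/2)²), and c_{k,q} = (ω_q/ω_{q−1})(1+2k/(q−1))^{−1}C_k^{(q−1)/2}(1). -/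
open MeasureTheory intervalIntegral Real Set

namespace TanGeg

/-- derivative sequence of gegenbauer -/
noncomputable def gegD (lam : ℝ) : ℕ → ℝ → ℝ
  | 0 => fun _ => 0
  | 1 => fun _ => 2 * lam
  | (n + 2) => fun x => gegD lam n x + 2 * ((n : ℝ) + 1 + lam) * gegenbauer lam (n + 1) x

/-- second derivative sequence -/
noncomputable def gegD2 (lam : ℝ) : ℕ → ℝ → ℝ
  | 0 => fun _ => 0
  | 1 => fun _ => 0
  | (n + 2) => fun x => gegD2 lam n x + 2 * ((n : ℝ) + 1 + lam) * gegD lam (n + 1) x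

theorem geg_rec (lam : ℝ) (n : ℕ) (x : ℝ) :
    ((n : ℝ) + 2) * gegenbauer lam (n + 2) x =
      2 * ((n : ℝ) + 1 + lam) * x * gegenbauer lam (n + 1) x
        - ((n : ℝ) + 2 * lam) * gegenbauer lam n x := by
  have h : ((n : ℝ) + 2) ≠ 0 := by positivity
  rw [gegenbauer]
  field_simp

theorem continuous_geg (lam : ℝ) (n : ℕ) : Continuous (gegenbauer lam n) := by
  induction n using Nat.twoStepInduction with
  | zero => simpa [gegenbauer] using continuous_const
  | one => simpa [gegenbauer] using (by fun_prop : Continuous fun x : ℝ => 2 * lam * x)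
  | more n ih1 ih2 =>
    show Continuous (gegenbauer lam (n + 2))
    simp only [gegenbauer]
    fun_prop

theorem continuous_gegD (lam : ℝ) (n : ℕ) : Continuous (gegD lam n) := by
  induction n using Nat.twoStepInduction with
  | zero => simpa [gegD] using continuous_const
  | one => simpa [gegD] using continuous_const
  | more n ih1 ih2 =>
    show Continuous (gegD lam (n + 2))
    simp only [gegD]
    exact ih1.add ((continuous_const).mul (continuous_geg lam (n+1)))

/-- identity (a): x C_{n+1}' = C_n' + (n+1) C_{n+1} -/
theorem gegD_two (lam : ℝ) (n : ℕ) (x : ℝ) :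
    gegD lam (n + 2) x = gegD lam n x + 2 * ((n : ℝ) + 1 + lam) * gegenbauer lam (n + 1) x := rfl

theorem gegD2_two (lam : ℝ) (n : ℕ) (x : ℝ) :
    gegD2 lam (n + 2) x = gegD2 lam n x + 2 * ((n : ℝ) + 1 + lam) * gegD lam (n + 1) x := rfl

theorem gegD_aux (lam : ℝ) (n : ℕ) (x : ℝ) :
    x * gegD lam (n + 1) x = gegD lam n x + ((n : ℝ) + 1) * gegenbauer lam (n + 1) x := by
  induction n using Nat.twoStepInduction with
  | zero => simp [gegD, gegenbauer]; ring
  | one =>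
    show x * gegD lam (0 + 2) x = _
    simp [gegD, gegenbauer]; ring
  | more n ih1 _ =>
    have h3 : gegD lam (n + 2 + 1) x
        = gegD lam (n + 1) x + 2 * ((((n:ℕ) + 1 : ℕ) : ℝ) + 1 + lam) * gegenbauer lam (n + 2) x :=
      gegD_two lam (n + 1) x
    have h2 := gegD_two lam n x
    have r1 := geg_rec lam (n + 1) x
    push_cast at r1 h3 ih1 h2 ⊢
    linear_combination x * h3 + ih1 - h2 - r1

theorem hasDerivAt_geg (lam : ℝ) (n : ℕ) (x : ℝ) :
    HasDerivAt (gegenbauer lam n) (gegD lam n x) x := by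
  induction n using Nat.twoStepInduction generalizing x with
  | zero => simpa [gegenbauer, gegD] using (hasDerivAt_const x (1:ℝ))
  | one =>
    have : HasDerivAt (fun y : ℝ => 2 * lam * y) (2 * lam) x := by
      simpa using (hasDerivAt_id x).const_mul (2 * lam)
    simpa [gegenbauer, gegD] using this
  | more n ih1 ih2 =>
    have h0 := ((((hasDerivAt_id x).mul (ih2 x)).const_mul
        (2 * ((n : ℝ) + 1 + lam))).sub ((ih1 x).const_mul ((n : ℝ) + 2 * lam))).div_const
        ((n : ℝ) + 2)
    have hfun : gegenbauer lam (n + 2) = fun y : ℝ =>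
        (2 * ((n : ℝ) + 1 + lam) * y * gegenbauer lam (n + 1) y
          - ((n : ℝ) + 2 * lam) * gegenbauer lam n y) / ((n : ℝ) + 2) := rfl
    rw [hfun, gegD_two]
    have hfe : (fun y : ℝ =>
        (2 * ((n : ℝ) + 1 + lam) * y * gegenbauer lam (n + 1) y
          - ((n : ℝ) + 2 * lam) * gegenbauer lam n y) / ((n : ℝ) + 2))
        = (fun y : ℝ =>
        (2 * ((n : ℝ) + 1 + lam) * (id y * gegenbauer lam (n + 1) y)
          - ((n : ℝ) + 2 * lam) * gegenbauer lam n y) / ((n : ℝ) + 2)) := by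
      funext y; simp only [id_eq]; ring_nf
    rw [hfe]
    refine h0.congr_deriv (Eq.symm ?_)
    have ha := gegD_aux lam n x
    have hne : ((n : ℝ) + 2) ≠ 0 := by positivity
    rw [eq_div_iff hne]
    simp only [id_eq]
    linear_combination (-(2 * ((n : ℝ) + 1 + lam))) * ha

theorem hasDerivAt_gegD (lam : ℝ) (n : ℕ) (x : ℝ) :
    HasDerivAt (gegD lam n) (gegD2 lam n x) x := by
  induction n using Nat.twoStepInduction generalizing x with
  | zero => simpa [gegD, gegD2] using (hasDerivAt_const x (0:ℝ))
  | one => simpa [gegD, gegD2] using (hasDerivAt_const x (2*lam))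
  | more n ih1 _ =>
    have h : HasDerivAt (fun y : ℝ => gegD lam n y
        + 2 * ((n : ℝ) + 1 + lam) * gegenbauer lam (n + 1) y)
        (gegD2 lam n x + 2 * ((n : ℝ) + 1 + lam) * gegD lam (n + 1) x) x :=
      (ih1 x).add ((hasDerivAt_geg lam (n + 1) x).const_mul _)
    have hfun : gegD lam (n + 2) = fun y : ℝ => gegD lam n y
        + 2 * ((n : ℝ) + 1 + lam) * gegenbauer lam (n + 1) y := rfl
    rw [hfun, gegD2_two]
    exact h

/-- identity (c) -/
theorem gegD_c (lam : ℝ) (n : ℕ) (x : ℝ) :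
    (1 - x ^ 2) * gegD lam (n + 1) x =
      ((n : ℝ) + 2 * lam) * gegenbauer lam n x
        - ((n : ℝ) + 1) * x * gegenbauer lam (n + 1) x := by
  induction n using Nat.twoStepInduction with
  | zero => simp [gegD, gegenbauer]; ring
  | one =>
    show (1 - x ^ 2) * gegD lam (0 + 2) x = _
    simp [gegD, gegenbauer]; ring
  | more n ih1 _ =>
    have h3 : gegD lam (n + 2 + 1) x
        = gegD lam (n + 1) x + 2 * ((((n:ℕ) + 1 : ℕ) : ℝ) + 1 + lam) * gegenbauer lam (n + 2) x :=
      gegD_two lam (n + 1) x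
    have r1 := geg_rec lam (n + 1) x
    have r0 := geg_rec lam n x
    push_cast at r1 r0 h3 ih1 ⊢
    linear_combination (1 - x ^ 2) * h3 + ih1 + x * r1 + r0

/-- the Gegenbauer ODE -/
theorem geg_ode (lam : ℝ) (n : ℕ) (x : ℝ) :
    (1 - x ^ 2) * gegD2 lam n x =
      (2 * lam + 1) * x * gegD lam n x - (n : ℝ) * ((n : ℝ) + 2 * lam) * gegenbauer lam n x := by
  induction n using Nat.twoStepInduction with
  | zero => simp [gegD, gegD2, gegenbauer]
  | one => simp [gegD, gegD2, gegenbauer]; ring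
  | more n ih1 _ =>
    have d2 := gegD2_two lam n x
    have d1 := gegD_two lam n x
    have cn := gegD_c lam n x
    have r0 := geg_rec lam n x
    push_cast at d2 d1 cn r0 ih1 ⊢
    linear_combination (1 - x ^ 2) * d2 + ih1 + 2 * ((n : ℝ) + 1 + lam) * cn
      - (2 * lam + 1) * x * d1 + ((n : ℝ) + 2 + 2 * lam) * r0

/-- value at 1 -/
theorem geg_one (lam : ℝ) (hlam : 0 < lam) (n : ℕ) :
    gegenbauer lam n 1 = Real.Gamma ((n : ℝ) + 2 * lam) / ((Nat.factorial n : ℝ) * Real.Gamma (2 * lam)) := by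
  induction n using Nat.twoStepInduction with
  | zero =>
    have hG : Real.Gamma (2 * lam) ≠ 0 := ne_of_gt (Real.Gamma_pos_of_pos (by positivity))
    simp [gegenbauer]
    field_simp
  | one =>
    have h : Real.Gamma (1 + 2 * lam) = 2 * lam * Real.Gamma (2 * lam) := by
      rw [add_comm, Real.Gamma_add_one (by positivity)]
    have hG : Real.Gamma (2 * lam) ≠ 0 := ne_of_gt (Real.Gamma_pos_of_pos (by positivity))
    simp [gegenbauer, h]
    field_simp
  | more n ih1 ih2 =>
    have hrec := geg_rec lam n 1
    rw [ih1, ih2] at hrec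
    have h1 : Real.Gamma ((n : ℝ) + 1 + 2 * lam) = ((n : ℝ) + 2 * lam) * Real.Gamma ((n : ℝ) + 2 * lam) := by
      rw [show (n : ℝ) + 1 + 2 * lam = ((n : ℝ) + 2 * lam) + 1 by ring,
        Real.Gamma_add_one (by positivity)]
    have h2 : Real.Gamma (((n : ℝ) + 2) + 2 * lam)
        = (((n : ℝ) + 1) + 2 * lam) * (((n : ℝ) + 2 * lam) * Real.Gamma ((n : ℝ) + 2 * lam)) := by
      rw [show ((n : ℝ) + 2) + 2 * lam = (((n : ℝ) + 1) + 2 * lam) + 1 by ring,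
        Real.Gamma_add_one (by positivity), h1]
    have hG : Real.Gamma (2 * lam) ≠ 0 := ne_of_gt (Real.Gamma_pos_of_pos (by positivity))
    have hGn : Real.Gamma ((n : ℝ) + 2 * lam) > 0 := Real.Gamma_pos_of_pos (by positivity)
    have hne2 : ((n : ℝ) + 2) ≠ 0 := by positivity
    have hfac1 : (Nat.factorial (n + 1) : ℝ) = ((n : ℝ) + 1) * (Nat.factorial n : ℝ) := by
      push_cast [Nat.factorial_succ]; ring
    have hfac2 : (Nat.factorial (n + 2) : ℝ) = ((n : ℝ) + 2) * (((n : ℝ) + 1) * (Nat.factorial n : ℝ)) := by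
      push_cast [Nat.factorial_succ]; ring
    have hfacpos : (0:ℝ) < (Nat.factorial n : ℝ) := by positivity
    have : gegenbauer lam (n + 2) 1
        = (2 * ((n : ℝ) + 1 + lam) * 1 * (Real.Gamma ((n : ℝ) + 1 + 2 * lam) / ((Nat.factorial (n+1) : ℝ) * Real.Gamma (2 * lam)))
          - ((n : ℝ) + 2 * lam) * (Real.Gamma ((n : ℝ) + 2 * lam) / ((Nat.factorial n : ℝ) * Real.Gamma (2 * lam)))) / ((n : ℝ) + 2) := by
      rw [show gegenbauer lam (n+2) 1 = (2 * ((n : ℝ) + 1 + lam) * 1 * gegenbauer lam (n + 1) 1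
        - ((n : ℝ) + 2 * lam) * gegenbauer lam n 1) / ((n : ℝ) + 2) from rfl, ih2, ih1]
      push_cast
      ring
    rw [this, h1, hfac1]
    push_cast [hfac2, h2]
    field_simp
    ring


/-! ## Integration layer -/

/-- the weight function -/
noncomputable def W (lam : ℝ) (x : ℝ) : ℝ := (1 - x) ^ lam * (1 + x) ^ (lam - 1)

noncomputable def Iq (lam : ℝ) (n : ℕ) : ℝ :=
  ∫ x in (-1 : ℝ)..1, W lam x * gegenbauer lam n x

noncomputable def Eq' (lam : ℝ) (n : ℕ) : ℝ :=
  ∫ x in (-1 : ℝ)..1, W lam x * gegD lam n x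

theorem continuous_rpow_base {a : ℝ} (ha : 0 < a) (c : ℝ) (d : ℝ) :
    Continuous (fun x : ℝ => (c + d * x) ^ a) := by
  have h : Continuous (fun y : ℝ => y ^ a) :=
    continuous_iff_continuousAt.2 fun y => Real.continuousAt_rpow_const y a (Or.inr ha.le)
  exact h.comp (by continuity)

/-- integrability of `(1-x)^a (1+x)^b g x` for `0 < a`, `-1 < b`, `g` continuous -/
theorem wInt (a b : ℝ) (ha : 0 < a) (hb : -1 < b) (g : ℝ → ℝ) (hg : Continuous g) :
    IntervalIntegrable (fun x => (1 - x) ^ a * (1 + x) ^ b * g x) volume (-1) 1 := by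
  have h1 : IntervalIntegrable (fun x : ℝ => x ^ b) volume 0 2 :=
    intervalIntegral.intervalIntegrable_rpow' hb
  have h2 := h1.comp_add_right 1
  norm_num at h2
  have h2' : IntervalIntegrable (fun x : ℝ => (1 + x) ^ b) volume (-1) 1 := by
    have : (fun x : ℝ => (x + 1) ^ b) = fun x : ℝ => (1 + x) ^ b := by
      funext x; rw [add_comm]
    rwa [this] at h2
  have hc : ContinuousOn (fun x : ℝ => (1 - x) ^ a * g x) (Set.uIcc (-1) 1) :=
    (((continuous_rpow_base ha 1 (-1)).congr
      (fun x => by rw [show (1:ℝ) + -1 * x = 1 - x by ring])).mul hg).continuousOn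
  have h3 := h2'.continuousOn_mul hc
  have heq : (fun x : ℝ => (1 - x) ^ a * g x * (1 + x) ^ b)
      = fun x : ℝ => (1 - x) ^ a * (1 + x) ^ b * g x := by
    funext x; ring
  rwa [heq] at h3


/-- real Beta integral on (0,1) -/
theorem betaInt01 (a b : ℝ) (ha : -1 < a) (hb : -1 < b) :
    ∫ t in (0 : ℝ)..1, t ^ b * (1 - t) ^ a
      = Real.Gamma (b + 1) * Real.Gamma (a + 1) / Real.Gamma (a + b + 2) := by
  have hu : (0 : ℝ) < (b + 1) := by linarith
  have hv : (0 : ℝ) < (a + 1) := by linarith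
  have h := Complex.Gamma_mul_Gamma_eq_betaIntegral
    (s := ((b : ℝ) + 1 : ℝ)) (t := ((a : ℝ) + 1 : ℝ))
    (by simpa using hu) (by simpa using hv)
  have hbeta : Complex.betaIntegral ((b : ℝ) + 1 : ℝ) ((a : ℝ) + 1 : ℝ)
      = ((∫ t in (0 : ℝ)..1, t ^ b * (1 - t) ^ a : ℝ) : ℂ) := by
    rw [Complex.betaIntegral]
    rw [← intervalIntegral.integral_ofReal]
    apply intervalIntegral.integral_congr
    intro x hx
    rw [Set.uIcc_of_le (by norm_num : (0:ℝ) ≤ 1)] at hx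
    obtain ⟨hx0, hx1⟩ := hx
    have e1 : ((x : ℂ)) ^ (((b : ℝ) + 1 : ℝ) - 1 : ℂ) = ((x ^ b : ℝ) : ℂ) := by
      rw [Complex.ofReal_cpow hx0]
      norm_num
    have e2 : ((1 - (x : ℂ))) ^ (((a : ℝ) + 1 : ℝ) - 1 : ℂ) = (((1 - x) ^ a : ℝ) : ℂ) := by
      rw [show ((1 : ℂ) - (x : ℂ)) = (((1 - x : ℝ)) : ℂ) by push_cast; ring,
        Complex.ofReal_cpow (by linarith)]
      norm_num
    beta_reduce
    rw [e1, e2]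
    push_cast
    ring
  rw [hbeta] at h
  have hGc : ∀ r : ℝ, Complex.Gamma (r : ℂ) = (Real.Gamma r : ℂ) := fun r => Complex.Gamma_ofReal r
  have h2 : ((Real.Gamma (b+1) * Real.Gamma (a+1) : ℝ) : ℂ)
      = ((Real.Gamma (a+b+2) * ∫ t in (0 : ℝ)..1, t ^ b * (1 - t) ^ a : ℝ) : ℂ) := by
    push_cast
    rw [← hGc, ← hGc, ← hGc]
    convert h using 2 <;> push_cast <;> ring_nf
  have h3 := Complex.ofReal_injective h2
  have hGne : Real.Gamma (a + b + 2) ≠ 0 :=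
    ne_of_gt (Real.Gamma_pos_of_pos (by linarith))
  field_simp
  linarith [h3]

/-- the Beta-type integral on (-1,1) -/
theorem betaInt (a b : ℝ) (ha : -1 < a) (hb : -1 < b) :
    ∫ x in (-1 : ℝ)..1, (1 - x) ^ a * (1 + x) ^ b
      = 2 ^ (a + b + 1) * Real.Gamma (a + 1) * Real.Gamma (b + 1) / Real.Gamma (a + b + 2) := by
  have step1 : (∫ x in (-1 : ℝ)..1, (1 - x) ^ a * (1 + x) ^ b)
      = ∫ y in (0 : ℝ)..2, (2 - y) ^ a * y ^ b := by
    have := intervalIntegral.integral_comp_add_right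
      (a := (-1:ℝ)) (b := 1) (fun y : ℝ => (2 - y) ^ a * y ^ b) 1
    norm_num at this
    rw [← this]
    apply intervalIntegral.integral_congr
    intro x _
    norm_num [show (2:ℝ) - (x+1) = 1 - x by ring, show (1:ℝ) + x = x + 1 by ring]
  have step2 : (∫ y in (0 : ℝ)..2, (2 - y) ^ a * y ^ b)
      = 2 * ∫ t in (0 : ℝ)..1, (2 - 2*t) ^ a * (2*t) ^ b := by
    have := intervalIntegral.integral_comp_mul_left
      (a := (0:ℝ)) (b := 1) (fun y : ℝ => (2 - y) ^ a * y ^ b) (c := 2) two_ne_zero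
    norm_num at this
    rw [this]
    ring
  have step3 : (∫ t in (0 : ℝ)..1, (2 - 2*t) ^ a * (2*t) ^ b)
      = 2 ^ a * 2 ^ b * ∫ t in (0 : ℝ)..1, t ^ b * (1 - t) ^ a := by
    rw [← intervalIntegral.integral_const_mul]
    apply intervalIntegral.integral_congr
    intro t ht
    rw [Set.uIcc_of_le (by norm_num : (0:ℝ) ≤ 1)] at ht
    obtain ⟨ht0, ht1⟩ := ht
    beta_reduce
    rw [show (2:ℝ) - 2*t = 2 * (1 - t) by ring,
      Real.mul_rpow (by norm_num) (by linarith),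
      Real.mul_rpow (by norm_num) ht0]
    ring
  rw [step1, step2, step3, betaInt01 a b ha hb]
  have h2 : (2:ℝ) ^ (a + b + 1) = 2 * (2 ^ a * 2 ^ b) := by
    rw [Real.rpow_add two_pos, Real.rpow_add two_pos, Real.rpow_one]
    ring
  rw [h2]
  ring


theorem wInt' (lam : ℝ) (hlam : 0 < lam) (g : ℝ → ℝ) (hg : Continuous g) :
    IntervalIntegrable (fun x => W lam x * g x) volume (-1) 1 := by
  have := wInt lam (lam - 1) hlam (by linarith) g hg
  simpa [W] using this

/-- The key integration-by-parts identity. -/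
theorem key (lam : ℝ) (hlam : 0 < lam) (n : ℕ) :
    (n : ℝ) * ((n : ℝ) + 2 * lam) * Iq lam n + Eq' lam n = 0 := by
  set u : ℝ → ℝ := fun x => (1 - x) ^ (lam + 1) * (1 + x) ^ lam with hu_def
  set f : ℝ → ℝ := fun x => u x * gegD lam n x with hf_def
  set g : ℝ → ℝ := fun x =>
    (n : ℝ) * ((n : ℝ) + 2 * lam) * gegenbauer lam n x + gegD lam n x with hg_def
  have hgc : Continuous g :=
    (continuous_const.mul (continuous_geg lam n)).add (continuous_gegD lam n)
  have hint : IntervalIntegrable (fun x => W lam x * (-g x)) volume (-1) 1 :=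
    wInt' lam hlam _ hgc.neg
  have hderiv : ∀ x ∈ Ioo (-1 : ℝ) 1, HasDerivAt f (W lam x * (-g x)) x := by
    intro x hx
    obtain ⟨hx1, hx2⟩ := hx
    have h1x : (0:ℝ) < 1 - x := by linarith
    have h2x : (0:ℝ) < 1 + x := by linarith
    have hbase1 : HasDerivAt (fun y : ℝ => 1 - y) (-1 : ℝ) x := by
      simpa using (hasDerivAt_id' x).const_sub (1:ℝ)
    have d1 := hbase1.rpow_const (p := lam + 1) (Or.inl h1x.ne')
    rw [add_sub_cancel_right] at d1
    have hbase2 : HasDerivAt (fun y : ℝ => 1 + y) (1 : ℝ) x := by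
      simpa using (hasDerivAt_id' x).const_add (1:ℝ)
    have d2 := hbase2.rpow_const (p := lam) (Or.inl h2x.ne')
    have du := d1.mul d2
    have df := du.mul (hasDerivAt_gegD lam n x)
    have e1 : (1 - x) ^ (lam + 1) = (1 - x) ^ lam * (1 - x) :=
      Real.rpow_add_one h1x.ne' lam
    have e2 : (1 + x) ^ lam = (1 + x) ^ (lam - 1) * (1 + x) := by
      have := Real.rpow_add_one h2x.ne' (lam - 1)
      simpa using this
    have hode := geg_ode lam n x
    have hval : (-1 * (lam + 1) * (1 - x) ^ lam * ((1 + x) ^ lam)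
          + (1 - x) ^ (lam + 1) * (1 * lam * (1 + x) ^ (lam - 1))) * gegD lam n x
          + u x * gegD2 lam n x
        = W lam x * (-g x) := by
      simp only [hu_def, hg_def, W]
      rw [e1, e2]
      linear_combination ((1 - x) ^ lam * (1 + x) ^ (lam - 1)) * hode
    have dfty : HasDerivAt f
        ((-1 * (lam + 1) * (1 - x) ^ lam * ((1 + x) ^ lam)
          + (1 - x) ^ (lam + 1) * (1 * lam * (1 + x) ^ (lam - 1))) * gegD lam n x
          + u x * gegD2 lam n x) x := by
      exact df.congr_deriv rfl
    rw [hval] at dfty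
    exact dfty
  have hcont : ContinuousOn f (Icc (-1 : ℝ) 1) := by
    apply Continuous.continuousOn
    exact ((continuous_rpow_base (by linarith : (0:ℝ) < lam + 1) 1 (-1)).congr
      (fun x => by rw [show (1:ℝ) + -1 * x = 1 - x by ring])|>.mul
      ((continuous_rpow_base hlam 1 1).congr
      (fun x => by rw [show (1:ℝ) + 1 * x = 1 + x by ring]))).mul (continuous_gegD lam n)
  have hftc := intervalIntegral.integral_eq_sub_of_hasDerivAt_of_le
    (by norm_num : (-1:ℝ) ≤ 1) hcont hderiv hint
  have hf1 : f 1 = 0 := by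
    simp only [hf_def, hu_def]
    rw [show (1:ℝ) - 1 = 0 by ring, Real.zero_rpow (by positivity)]
    ring
  have hfm1 : f (-1) = 0 := by
    simp only [hf_def, hu_def]
    rw [show (1:ℝ) + (-1) = 0 by ring, Real.zero_rpow (ne_of_gt hlam)]
    ring
  rw [hf1, hfm1, sub_zero] at hftc
  have hsplit : (∫ x in (-1:ℝ)..1, W lam x * (-g x))
      = -((n : ℝ) * ((n : ℝ) + 2 * lam) * Iq lam n + Eq' lam n) := by
    have i1 : IntervalIntegrable (fun x => W lam x * gegenbauer lam n x) volume (-1) 1 :=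
      wInt' lam hlam _ (continuous_geg lam n)
    have i2 : IntervalIntegrable (fun x => W lam x * gegD lam n x) volume (-1) 1 :=
      wInt' lam hlam _ (continuous_gegD lam n)
    have : (fun x => W lam x * (-g x))
        = fun x => -(((n : ℝ) * ((n : ℝ) + 2 * lam)) * (W lam x * gegenbauer lam n x)
            + (W lam x * gegD lam n x)) := by
      funext x; simp only [hg_def]; ring
    rw [this, intervalIntegral.integral_neg, intervalIntegral.integral_add
      (i1.const_mul _) i2, intervalIntegral.integral_const_mul]
    rfl
  rw [hsplit] at hftc
  linarith [hftc]


theorem Eq'_rec (lam : ℝ) (hlam : 0 < lam) (n : ℕ) :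
    Eq' lam (n + 2) = Eq' lam n + 2 * ((n : ℝ) + 1 + lam) * Iq lam (n + 1) := by
  have i1 : IntervalIntegrable (fun x => W lam x * gegD lam n x) volume (-1) 1 :=
    wInt' lam hlam _ (continuous_gegD lam n)
  have i2 : IntervalIntegrable (fun x => W lam x * gegenbauer lam (n+1) x) volume (-1) 1 :=
    wInt' lam hlam _ (continuous_geg lam (n+1))
  have hcongr : (∫ x in (-1:ℝ)..1, W lam x * gegD lam (n+2) x)
      = ∫ x in (-1:ℝ)..1, (W lam x * gegD lam n x
          + (2 * ((n : ℝ) + 1 + lam)) * (W lam x * gegenbauer lam (n+1) x)) := by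
    apply intervalIntegral.integral_congr
    intro x _
    beta_reduce
    rw [gegD_two]
    ring
  show (∫ x in (-1:ℝ)..1, W lam x * gegD lam (n+2) x) = _
  rw [hcongr, intervalIntegral.integral_add i1 (i2.const_mul _),
    intervalIntegral.integral_const_mul]
  rfl

theorem Iq_rec (lam : ℝ) (hlam : 0 < lam) (n : ℕ) :
    ((n : ℝ) + 2) * ((n : ℝ) + 2 + 2 * lam) * Iq lam (n + 2)
      = (n : ℝ) * ((n : ℝ) + 2 * lam) * Iq lam n - 2 * ((n : ℝ) + 1 + lam) * Iq lam (n + 1) := by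
  have k2 := key lam hlam (n + 2)
  have k0 := key lam hlam n
  have he := Eq'_rec lam hlam n
  push_cast at k2 k0 ⊢
  linarith [k2, k0, he]

theorem Iq_zero (lam : ℝ) (hlam : 0 < lam) :
    Iq lam 0 = 2 ^ (2 * lam) * Real.Gamma (lam + 1) * Real.Gamma lam / Real.Gamma (2 * lam + 1) := by
  have h : Iq lam 0 = ∫ x in (-1:ℝ)..1, (1 - x) ^ lam * (1 + x) ^ (lam - 1) := by
    apply intervalIntegral.integral_congr
    intro x _
    simp [W, gegenbauer]
  rw [h, betaInt lam (lam - 1) (by linarith) (by linarith)]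
  rw [show lam + (lam - 1) + 1 = 2 * lam by ring, show lam - 1 + 1 = lam by ring,
    show lam + (lam - 1) + 2 = 2 * lam + 1 by ring]

theorem Iq_one (lam : ℝ) (hlam : 0 < lam) :
    Iq lam 1 = -(2 * lam / (2 * lam + 1)) * Iq lam 0 := by
  have i1 : IntervalIntegrable (fun x => (1 - x) ^ lam * (1 + x) ^ lam * (1:ℝ)) volume (-1) 1 :=
    wInt lam lam hlam (by linarith) _ continuous_const
  have i1' : IntervalIntegrable (fun x => (1 - x) ^ lam * (1 + x) ^ lam) volume (-1) 1 := by
    have : (fun x : ℝ => (1 - x) ^ lam * (1 + x) ^ lam * (1:ℝ))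
        = fun x : ℝ => (1 - x) ^ lam * (1 + x) ^ lam := by funext x; ring
    rwa [this] at i1
  have i2 : IntervalIntegrable (fun x => W lam x) volume (-1) 1 := by
    have := wInt' lam hlam (fun _ => (1:ℝ)) continuous_const
    simpa using this
  have hcongr : Iq lam 1 = ∫ x in (-1:ℝ)..1,
      (2 * lam * ((1 - x) ^ lam * (1 + x) ^ lam) - 2 * lam * W lam x) := by
    apply intervalIntegral.integral_congr
    intro x hx
    rw [Set.uIcc_of_le (by norm_num : (-1:ℝ) ≤ 1)] at hx
    have h1x : (0:ℝ) ≤ 1 + x := by linarith [hx.1]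
    have e2 : (1 + x) ^ lam = (1 + x) ^ (lam - 1) * (1 + x) := by
      rcases eq_or_lt_of_le h1x with h | h
      · rw [← h, Real.zero_rpow (ne_of_gt hlam)]
        ring
      · have := Real.rpow_add_one (ne_of_gt h) (lam - 1)
        simpa using this
    simp only [W, gegenbauer]
    rw [e2]
    ring
  rw [hcongr, intervalIntegral.integral_sub (i1'.const_mul _) (i2.const_mul _),
    intervalIntegral.integral_const_mul, intervalIntegral.integral_const_mul]
  have hb : (∫ x in (-1:ℝ)..1, (1 - x) ^ lam * (1 + x) ^ lam)
      = 2 ^ (2*lam + 1) * Real.Gamma (lam + 1) * Real.Gamma (lam + 1) / Real.Gamma (2 * lam + 2) := by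
    rw [betaInt lam lam (by linarith) (by linarith),
      show lam + lam + 1 = 2 * lam + 1 by ring, show lam + lam + 2 = 2 * lam + 2 by ring]
  have hI0 : (∫ x in (-1:ℝ)..1, W lam x) = Iq lam 0 := by
    apply intervalIntegral.integral_congr
    intro x _
    simp [W, gegenbauer]
  rw [hb, hI0, Iq_zero lam hlam]
  have hg1 : Real.Gamma (lam + 1) = lam * Real.Gamma lam := Real.Gamma_add_one (ne_of_gt hlam)
  have hg2 : Real.Gamma (2 * lam + 2) = (2 * lam + 1) * Real.Gamma (2 * lam + 1) := by
    rw [show 2 * lam + 2 = (2 * lam + 1) + 1 by ring, Real.Gamma_add_one (by positivity)]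
  have hg3 : (2:ℝ) ^ (2 * lam + 1) = 2 * 2 ^ (2 * lam) := by
    rw [Real.rpow_add two_pos, Real.rpow_one]; ring
  have hG1 : Real.Gamma (2 * lam + 1) > 0 := Real.Gamma_pos_of_pos (by positivity)
  rw [hg1, hg2, hg3]
  field_simp
  ring


/-! ## Closed forms -/

noncomputable def tA (lam : ℝ) (k : ℕ) : ℝ :=
  Real.Gamma ((k : ℝ) + 1/2) ^ 2 * Real.Gamma lam ^ 2
    / (2 * Real.pi * Real.Gamma ((k : ℝ) + lam + 1/2) ^ 2)
    * (Real.pi ^ ((1:ℝ)/2) * Real.Gamma (lam + 1/2) / Real.Gamma (lam + 1))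
    * (2 * lam) / Real.Gamma (2 * lam)

noncomputable def JE (lam : ℝ) (k : ℕ) : ℝ :=
  tA lam k * Real.Gamma (2 * (k : ℝ) + 2 * lam) / (Nat.factorial (2 * k) : ℝ)

noncomputable def JO (lam : ℝ) (k : ℕ) : ℝ :=
  -(tA lam k * Real.Gamma (2 * (k : ℝ) + 1 + 2 * lam)
    / ((Nat.factorial (2 * k) : ℝ) * (2 * (k : ℝ) + 1 + 2 * lam)))

theorem tA_succ (lam : ℝ) (hlam : 0 < lam) (k : ℕ) :
    tA lam (k + 1) = tA lam k * ((k : ℝ) + 1/2) ^ 2 / ((k : ℝ) + lam + 1/2) ^ 2 := by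
  have h1 : Real.Gamma (((k + 1 : ℕ) : ℝ) + 1/2)
      = ((k : ℝ) + 1/2) * Real.Gamma ((k : ℝ) + 1/2) := by
    push_cast
    rw [show (k : ℝ) + 1 + 1/2 = ((k : ℝ) + 1/2) + 1 by ring,
      Real.Gamma_add_one (by positivity)]
  have h2 : Real.Gamma (((k + 1 : ℕ) : ℝ) + lam + 1/2)
      = ((k : ℝ) + lam + 1/2) * Real.Gamma ((k : ℝ) + lam + 1/2) := by
    push_cast
    rw [show (k : ℝ) + 1 + lam + 1/2 = ((k : ℝ) + lam + 1/2) + 1 by ring,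
      Real.Gamma_add_one (by positivity)]
  have hp1 : Real.Gamma ((k : ℝ) + lam + 1/2) > 0 := Real.Gamma_pos_of_pos (by positivity)
  have hp2 : ((k : ℝ) + lam + 1/2) > 0 := by positivity
  have hpi : Real.pi > 0 := Real.pi_pos
  simp only [tA, h1, h2]
  field_simp

theorem JE_pos_denoms (lam : ℝ) (hlam : 0 < lam) (k : ℕ) :
    (0:ℝ) < (Nat.factorial (2 * k) : ℝ) ∧ (0:ℝ) < Real.Gamma (2 * (k:ℝ) + 2 * lam)
      ∧ (0:ℝ) < 2 * (k:ℝ) + 1 + 2 * lam := by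
  refine ⟨by positivity, Real.Gamma_pos_of_pos (by positivity), by positivity⟩

theorem fact_two_succ (k : ℕ) :
    (Nat.factorial (2 * (k+1)) : ℝ)
      = (2*(k:ℝ)+2) * ((2*(k:ℝ)+1) * (Nat.factorial (2*k) : ℝ)) := by
  have : 2 * (k + 1) = (2*k + 1) + 1 := by ring
  rw [this, Nat.factorial_succ, Nat.factorial_succ]
  push_cast
  ring

theorem gamma_2step (lam : ℝ) (hlam : 0 < lam) (k : ℕ) :
    Real.Gamma (2 * (((k+1 : ℕ)):ℝ) + 2 * lam)
      = (2*(k:ℝ)+1+2*lam) * ((2*(k:ℝ)+2*lam) * Real.Gamma (2*(k:ℝ) + 2*lam)) := by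
  push_cast
  rw [show 2 * ((k:ℝ)+1) + 2 * lam = (2*(k:ℝ)+1+2*lam) + 1 by ring,
    Real.Gamma_add_one (by positivity),
    show 2*(k:ℝ)+1+2*lam = (2*(k:ℝ)+2*lam) + 1 by ring,
    Real.Gamma_add_one (by positivity)]

theorem gamma_1step (lam : ℝ) (hlam : 0 < lam) (k : ℕ) :
    Real.Gamma (2 * (k:ℝ) + 1 + 2 * lam)
      = (2*(k:ℝ)+2*lam) * Real.Gamma (2*(k:ℝ) + 2*lam) := by
  rw [show 2*(k:ℝ)+1+2*lam = (2*(k:ℝ)+2*lam) + 1 by ring,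
    Real.Gamma_add_one (by positivity)]

set_option maxHeartbeats 1000000 in
theorem R1 (lam : ℝ) (hlam : 0 < lam) (k : ℕ) :
    (2*(k:ℝ)+2) * (2*(k:ℝ)+2+2*lam) * JE lam (k+1)
      = (2*(k:ℝ)) * (2*(k:ℝ)+2*lam) * JE lam k - 2 * (2*(k:ℝ)+1+lam) * JO lam k := by
  obtain ⟨hf, hg, hd⟩ := JE_pos_denoms lam hlam k
  have ht := tA_succ lam hlam k
  have hfs := fact_two_succ k
  have hgs := gamma_2step lam hlam k
  have n1 : ((k:ℝ) + lam + 1/2) ≠ 0 := by positivity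
  have n2 : ((Nat.factorial (2*k) : ℝ)) ≠ 0 := by positivity
  have n3 : (2*(k:ℝ)+1+2*lam) ≠ 0 := by positivity
  have n4 : (2*Real.pi) ≠ 0 := by positivity
  have n5 : Real.Gamma (lam + 1) ≠ 0 := ne_of_gt (Real.Gamma_pos_of_pos (by positivity))
  have n6 : Real.Gamma (2*lam) ≠ 0 := ne_of_gt (Real.Gamma_pos_of_pos (by positivity))
  have n7 : ((k:ℝ) + 1/2) ≠ 0 := by positivity
  have hgs1 := gamma_1step lam hlam k
  simp only [JE, JO]
  rw [ht, hfs, hgs, hgs1]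
  field_simp
  ring

theorem gamma_2step' (lam : ℝ) (hlam : 0 < lam) (k : ℕ) :
    Real.Gamma (2 * (((k+1 : ℕ)):ℝ) + 1 + 2 * lam)
      = (2*(k:ℝ)+2+2*lam) * ((2*(k:ℝ)+1+2*lam) * ((2*(k:ℝ)+2*lam) * Real.Gamma (2*(k:ℝ) + 2*lam))) := by
  push_cast
  rw [show 2 * ((k:ℝ)+1) + 1 + 2 * lam = (2*(k:ℝ)+2+2*lam) + 1 by ring,
    Real.Gamma_add_one (by positivity),
    show 2*(k:ℝ)+2+2*lam = (2*(k:ℝ)+1+2*lam) + 1 by ring,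
    Real.Gamma_add_one (by positivity),
    show 2*(k:ℝ)+1+2*lam = (2*(k:ℝ)+2*lam) + 1 by ring,
    Real.Gamma_add_one (by positivity)]

set_option maxHeartbeats 1000000 in
theorem R2 (lam : ℝ) (hlam : 0 < lam) (k : ℕ) :
    (2*(k:ℝ)+3) * (2*(k:ℝ)+3+2*lam) * JO lam (k+1)
      = (2*(k:ℝ)+1) * (2*(k:ℝ)+1+2*lam) * JO lam k - 2 * (2*(k:ℝ)+2+lam) * JE lam (k+1) := by
  obtain ⟨hf, hg, hd⟩ := JE_pos_denoms lam hlam k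
  have ht := tA_succ lam hlam k
  have hfs := fact_two_succ k
  have hgs := gamma_2step lam hlam k
  have hgs' := gamma_2step' lam hlam k
  have hd2 : (0:ℝ) < 2*(k:ℝ)+3+2*lam := by positivity
  have hd3 : (0:ℝ) < 2*(k:ℝ)+2+2*lam := by positivity
  have hd4 : (0:ℝ) < 2*(k:ℝ)+2*lam := by positivity
  have n1 : ((k:ℝ) + lam + 1/2) ≠ 0 := by positivity
  have n2 : ((Nat.factorial (2*k) : ℝ)) ≠ 0 := by positivity
  have n3 : (2*(k:ℝ)+1+2*lam) ≠ 0 := by positivity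
  have n4 : (2*Real.pi) ≠ 0 := by positivity
  have n5 : Real.Gamma (lam + 1) ≠ 0 := ne_of_gt (Real.Gamma_pos_of_pos (by positivity))
  have n6 : Real.Gamma (2*lam) ≠ 0 := ne_of_gt (Real.Gamma_pos_of_pos (by positivity))
  have n7 : ((k:ℝ) + 1/2) ≠ 0 := by positivity
  have hgs1 := gamma_1step lam hlam k
  simp only [JE, JO]
  rw [ht, hfs, hgs, hgs', hgs1]
  field_simp
  push_cast
  ring


theorem JE0 (lam : ℝ) (hlam : 0 < lam) : Iq lam 0 = JE lam 0 := by
  rw [Iq_zero lam hlam]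
  simp only [JE, tA, Nat.mul_zero, Nat.cast_zero, Nat.factorial_zero, Nat.cast_one]
  have dup := Real.Gamma_mul_Gamma_add_half lam
  rw [Real.sqrt_eq_rpow] at dup
  have hA : Real.Gamma lam ≠ 0 := ne_of_gt (Real.Gamma_pos_of_pos hlam)
  have hB : Real.Gamma (lam + 1/2) ≠ 0 := ne_of_gt (Real.Gamma_pos_of_pos (by positivity))
  have hG : Real.Gamma (2 * lam) ≠ 0 := ne_of_gt (Real.Gamma_pos_of_pos (by positivity))
  have hGpos : (0:ℝ) < Real.Gamma (2 * lam) := Real.Gamma_pos_of_pos (by positivity)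
  have hg1 : Real.Gamma (lam + 1) = lam * Real.Gamma lam := Real.Gamma_add_one (ne_of_gt hlam)
  have hg2 : Real.Gamma (2 * lam + 1) = 2 * lam * Real.Gamma (2 * lam) := by
    rw [Real.Gamma_add_one (by positivity)]
  have hGhalf : Real.Gamma (2⁻¹) = Real.pi ^ ((1:ℝ)/2) := by
    rw [show (2⁻¹ : ℝ) = 1/2 by norm_num, Real.Gamma_one_half_eq, Real.sqrt_eq_rpow]
  set s : ℝ := Real.pi ^ ((1:ℝ)/2) with hs_def
  have hs_pos : 0 < s := Real.rpow_pos_of_pos Real.pi_pos _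
  have hs : s * s = Real.pi := by
    rw [hs_def, ← Real.rpow_add Real.pi_pos]
    norm_num
  have hBval : Real.Gamma (lam + 1/2)
      = Real.Gamma (2 * lam) * 2 ^ (1 - 2*lam) * s / Real.Gamma lam := by
    rw [eq_div_iff hA]
    linear_combination dup
  have hu : (2:ℝ) ^ ((1:ℝ) - 2*lam) = 2 / 2 ^ (2*lam) := by
    rw [eq_div_iff (ne_of_gt (Real.rpow_pos_of_pos two_pos _)), ← Real.rpow_add two_pos]
    norm_num
  have ht : (0:ℝ) < (2:ℝ) ^ (2*lam) := Real.rpow_pos_of_pos two_pos _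
  rw [show ((0:ℝ) + 1/2) = 2⁻¹ by norm_num, show (0:ℝ) + lam + 1/2 = lam + 1/2 by ring,
    show 2 * (0:ℝ) + 2 * lam = 2 * lam by ring, hGhalf, hg1, hg2, ← hs, hBval, hu]
  field_simp

theorem JO0 (lam : ℝ) (hlam : 0 < lam) : Iq lam 1 = JO lam 0 := by
  rw [Iq_one lam hlam, JE0 lam hlam]
  simp only [JE, JO, Nat.mul_zero, Nat.cast_zero, Nat.factorial_zero, Nat.cast_one]
  rw [show 2 * (0:ℝ) + 1 + 2 * lam = 2 * lam + 1 by ring,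
    show 2 * (0:ℝ) + 2 * lam = 2 * lam by ring,
    Real.Gamma_add_one (by positivity : (2*lam) ≠ 0)]
  have h1 : (2 * lam + 1) ≠ 0 := by positivity
  field_simp
  try ring
  try exact Or.inl trivial

theorem Iq_eq (lam : ℝ) (hlam : 0 < lam) (k : ℕ) :
    Iq lam (2 * k) = JE lam k ∧ Iq lam (2 * k + 1) = JO lam k := by
  induction k with
  | zero =>
    constructor
    · simpa using JE0 lam hlam
    · simpa using JO0 lam hlam
  | succ k ih =>
    have h1 := Iq_rec lam hlam (2 * k)
    have h2 := Iq_rec lam hlam (2 * k + 1)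
    rw [ih.1, ih.2] at h1
    push_cast at h1 h2
    have hr1 := R1 lam hlam k
    have e1 : Iq lam (2 * k + 2) = JE lam (k + 1) := by
      have hpos : (0:ℝ) < (2*(k:ℝ)+2) * (2*(k:ℝ)+2+2*lam) := by positivity
      apply mul_left_cancel₀ (ne_of_gt hpos)
      rw [mul_assoc] at hr1 h1 ⊢
      rw [show (2*(k:ℝ)+2) * ((2*(k:ℝ)+2+2*lam) * Iq lam (2*k+2))
        = (2*(k:ℝ)) * (2*(k:ℝ)+2*lam) * JE lam k - 2*(2*(k:ℝ)+1+lam) * JO lam k from by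
          rw [← mul_assoc] at h1 ⊢; linarith [h1]]
      linarith [hr1]
    have hr2 := R2 lam hlam k
    have e2 : Iq lam (2 * k + 3) = JO lam (k + 1) := by
      rw [ih.2, e1] at h2
      have hpos : (0:ℝ) < (2*(k:ℝ)+3) * (2*(k:ℝ)+3+2*lam) := by positivity
      apply mul_left_cancel₀ (ne_of_gt hpos)
      have h2' : (2*(k:ℝ)+3) * ((2*(k:ℝ)+3+2*lam) * Iq lam (2*k+1+2))
          = (2*(k:ℝ)+1) * (2*(k:ℝ)+1+2*lam) * JO lam k
            - 2*(2*(k:ℝ)+2+lam) * JE lam (k+1) := by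
        rw [← mul_assoc]
        linarith [h2]
      rw [show (2*k+3) = (2*k+1+2) from by ring, mul_assoc, h2']
      linarith [hr2]
    constructor
    · rw [show 2 * (k+1) = 2*k+2 from by ring]
      exact e1
    · rw [show 2 * (k+1) + 1 = 2*k+3 from by ring]
      exact e2


theorem integral_conv (lam : ℝ) (hlam : 0 < lam) (n : ℕ) :
    (∫ x in (-1:ℝ)..1, Real.tan (Real.arccos x / 2) * gegenbauer lam n x
        * (1 - x^2) ^ (lam - 1/2)) = Iq lam n := by
  apply intervalIntegral.integral_congr_ae
  apply Filter.Eventually.of_forall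
  intro x hx
  rw [Set.uIoc_of_le (by norm_num : (-1:ℝ) ≤ 1)] at hx
  obtain ⟨hx1, hx2⟩ := hx
  rcases eq_or_lt_of_le hx2 with h | h
  · rw [h]
    simp [Real.arccos_one, Real.tan_zero, W, Real.zero_rpow (ne_of_gt hlam)]
  · have h1x : (0:ℝ) < 1 - x := by linarith
    have h2x : (0:ℝ) < 1 + x := by linarith
    have hc1 : Real.cos (Real.arccos x) = x := Real.cos_arccos (by linarith) (by linarith)
    have hs1 : Real.sin (Real.arccos x) = Real.sqrt (1 - x^2) := Real.sin_arccos x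
    have harc1 : 0 ≤ Real.arccos x := Real.arccos_nonneg x
    have harc2 : Real.arccos x < Real.pi := by
      have h' : -(Real.pi/2) < Real.arcsin x := Real.neg_pi_div_two_lt_arcsin.mpr hx1
      rw [Real.arccos]
      linarith
    set t := Real.arccos x / 2 with ht_def
    have hct : 0 < Real.cos t := by
      apply Real.cos_pos_of_mem_Ioo
      constructor
      · have := Real.pi_pos
        rw [ht_def]; linarith
      · rw [ht_def]; linarith
    have htan : Real.tan t = Real.sqrt (1 - x^2) / (1 + x) := by
      rw [Real.tan_eq_sin_div_cos]
      have hdouble_s := Real.sin_two_mul t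
      have hdouble_c := Real.cos_two_mul t
      have h2t : 2 * t = Real.arccos x := by rw [ht_def]; ring
      rw [h2t, hs1] at hdouble_s
      rw [h2t, hc1] at hdouble_c
      have hx2c : 1 + x = 2 * Real.cos t ^ 2 := by linarith
      rw [div_eq_div_iff (ne_of_gt hct) (by positivity : (0:ℝ) < 1 + x).ne']
      rw [hx2c, hdouble_s]
      ring
    have e1 : (1-x)^((1:ℝ)/2) * (1-x)^(lam-1/2) = (1-x)^lam := by
      rw [← Real.rpow_add h1x]; norm_num
    have e2 : (1+x)^((1:ℝ)/2) * (1+x)^(lam-1/2) = (1+x)^lam := by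
      rw [← Real.rpow_add h2x]; norm_num
    have e3 : (1+x)^lam = (1+x)^(lam-1) * (1+x) := by
      have := Real.rpow_add_one (ne_of_gt h2x) (lam-1)
      simpa using this
    have hw : Real.sqrt (1 - x^2) / (1 + x) * (1 - x^2) ^ (lam - 1/2) = W lam x := by
      rw [Real.sqrt_eq_rpow, W,
        show (1:ℝ) - x^2 = (1-x)*(1+x) from by ring,
        Real.mul_rpow h1x.le h2x.le, Real.mul_rpow h1x.le h2x.le]
      calc (1-x)^((1:ℝ)/2) * (1+x)^((1:ℝ)/2) / (1+x) * ((1-x)^(lam-1/2) * (1+x)^(lam-1/2))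
          = ((1-x)^((1:ℝ)/2) * (1-x)^(lam-1/2)) * ((1+x)^((1:ℝ)/2) * (1+x)^(lam-1/2)) / (1+x) := by
            ring
        _ = (1-x)^lam * ((1+x)^(lam-1) * (1+x)) / (1+x) := by rw [e1, e2, e3]
        _ = (1-x)^lam * (1+x)^(lam-1) := by
            field_simp
    beta_reduce
    rw [htan]
    linear_combination (gegenbauer lam n x) * hw

theorem sphere_ratio (q : ℕ) (lam : ℝ) (hlam : 0 < lam) (hq : (q:ℝ) = 2*lam+1) :
    sphereArea (q:ℝ) / sphereArea ((q:ℝ)-1)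
      = Real.pi ^ ((1:ℝ)/2) * Real.Gamma (lam+1/2) / Real.Gamma (lam+1) := by
  rw [sphereArea, sphereArea, hq,
    show (2*lam+1+1)/2 = lam+1 from by ring,
    show (2*lam+1-1+1)/2 = lam+1/2 from by ring]
  have hpi : Real.pi ^ (lam+1) = Real.pi ^ (lam+1/2) * Real.pi ^ ((1:ℝ)/2) := by
    rw [← Real.rpow_add Real.pi_pos, show lam + 1/2 + 1/2 = lam + 1 from by ring]
  have p1 : (0:ℝ) < Real.Gamma (lam+1) := Real.Gamma_pos_of_pos (by positivity)
  have p2 : (0:ℝ) < Real.Gamma (lam+1/2) := Real.Gamma_pos_of_pos (by positivity)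
  have p3 : (0:ℝ) < Real.pi ^ (lam+1/2) := Real.rpow_pos_of_pos Real.pi_pos _
  rw [hpi]
  field_simp

end TanGeg

/-- Gegenbauer coefficients of tan(θ/2): even and odd orders. -/
theorem gegenbauer_coeff_tan (q : ℕ) (hq : 2 ≤ q) (k : ℕ) :
    ((sphereArea (q : ℝ) / sphereArea ((q : ℝ) - 1) *
        (1 + 2 * ((2 * k : ℕ) : ℝ) / ((q : ℝ) - 1))⁻¹ *
        gegenbauer (((q : ℝ) - 1) / 2) (2 * k) 1)⁻¹ *
      ∫ x in (-1 : ℝ)..1,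
        Real.tan (Real.arccos x / 2) * gegenbauer (((q : ℝ) - 1) / 2) (2 * k) x *
          (1 - x ^ 2) ^ ((q : ℝ) / 2 - 1) =
      Real.Gamma ((k : ℝ) + 1 / 2) ^ 2 * Real.Gamma (((q : ℝ) - 1) / 2) ^ 2 /
        (2 * Real.pi * Real.Gamma ((k : ℝ) + (q : ℝ) / 2) ^ 2) *
        (4 * (k : ℝ) + (q : ℝ) - 1)) ∧
    ((sphereArea (q : ℝ) / sphereArea ((q : ℝ) - 1) *
        (1 + 2 * ((2 * k + 1 : ℕ) : ℝ) / ((q : ℝ) - 1))⁻¹ *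
        gegenbauer (((q : ℝ) - 1) / 2) (2 * k + 1) 1)⁻¹ *
      ∫ x in (-1 : ℝ)..1,
        Real.tan (Real.arccos x / 2) * gegenbauer (((q : ℝ) - 1) / 2) (2 * k + 1) x *
          (1 - x ^ 2) ^ ((q : ℝ) / 2 - 1) =
      -(Real.Gamma ((k : ℝ) + 1 / 2) ^ 2 * Real.Gamma (((q : ℝ) - 1) / 2) ^ 2 /
        (2 * Real.pi * Real.Gamma ((k : ℝ) + (q : ℝ) / 2) ^ 2) *
        ((2 * (k : ℝ) + 1) * (4 * (k : ℝ) + (q : ℝ) + 1) / (2 * (k : ℝ) + (q : ℝ))))) := by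
  have hq2 : (2:ℝ) ≤ (q:ℝ) := by exact_mod_cast hq
  set lam := ((q:ℝ) - 1) / 2 with hlam_def
  have hlam : 0 < lam := by rw [hlam_def]; linarith
  have hql : (q:ℝ) = 2 * lam + 1 := by rw [hlam_def]; ring
  have hexp : (q:ℝ)/2 - 1 = lam - 1/2 := by rw [hql]; ring
  have hratio := TanGeg.sphere_ratio q lam hlam hql
  have hqm1 : (q:ℝ) - 1 = 2 * lam := by rw [hql]; ring
  have pGk : (0:ℝ) < Real.Gamma ((k:ℝ) + 1/2) := Real.Gamma_pos_of_pos (by positivity)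
  have pGl : (0:ℝ) < Real.Gamma lam := Real.Gamma_pos_of_pos hlam
  have pGkl : (0:ℝ) < Real.Gamma ((k:ℝ) + lam + 1/2) := Real.Gamma_pos_of_pos (by positivity)
  have pGl2 : (0:ℝ) < Real.Gamma (lam + 1/2) := Real.Gamma_pos_of_pos (by positivity)
  have pGl1 : (0:ℝ) < Real.Gamma (lam + 1) := Real.Gamma_pos_of_pos (by positivity)
  have pG2l : (0:ℝ) < Real.Gamma (2 * lam) := Real.Gamma_pos_of_pos (by positivity)
  have pGbig : (0:ℝ) < Real.Gamma (2 * (k:ℝ) + 2 * lam) := Real.Gamma_pos_of_pos (by positivity)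
  have ppi : (0:ℝ) < Real.pi := Real.pi_pos
  have ppis : (0:ℝ) < Real.pi ^ ((1:ℝ)/2) := Real.rpow_pos_of_pos ppi _
  have pfac : (0:ℝ) < ((Nat.factorial (2*k) : ℝ)) := by positivity
  constructor
  · rw [hexp, TanGeg.integral_conv lam hlam (2*k), (TanGeg.Iq_eq lam hlam k).1, hratio,
      TanGeg.geg_one lam hlam (2*k), hqm1]
    simp only [TanGeg.JE, TanGeg.tA]
    rw [show (k:ℝ) + (q:ℝ)/2 = (k:ℝ) + lam + 1/2 from by rw [hql]; ring,
      show 4*(k:ℝ) + (q:ℝ) - 1 = 4*(k:ℝ) + 2*lam from by rw [hql]; ring]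
    push_cast
    have hden : (1 + 2 * (2*(k:ℝ)) / (2*lam)) ≠ 0 := by positivity
    field_simp
    ring
  · rw [hexp, TanGeg.integral_conv lam hlam (2*k+1), (TanGeg.Iq_eq lam hlam k).2, hratio,
      TanGeg.geg_one lam hlam (2*k+1), hqm1]
    simp only [TanGeg.JO, TanGeg.tA]
    rw [TanGeg.gamma_1step lam hlam k,
      show (k:ℝ) + (q:ℝ)/2 = (k:ℝ) + lam + 1/2 from by rw [hql]; ring,
      show 4*(k:ℝ) + (q:ℝ) + 1 = 4*(k:ℝ) + 2*lam + 2 from by rw [hql]; ring,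
      show 2*(k:ℝ) + (q:ℝ) = 2*(k:ℝ) + 2*lam + 1 from by rw [hql]; ring]
    have hg1 : Real.Gamma (((2*k+1 : ℕ):ℝ) + 2*lam)
        = (2*(k:ℝ)+2*lam) * Real.Gamma (2*(k:ℝ) + 2*lam) := by
      push_cast
      rw [show 2*(k:ℝ)+1+2*lam = (2*(k:ℝ)+2*lam) + 1 from by ring,
        Real.Gamma_add_one (by positivity)]
    rw [hg1]
    have hfac1 : ((Nat.factorial (2*k+1) : ℝ)) = (2*(k:ℝ)+1) * (Nat.factorial (2*k) : ℝ) := by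
      rw [Nat.factorial_succ]
      push_cast
      ring
    rw [hfac1]
    push_cast
    have hden : (2*(k:ℝ)+1+2*lam) ≠ 0 := by positivity
    field_simp
    ring
end
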